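/- arXiv:1109.2296 — 4 statements merged into one kernel-verified Lean document; each statement's English description precedes it below -/
import Mathlib

section
/- Let X_1, …, X_N be independent real-valued random variables on a probability space, with E[X_i] = 0 and a_i ≤ X_i ≤ b_i almost surely for each i, and let S_i = X_1 + ⋯ + X_i. Then for every ε > 0, P( max_{1 ≤ i ≤ N} |S_i| > ε ) ≤ 2·exp( − ε² / Σ_{i=1}^N (b_i − a_i)² ). -/
open MeasureTheory ProbabilityTheory

open Real

/-- Key analytic inequality: for `p + q = 1`, `p, q ≥ 0`,
`q·e^{-ph} + p·e^{qh} ≤ e^{h²/4}`. -/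
lemma hoeffding_analytic {p q h : ℝ} (hp : 0 ≤ p) (hq : 0 ≤ q) (hpq : p + q = 1) :
    q * exp (-(p * h)) + p * exp (q * h) ≤ exp (h ^ 2 / 4) := by
  rcases eq_or_lt_of_le hp with hp0 | hp0
  · -- p = 0, q = 1
    rw [← hp0] at hpq ⊢
    simp only [zero_mul, neg_zero, exp_zero, mul_one, zero_add] at *
    rw [show q = 1 by linarith]
    simpa using one_le_exp (by positivity)
  rcases eq_or_lt_of_le hq with hq0 | hq0
  · rw [← hq0] at hpq ⊢
    simp only [zero_mul, exp_zero, mul_one, zero_mul, zero_add] at *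
    rw [show p = 1 by linarith]
    simpa using one_le_exp (by positivity)
  -- now 0 < p, 0 < q
  have key : ∀ x : ℝ, 0 < q + p * exp x := fun x => by positivity
  -- rewrite LHS as e^{-ph} (q + p e^h)
  have hLHS : q * exp (-(p * h)) + p * exp (q * h) = exp (-(p * h)) * (q + p * exp h) := by
    have hqh : q * h = -(p * h) + h := by
      have : q = 1 - p := by linarith
      rw [this]; ring
    rw [mul_add, mul_comm (exp (-(p*h))) q, hqh, exp_add]
    ring
  rw [hLHS]
  -- suffices: log (q + p e^h) ≤ h²/4 + p h
  rw [show exp (h^2/4) = exp (-(p*h)) * exp (h^2/4 + p*h) by rw [← exp_add]; ring_nf]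
  refine mul_le_mul_of_nonneg_left ?_ (exp_nonneg _)
  rw [← Real.log_le_iff_le_exp (key h)]
  -- define ψ x = x²/4 + p x - log (q + p e^x) and show ψ ≥ 0 = ψ 0
  set ψ : ℝ → ℝ := fun x => x ^ 2 / 4 + p * x - Real.log (q + p * exp x) with hψ
  suffices hψ0 : 0 ≤ ψ h by
    have := hψ0
    simp only [hψ] at this
    linarith
  set g : ℝ → ℝ := fun x => x / 2 + p - p * exp x / (q + p * exp x) with hg
  have hderivψ : ∀ x, HasDerivAt ψ (g x) x := by
    intro x
    have h1 : HasDerivAt (fun x : ℝ => q + p * exp x) (p * exp x) x := by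
      simpa using ((Real.hasDerivAt_exp x).const_mul p).const_add q
    have h2 : HasDerivAt (fun x : ℝ => Real.log (q + p * exp x))
        (p * exp x / (q + p * exp x)) x := h1.log (key x).ne'
    have h3 : HasDerivAt (fun x : ℝ => x ^ 2 / 4 + p * x) (x / 2 + p) x := by
      have := ((hasDerivAt_pow 2 x).div_const 4).add ((hasDerivAt_id x).const_mul p)
      exact this.congr_deriv (by push_cast; ring)
    exact h3.sub h2
  have hderivg : ∀ x, HasDerivAt g (1/2 - p * q * exp x / (q + p * exp x) ^ 2) x := by
    intro x
    have h1 : HasDerivAt (fun x : ℝ => q + p * exp x) (p * exp x) x := by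
      simpa using ((Real.hasDerivAt_exp x).const_mul p).const_add q
    have h2 : HasDerivAt (fun x : ℝ => p * exp x) (p * exp x) x :=
      (Real.hasDerivAt_exp x).const_mul p
    have h3 : HasDerivAt (fun x : ℝ => p * exp x / (q + p * exp x))
        ((p * exp x * (q + p * exp x) - p * exp x * (p * exp x)) / (q + p * exp x) ^ 2) x :=
      h2.div h1 (key x).ne'
    have h4 : HasDerivAt (fun x : ℝ => x / 2 + p) (1/2) x := by
      simpa using (hasDerivAt_id x).div_const 2 |>.add_const p
    have := h4.sub h3
    refine this.congr_deriv ?_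
    ring
  have hgderiv_nonneg : ∀ x, 0 ≤ 1/2 - p * q * exp x / (q + p * exp x) ^ 2 := by
    intro x
    have hineq : 4 * (p * q * exp x) ≤ (q + p * exp x) ^ 2 := by
      nlinarith [sq_nonneg (q - p * exp x), exp_pos x]
    have : p * q * exp x / (q + p * exp x) ^ 2 ≤ 1/4 := by
      rw [div_le_iff₀ (by positivity)]
      linarith
    linarith
  have hgmono : Monotone g :=
    monotone_of_deriv_nonneg (fun x => (hderivg x).differentiableAt)
      (fun x => by rw [(hderivg x).deriv]; exact hgderiv_nonneg x)
  have hg0 : g 0 = 0 := by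
    simp only [hg, exp_zero, mul_one]
    rw [show q + p = 1 by linarith]
    norm_num
  have hψ0 : ψ 0 = 0 := by
    simp only [hψ, exp_zero, mul_one, mul_zero]
    rw [show q + p = 1 by linarith, Real.log_one]
    norm_num
  -- ψ monotone on [0,∞), antitone on (-∞,0]
  rcases le_or_gt 0 h with hh | hh
  · have : MonotoneOn ψ (Set.Ici 0) := by
      refine monotoneOn_of_deriv_nonneg (convex_Ici 0)
        (fun x _ => (hderivψ x).differentiableAt.continuousAt.continuousWithinAt) ?_ ?_
      · intro x _; exact (hderivψ x).differentiableAt.differentiableWithinAt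
      · intro x hx
        rw [(hderivψ x).deriv, ← hg0]
        exact hgmono (le_of_lt (by simpa [interior_Ici] using hx))
    have h2 := this (Set.self_mem_Ici) (Set.mem_Ici.2 hh) hh
    linarith
  · have : AntitoneOn ψ (Set.Iic 0) := by
      refine antitoneOn_of_deriv_nonpos (convex_Iic 0)
        (fun x _ => (hderivψ x).differentiableAt.continuousAt.continuousWithinAt) ?_ ?_
      · intro x _; exact (hderivψ x).differentiableAt.differentiableWithinAt
      · intro x hx
        rw [(hderivψ x).deriv, ← hg0]
        exact hgmono (le_of_lt (by simpa [interior_Iic] using hx))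
    have h2 := this (Set.mem_Iic.2 hh.le) (Set.self_mem_Iic) hh.le
    linarith

lemma integrable_exp_mul_of_bound {Ω : Type*} [MeasurableSpace Ω] {μ : Measure Ω}
    [IsProbabilityMeasure μ] {X : Ω → ℝ} {a b t : ℝ} (hX : Measurable X)
    (hab : ∀ᵐ ω ∂μ, a ≤ X ω ∧ X ω ≤ b) :
    Integrable (fun ω => exp (t * X ω)) μ := by
  refine Integrable.mono' (integrable_const (exp (|t| * (|a| + |b|))))
    ((hX.const_mul t).exp).aestronglyMeasurable ?_
  filter_upwards [hab] with ω hω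
  rw [Real.norm_eq_abs, abs_exp]
  refine exp_le_exp.2 ?_
  calc t * X ω ≤ |t * X ω| := le_abs_self _
    _ = |t| * |X ω| := abs_mul _ _
    _ ≤ |t| * (|a| + |b|) := by
        refine mul_le_mul_of_nonneg_left ?_ (abs_nonneg t)
        rw [abs_le]
        refine ⟨?_, ?_⟩ <;>
          nlinarith [hω.1, hω.2, neg_abs_le a, le_abs_self b, abs_nonneg a, abs_nonneg b]

/-- **Hoeffding's mgf lemma** (with constant 1/4). -/
lemma hoeffding_mgf {Ω : Type*} [MeasurableSpace Ω] {μ : Measure Ω}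
    [IsProbabilityMeasure μ] {X : Ω → ℝ} {a b : ℝ} (t : ℝ) (hX : Measurable X)
    (hint : Integrable X μ) (hmean : ∫ ω, X ω ∂μ = 0)
    (hab : ∀ᵐ ω ∂μ, a ≤ X ω ∧ X ω ≤ b) :
    ∫ ω, exp (t * X ω) ∂μ ≤ exp (t ^ 2 * (b - a) ^ 2 / 4) := by
  have ha0 : a ≤ 0 := by
    have := integral_mono_ae (integrable_const a) hint
      (by filter_upwards [hab] with ω hω using hω.1)
    rwa [integral_const, probReal_univ, one_smul, hmean] at this
  have hb0 : 0 ≤ b := by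
    have := integral_mono_ae hint (integrable_const b)
      (by filter_upwards [hab] with ω hω using hω.2)
    rwa [integral_const, probReal_univ, one_smul, hmean] at this
  rcases eq_or_lt_of_le (ha0.trans hb0) with hab' | hab'
  · -- a = b = 0, X = 0 a.e.
    have hXz : ∀ᵐ ω ∂μ, exp (t * X ω) = 1 := by
      filter_upwards [hab] with ω hω
      have haz : a = 0 := by linarith
      have hbz : b = 0 := by linarith
      have : X ω = 0 := le_antisymm (hbz ▸ hω.2) (haz ▸ hω.1)
      simp [this]
    rw [integral_congr_ae hXz]
    simp only [integral_const, probReal_univ, one_smul]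
    exact one_le_exp (by positivity)
  · -- a < b
    have hba : (0:ℝ) < b - a := sub_pos.2 hab'
    set p : ℝ := -a / (b - a) with hpdef
    set q : ℝ := b / (b - a) with hqdef
    set c0 : ℝ := (b * exp (t * a) - a * exp (t * b)) / (b - a) with hc0
    set c1 : ℝ := (exp (t * b) - exp (t * a)) / (b - a) with hc1
    have hpoint : ∀ᵐ ω ∂μ, exp (t * X ω) ≤ c0 + c1 * X ω := by
      filter_upwards [hab] with ω hω
      set x := X ω
      have hα : (0:ℝ) ≤ (b - x) / (b - a) := div_nonneg (by linarith [hω.2]) hba.le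
      have hβ : (0:ℝ) ≤ (x - a) / (b - a) := div_nonneg (by linarith [hω.1]) hba.le
      have hαβ : (b - x) / (b - a) + (x - a) / (b - a) = 1 := by field_simp; ring
      have := convexOn_exp.2 (Set.mem_univ (t * a)) (Set.mem_univ (t * b)) hα hβ hαβ
      simp only [smul_eq_mul] at this
      have harg : (b - x) / (b - a) * (t * a) + (x - a) / (b - a) * (t * b) = t * x := by
        field_simp; ring
      rw [harg] at this
      refine this.trans (le_of_eq ?_)
      rw [hc0, hc1]
      field_simp
      ring
    have hintexp : Integrable (fun ω => exp (t * X ω)) μ := integrable_exp_mul_of_bound hX hab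
    have hintlin : Integrable (fun ω => c0 + c1 * X ω) μ :=
      (integrable_const c0).add (hint.const_mul c1)
    have h1 : ∫ ω, exp (t * X ω) ∂μ ≤ ∫ ω, (c0 + c1 * X ω) ∂μ :=
      integral_mono_ae hintexp hintlin hpoint
    have h2 : ∫ ω, (c0 + c1 * X ω) ∂μ = c0 := by
      rw [integral_add (integrable_const c0) (hint.const_mul c1), integral_const,
        integral_const_mul, hmean, probReal_univ]
      simp
    rw [h2] at h1
    refine h1.trans ?_
    have hp : 0 ≤ p := div_nonneg (neg_nonneg.2 ha0) hba.le
    have hq : 0 ≤ q := div_nonneg hb0 hba.le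
    have hpq : p + q = 1 := by
      rw [hpdef, hqdef]; field_simp; ring
    have key := hoeffding_analytic (h := t * (b - a)) hp hq hpq
    have e1 : -(p * (t * (b - a))) = t * a := by
      rw [hpdef]; field_simp
    have e2 : q * (t * (b - a)) = t * b := by
      rw [hqdef]; field_simp
    rw [e1, e2] at key
    have ec : c0 = q * exp (t * a) + p * exp (t * b) := by
      rw [hc0, hpdef, hqdef]; field_simp; ring
    rw [ec]
    refine key.trans (le_of_eq ?_)
    congr 1
    rw [mul_pow]

lemma maximal_hoeffding_one_sided
    {Ω : Type*} [MeasureSpace Ω] [IsProbabilityMeasure (ℙ : Measure Ω)]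
    (N : ℕ) (X : Fin N → Ω → ℝ) (a b : Fin N → ℝ)
    (hmeas : ∀ i, Measurable (X i))
    (hindep : iIndepFun X ℙ)
    (hint : ∀ i, Integrable (X i) ℙ)
    (hmean : ∀ i, ∫ ω, X i ω ∂ℙ = 0)
    (hbound : ∀ i, ∀ᵐ ω ∂ℙ, a i ≤ X i ω ∧ X i ω ≤ b i)
    (ε : ℝ) (hε : 0 < ε)
    (hD : 0 < ∑ i : Fin N, (b i - a i) ^ 2) :
    ℙ {ω | ∃ i : Fin N, ε < ∑ j ∈ Finset.Iic i, X j ω} ≤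
      ENNReal.ofReal (Real.exp (-(ε ^ 2) / ∑ i : Fin N, (b i - a i) ^ 2)) := by
  set D : ℝ := ∑ i : Fin N, (b i - a i) ^ 2 with hDdef
  set L : ℝ := 2 * ε / D with hLdef
  have hL : 0 < L := by positivity
  -- partial sums
  set S : Fin N → Ω → ℝ := fun i ω => ∑ j ∈ Finset.Iic i, X j ω with hSdef
  have hSmeas : ∀ i, Measurable (S i) := fun i =>
    Finset.measurable_sum _ (fun j _ => hmeas j)
  -- total sum
  set W : Ω → ℝ := fun ω => ∑ j : Fin N, X j ω with hWdef
  -- first passage sets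
  set B : Fin N → Set Ω := fun i => {ω | ε < S i ω ∧ ∀ j, j < i → S j ω ≤ ε} with hBdef
  have hBmeas : ∀ i, MeasurableSet (B i) := by
    intro i
    have : B i = {ω | ε < S i ω} ∩ ⋂ (j : Fin N), ⋂ (_ : j < i), {ω | S j ω ≤ ε} := by
      ext ω
      simp only [hBdef, Set.mem_setOf_eq, Set.mem_inter_iff, Set.mem_iInter]
    rw [this]
    exact (measurableSet_lt measurable_const (hSmeas i)).inter
      (MeasurableSet.iInter fun j => MeasurableSet.iInter fun _ =>
        measurableSet_le (hSmeas j) measurable_const)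
  have hBdisj : Pairwise (Function.onFun Disjoint B) := by
    have key : ∀ i k : Fin N, i < k → Disjoint (B i) (B k) := by
      intro i k h
      simp only [hBdef, Set.disjoint_left, Set.mem_setOf_eq]
      rintro ω ⟨hω1, _⟩ ⟨_, hω2⟩
      exact absurd (hω2 i h) (not_le.2 hω1)
    intro i k hik
    rcases lt_or_gt_of_ne hik with h | h
    · exact key i k h
    · exact (key k i h).symm
  have hEeq : {ω | ∃ i : Fin N, ε < S i ω} = ⋃ i, B i := by
    ext ω
    simp only [Set.mem_setOf_eq, Set.mem_iUnion]
    constructor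
    · rintro ⟨i, hi⟩
      obtain ⟨k, hk, hkmin⟩ := Finset.exists_min_image
        (Finset.univ.filter fun j => ε < S j ω) id ⟨i, by simp [hi]⟩
      simp only [Finset.mem_filter, Finset.mem_univ, true_and] at hk
      refine ⟨k, hk, fun j hj => ?_⟩
      by_contra hcon
      have : k ≤ j := hkmin j (by simp [not_le.1 hcon])
      omega
    · rintro ⟨i, hi, _⟩
      exact ⟨i, hi⟩
  -- uniform a.e. bound on partial sums
  have hall : ∀ᵐ ω ∂ℙ, ∀ j, a j ≤ X j ω ∧ X j ω ≤ b j := ae_all_iff.2 hbound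
  set C0 : ℝ := ∑ j : Fin N, (|a j| + |b j|) with hC0def
  have hWbnd : ∀ᵐ ω ∂ℙ, ∀ s : Finset (Fin N), |∑ j ∈ s, X j ω| ≤ C0 := by
    filter_upwards [hall] with ω hω
    intro s
    calc |∑ j ∈ s, X j ω| ≤ ∑ j ∈ s, |X j ω| := Finset.abs_sum_le_sum_abs _ _
      _ ≤ ∑ j ∈ s, (|a j| + |b j|) := by
          refine Finset.sum_le_sum fun j _ => ?_
          rw [abs_le]
          constructor
          · nlinarith [(hω j).1, neg_abs_le (a j), abs_nonneg (b j)]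
          · nlinarith [(hω j).2, le_abs_self (b j), abs_nonneg (a j)]
      _ ≤ C0 := Finset.sum_le_sum_of_subset_of_nonneg (Finset.subset_univ s)
          (fun j _ _ => by positivity)
  -- integrability of exp(L * partial sums)
  have hexpint : ∀ s : Finset (Fin N),
      Integrable (fun ω => exp (L * ∑ j ∈ s, X j ω)) ℙ := by
    intro s
    refine Integrable.mono' (integrable_const (exp (L * C0)))
      (((Finset.measurable_sum s fun j _ => hmeas j).const_mul L).exp).aestronglyMeasurable ?_
    filter_upwards [hWbnd] with ω hω
    rw [Real.norm_eq_abs, abs_exp]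
    refine exp_le_exp.2 (mul_le_mul_of_nonneg_left ?_ hL.le)
    exact (le_abs_self _).trans (hω s)
  -- each mgf factor is ≥ 1
  have hmgf_one : ∀ j : Fin N, 1 ≤ mgf (X j) ℙ L := by
    intro j
    have h1 : ∫ ω, (1 + L * X j ω) ∂ℙ = 1 := by
      rw [integral_add (integrable_const 1) ((hint j).const_mul L), integral_const,
        integral_const_mul, hmean j, probReal_univ]
      simp
    have h2 : ∫ ω, (1 + L * X j ω) ∂ℙ ≤ ∫ ω, exp (L * X j ω) ∂ℙ := by
      refine integral_mono_ae ((integrable_const 1).add ((hint j).const_mul L))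
        (integrable_exp_mul_of_bound (hmeas j) (hbound j)) (Filter.Eventually.of_forall ?_)
      intro ω
      show 1 + L * X j ω ≤ exp (L * X j ω)
      have := Real.add_one_le_exp (L * X j ω)
      linarith
    rw [← h1]
    exact h2
  -- mgf of total sum is bounded
  have hmgfW : ∫ ω, exp (L * W ω) ∂ℙ ≤ exp (L ^ 2 * D / 4) := by
    have h1 : ∫ ω, exp (L * W ω) ∂ℙ = mgf (∑ j : Fin N, X j) ℙ L := by
      unfold mgf
      refine integral_congr_ae (Filter.Eventually.of_forall fun ω => ?_)
      simp only [hWdef, Finset.sum_apply]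
    rw [h1, hindep.mgf_sum hmeas Finset.univ]
    calc ∏ j : Fin N, mgf (X j) ℙ L
        ≤ ∏ j : Fin N, exp (L ^ 2 * (b j - a j) ^ 2 / 4) := by
          refine Finset.prod_le_prod (fun j _ => mgf_nonneg) (fun j _ => ?_)
          exact hoeffding_mgf L (hmeas j) (hint j) (hmean j) (hbound j)
      _ = exp (∑ j : Fin N, L ^ 2 * (b j - a j) ^ 2 / 4) := by rw [← Real.exp_sum]
      _ = exp (L ^ 2 * D / 4) := by
          congr 1
          rw [hDdef, Finset.mul_sum, Finset.sum_div]
  -- key per-index inequality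
  have hkey : ∀ i : Fin N,
      exp (L * ε) * (ℙ (B i)).toReal ≤ ∫ ω in B i, exp (L * W ω) ∂ℙ := by
    intro i
    -- split univ into Iic i and Ioi i
    have hdisjf : Disjoint (Finset.Iic i) (Finset.Ioi i) := by
      simp only [Finset.disjoint_left, Finset.mem_Iic, Finset.mem_Ioi]
      intro j hj
      exact not_lt.2 hj
    have hunivf : Finset.Iic i ∪ Finset.Ioi i = Finset.univ := by
      ext j
      simp only [Finset.mem_union, Finset.mem_Iic, Finset.mem_Ioi, Finset.mem_univ, iff_true]
      exact le_or_gt j i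
    have hsplit : ∀ ω, W ω = S i ω + ∑ j ∈ Finset.Ioi i, X j ω := by
      intro ω
      rw [hWdef, hSdef, ← Finset.sum_union hdisjf, hunivf]
    set F : Ω → ℝ := (B i).indicator (fun ω => exp (L * S i ω)) with hFdef
    set G : Ω → ℝ := fun ω => exp (L * ∑ j ∈ Finset.Ioi i, X j ω) with hGdef
    -- F and G are independent
    have hFG : IndepFun F G ℙ := by
      set T : Fin N → ({x // x ∈ Finset.Iic i} → ℝ) → ℝ :=
        fun j v => ∑ x : {x // x ∈ Finset.Iic i}, if (x : Fin N) ≤ j then v x else 0 with hTdef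
      have hTmeas : ∀ j, Measurable (T j) := by
        intro j
        refine Finset.measurable_sum _ fun x _ => ?_
        by_cases hx : (x : Fin N) ≤ j
        · simpa [hx] using measurable_pi_apply x
        · simpa [hx] using (measurable_const : Measurable fun _ : {x // x ∈ Finset.Iic i} → ℝ => (0:ℝ))
      have hTS : ∀ j : Fin N, j ≤ i → ∀ ω, T j (fun x => X x ω) = S j ω := by
        intro j hj ω
        rw [hTdef]
        simp only
        rw [Finset.sum_coe_sort (Finset.Iic i) (fun x => if x ≤ j then X x ω else 0)]
        rw [← Finset.sum_filter]
        congr 1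
        ext x
        simp only [Finset.mem_filter, Finset.mem_Iic]
        exact ⟨fun h => h.2, fun h => ⟨h.trans hj, h⟩⟩
      set gs : Set ({x // x ∈ Finset.Iic i} → ℝ) :=
        {v | ε < T i v ∧ ∀ j, j < i → T j v ≤ ε} with hgsdef
      have hgsmeas : MeasurableSet gs := by
        have : gs = {v | ε < T i v} ∩ ⋂ (j : Fin N), ⋂ (_ : j < i), {v | T j v ≤ ε} := by
          ext v
          simp only [hgsdef, Set.mem_setOf_eq, Set.mem_inter_iff, Set.mem_iInter]
        rw [this]
        exact (measurableSet_lt measurable_const (hTmeas i)).inter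
          (MeasurableSet.iInter fun j => MeasurableSet.iInter fun _ =>
            measurableSet_le (hTmeas j) measurable_const)
      set g : ({x // x ∈ Finset.Iic i} → ℝ) → ℝ :=
        gs.indicator (fun v => exp (L * T i v)) with hgdef
      have hgmeas : Measurable g :=
        Measurable.indicator ((hTmeas i).const_mul L).exp hgsmeas
      set hFun : ({x // x ∈ Finset.Ioi i} → ℝ) → ℝ :=
        fun w => exp (L * ∑ x : {x // x ∈ Finset.Ioi i}, w x) with hhdef
      have hhmeas : Measurable hFun := by
        refine Measurable.exp (Measurable.const_mul ?_ L)
        exact Finset.measurable_sum _ fun x _ => measurable_pi_apply x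
      have base := hindep.indepFun_finset (Finset.Iic i) (Finset.Ioi i) hdisjf hmeas
      have hcomp := base.comp hgmeas hhmeas
      have hFeq : F = g ∘ (fun ω (x : {x // x ∈ Finset.Iic i}) => X x ω) := by
        funext ω
        simp only [Function.comp_apply, hFdef, hgdef]
        have hmem : ((fun x : {x // x ∈ Finset.Iic i} => X x ω) ∈ gs) ↔ ω ∈ B i := by
          simp only [hgsdef, hBdef, Set.mem_setOf_eq]
          rw [hTS i le_rfl ω]
          constructor
          · rintro ⟨h1, h2⟩
            exact ⟨h1, fun j hj => by rw [← hTS j hj.le ω]; exact h2 j hj⟩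
          · rintro ⟨h1, h2⟩
            exact ⟨h1, fun j hj => by rw [hTS j hj.le ω]; exact h2 j hj⟩
        by_cases hω : ω ∈ B i
        · rw [Set.indicator_of_mem hω, Set.indicator_of_mem (hmem.2 hω), hTS i le_rfl ω]
        · rw [Set.indicator_of_notMem hω, Set.indicator_of_notMem (fun hc => hω (hmem.1 hc))]
      have hGeq : G = hFun ∘ (fun ω (x : {x // x ∈ Finset.Ioi i}) => X x ω) := by
        funext ω
        simp only [Function.comp_apply, hGdef, hhdef]
        congr 1
        rw [Finset.sum_coe_sort (Finset.Ioi i) (fun x => X x ω)]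
      rw [hFeq, hGeq]
      exact hcomp
    -- integrability
    have hFmeas : Measurable F :=
      Measurable.indicator ((hSmeas i).const_mul L).exp (hBmeas i)
    have hFint : Integrable F ℙ := by
      refine Integrable.mono' (integrable_const (exp (L * C0)))
        hFmeas.aestronglyMeasurable ?_
      filter_upwards [hWbnd] with ω hω
      refine (norm_indicator_le_norm_self _ ω).trans ?_
      rw [Real.norm_eq_abs, abs_exp]
      refine exp_le_exp.2 (mul_le_mul_of_nonneg_left ?_ hL.le)
      exact (le_abs_self _).trans (hω (Finset.Iic i))
    have hGint : Integrable G ℙ := by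
      refine Integrable.mono' (integrable_const (exp (L * C0)))
        (((Finset.measurable_sum _ fun j _ => hmeas j).const_mul L).exp).aestronglyMeasurable ?_
      filter_upwards [hWbnd] with ω hω
      rw [Real.norm_eq_abs, abs_exp]
      refine exp_le_exp.2 (mul_le_mul_of_nonneg_left ?_ hL.le)
      exact (le_abs_self _).trans (hω (Finset.Ioi i))
    -- the set integral equals ∫ F * G
    have hset : ∫ ω in B i, exp (L * W ω) ∂ℙ = ∫ ω, (F * G) ω ∂ℙ := by
      rw [← integral_indicator (hBmeas i)]
      refine integral_congr_ae (Filter.Eventually.of_forall fun ω => ?_)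
      simp only [Pi.mul_apply]
      by_cases hω : ω ∈ B i
      · simp only [hFdef, hGdef, Set.indicator_of_mem hω]
        rw [hsplit ω, mul_add, exp_add]
      · simp only [hFdef, Set.indicator_of_notMem hω, zero_mul]
    -- ∫ F ≥ exp(Lε) * P(B i)
    have hFlow : exp (L * ε) * (ℙ (B i)).toReal ≤ ∫ ω, F ω ∂ℙ := by
      have h1 : ∫ ω, (B i).indicator (fun _ => exp (L * ε)) ω ∂ℙ
          = exp (L * ε) * (ℙ (B i)).toReal := by
        rw [integral_indicator_const _ (hBmeas i)]
        simp [mul_comm, Measure.real]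
      rw [← h1]
      refine integral_mono_ae ((integrable_const _).indicator (hBmeas i)) hFint
        (Filter.Eventually.of_forall fun ω => ?_)
      by_cases hω : ω ∈ B i
      · simp only [hFdef, Set.indicator_of_mem hω]
        refine exp_le_exp.2 (mul_le_mul_of_nonneg_left ?_ hL.le)
        exact hω.1.le
      · simp only [hFdef, Set.indicator_of_notMem hω, le_refl]
    -- ∫ G ≥ 1
    have hGlow : 1 ≤ ∫ ω, G ω ∂ℙ := by
      have h1 : ∫ ω, G ω ∂ℙ = mgf (∑ j ∈ Finset.Ioi i, X j) ℙ L := by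
        unfold mgf
        refine integral_congr_ae (Filter.Eventually.of_forall fun ω => ?_)
        simp only [hGdef, Finset.sum_apply]
      rw [h1, hindep.mgf_sum hmeas (Finset.Ioi i)]
      calc (1:ℝ) = ∏ _j ∈ Finset.Ioi i, (1:ℝ) := by rw [Finset.prod_const_one]
        _ ≤ ∏ j ∈ Finset.Ioi i, mgf (X j) ℙ L :=
            Finset.prod_le_prod (fun j _ => zero_le_one) (fun j _ => hmgf_one j)
    -- combine
    have hmul : ∫ ω, (F * G) ω ∂ℙ = (∫ ω, F ω ∂ℙ) * ∫ ω, G ω ∂ℙ :=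
      hFG.integral_mul_eq_mul_integral hFint.aestronglyMeasurable hGint.aestronglyMeasurable
    rw [hset, hmul]
    have hFnonneg : 0 ≤ ∫ ω, F ω ∂ℙ :=
      le_trans (by positivity) hFlow
    calc exp (L * ε) * (ℙ (B i)).toReal ≤ ∫ ω, F ω ∂ℙ := hFlow
      _ ≤ (∫ ω, F ω ∂ℙ) * ∫ ω, G ω ∂ℙ := le_mul_of_one_le_right hFnonneg hGlow
  -- sum over i
  have hsum : ∑ i : Fin N, ∫ ω in B i, exp (L * W ω) ∂ℙ ≤ exp (L ^ 2 * D / 4) := by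
    have h1 : ∑ i : Fin N, ∫ ω in B i, exp (L * W ω) ∂ℙ
        = ∫ ω in ⋃ i, B i, exp (L * W ω) ∂ℙ := by
      rw [integral_iUnion hBmeas hBdisj ((hexpint Finset.univ).integrableOn)]
      exact (tsum_fintype _).symm
    rw [h1]
    refine le_trans (setIntegral_le_integral (hexpint Finset.univ)
      (Filter.Eventually.of_forall fun ω => exp_nonneg _)) ?_
    exact hmgfW
  -- measure of the union
  have hPsum : (ℙ {ω | ∃ i : Fin N, ε < S i ω}).toReal = ∑ i : Fin N, (ℙ (B i)).toReal := by
    rw [hEeq, measure_iUnion hBdisj hBmeas, tsum_fintype]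
    exact ENNReal.toReal_sum fun i _ => measure_ne_top _ _
  -- final computation
  have hfinal : (ℙ {ω | ∃ i : Fin N, ε < S i ω}).toReal ≤ exp (-(ε ^ 2) / D) := by
    have h1 : exp (L * ε) * (ℙ {ω | ∃ i : Fin N, ε < S i ω}).toReal ≤ exp (L ^ 2 * D / 4) := by
      rw [hPsum, Finset.mul_sum]
      exact le_trans (Finset.sum_le_sum fun i _ => hkey i) hsum
    have h2 : (ℙ {ω | ∃ i : Fin N, ε < S i ω}).toReal
        ≤ exp (L ^ 2 * D / 4) / exp (L * ε) := by
      rw [le_div_iff₀ (exp_pos _)]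
      linarith [h1]
    refine h2.trans (le_of_eq ?_)
    rw [← Real.exp_sub]
    congr 1
    rw [hLdef]
    field_simp
    ring
  calc ℙ {ω | ∃ i : Fin N, ε < S i ω}
      = ENNReal.ofReal ((ℙ {ω | ∃ i : Fin N, ε < S i ω}).toReal) :=
        (ENNReal.ofReal_toReal (measure_ne_top _ _)).symm
    _ ≤ ENNReal.ofReal (exp (-(ε ^ 2) / D)) := ENNReal.ofReal_le_ofReal hfinal

/-- **Maximal Hoeffding inequality.** If `X 1, …, X N` are independent, zero-mean,
with `a i ≤ X i ≤ b i` a.s., and `S i = X 1 + ⋯ + X i`, then for every `ε > 0`,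
`P(max_{1 ≤ i ≤ N} |S i| > ε) ≤ 2·exp(−ε² / ∑ i (b i − a i)²)`. -/
theorem maximal_hoeffding_two_sided
    {Ω : Type*} [MeasureSpace Ω] [IsProbabilityMeasure (ℙ : Measure Ω)]
    (N : ℕ) (X : Fin N → Ω → ℝ) (a b : Fin N → ℝ)
    (hmeas : ∀ i, Measurable (X i))
    (hindep : iIndepFun X ℙ)
    (hint : ∀ i, Integrable (X i) ℙ)
    (hmean : ∀ i, ∫ ω, X i ω ∂ℙ = 0)
    (hbound : ∀ i, ∀ᵐ ω ∂ℙ, a i ≤ X i ω ∧ X i ω ≤ b i)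
    (ε : ℝ) (hε : 0 < ε) :
    ℙ {ω | ∃ i : Fin N, ε < |∑ j ∈ Finset.Iic i, X j ω|} ≤
      ENNReal.ofReal (2 * Real.exp (-(ε ^ 2) / ∑ i : Fin N, (b i - a i) ^ 2)) := by
  rcases lt_or_ge 0 (∑ i : Fin N, (b i - a i) ^ 2) with hD | hD
  · -- nontrivial case
    -- the negated family
    set Y : Fin N → Ω → ℝ := fun i => -X i with hYdef
    have hYmeas : ∀ i, Measurable (Y i) := fun i => (hmeas i).neg
    have hYindep : iIndepFun Y ℙ := by
      have := hindep.comp (fun _ => fun x : ℝ => -x) (fun _ => measurable_neg)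
      exact this
    have hYint : ∀ i, Integrable (Y i) ℙ := fun i => (hint i).neg
    have hYmean : ∀ i, ∫ ω, Y i ω ∂ℙ = 0 := by
      intro i
      simp only [hYdef, Pi.neg_apply]
      rw [integral_neg, hmean i, neg_zero]
    have hYbound : ∀ i, ∀ᵐ ω ∂ℙ, (fun i => -b i) i ≤ Y i ω ∧ Y i ω ≤ (fun i => -a i) i := by
      intro i
      filter_upwards [hbound i] with ω hω
      simp only [hYdef, Pi.neg_apply]
      exact ⟨neg_le_neg hω.2, neg_le_neg hω.1⟩
    have hDY : ∑ i : Fin N, ((fun i => -a i) i - (fun i => -b i) i) ^ 2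
        = ∑ i : Fin N, (b i - a i) ^ 2 := by
      refine Finset.sum_congr rfl fun i _ => ?_
      ring
    have h1 := maximal_hoeffding_one_sided N X a b hmeas hindep hint hmean hbound ε hε hD
    have h2 := maximal_hoeffding_one_sided N Y (fun i => -b i) (fun i => -a i)
      hYmeas hYindep hYint hYmean hYbound ε hε (by rw [hDY]; exact hD)
    rw [hDY] at h2
    have hsub : {ω | ∃ i : Fin N, ε < |∑ j ∈ Finset.Iic i, X j ω|}
        ⊆ {ω | ∃ i : Fin N, ε < ∑ j ∈ Finset.Iic i, X j ω}
          ∪ {ω | ∃ i : Fin N, ε < ∑ j ∈ Finset.Iic i, Y j ω} := by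
      rintro ω ⟨i, hi⟩
      rcases lt_abs.1 hi with h | h
      · exact Or.inl ⟨i, h⟩
      · refine Or.inr ⟨i, ?_⟩
        simp only [hYdef, Pi.neg_apply]
        rw [Finset.sum_neg_distrib]
        exact h
    calc ℙ {ω | ∃ i : Fin N, ε < |∑ j ∈ Finset.Iic i, X j ω|}
        ≤ ℙ ({ω | ∃ i : Fin N, ε < ∑ j ∈ Finset.Iic i, X j ω}
            ∪ {ω | ∃ i : Fin N, ε < ∑ j ∈ Finset.Iic i, Y j ω}) := measure_mono hsub
      _ ≤ ℙ {ω | ∃ i : Fin N, ε < ∑ j ∈ Finset.Iic i, X j ω}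
          + ℙ {ω | ∃ i : Fin N, ε < ∑ j ∈ Finset.Iic i, Y j ω} := measure_union_le _ _
      _ ≤ ENNReal.ofReal (Real.exp (-(ε ^ 2) / ∑ i : Fin N, (b i - a i) ^ 2))
          + ENNReal.ofReal (Real.exp (-(ε ^ 2) / ∑ i : Fin N, (b i - a i) ^ 2)) :=
          add_le_add h1 h2
      _ = ENNReal.ofReal (2 * Real.exp (-(ε ^ 2) / ∑ i : Fin N, (b i - a i) ^ 2)) := by
          rw [← ENNReal.ofReal_add (exp_nonneg _) (exp_nonneg _), two_mul]
  · -- degenerate case: the sum of squares is 0 and the bound is trivial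
    have hD0 : ∑ i : Fin N, (b i - a i) ^ 2 = 0 :=
      le_antisymm hD (Finset.sum_nonneg fun i _ => sq_nonneg _)
    rw [hD0, div_zero, Real.exp_zero, mul_one]
    calc ℙ {ω | ∃ i : Fin N, ε < |∑ j ∈ Finset.Iic i, X j ω|} ≤ 1 := prob_le_one
      _ ≤ ENNReal.ofReal 2 := by
          rw [← ENNReal.ofReal_one]
          exact ENNReal.ofReal_le_ofReal one_le_two
end

section
/- Consider the line graph setup with n nodes and suppose each edge sample satisfies −1 ≤ E_t^{i,i+1} ≤ 1 almost surely. Fix ε > 0 and δ ∈ (0,1), set ε̃ = max(ε, u), and suppose the per-edge sample sizes T^1, …, T^{n−1} satisfy ( Σ_{i=1}^{n−1} 4 / T^i )^{−1} ≥ (1/ε̃²)·log(2/δ). Then the node k maximizing the empirical prefix sums Ŝ_1, …, Ŝ_n satisfies r_k ≥ r* − ε with probability at least 1 − δ. -/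
open MeasureTheory ProbabilityTheory


section Auxiliary

open Real

/-- Key calculus fact behind Hoeffding's lemma:
`(1-θ) + θ e^t ≤ exp (θ t + t²/8)` for `θ ∈ [0,1]`. -/
lemma hoeffding_calc {θ : ℝ} (h0 : 0 ≤ θ) (h1 : θ ≤ 1) (t : ℝ) :
    1 - θ + θ * exp t ≤ exp (θ * t + t ^ 2 / 8) := by
  set g : ℝ → ℝ := fun s => 1 - θ + θ * exp s with hgdef
  have hgpos : ∀ s, 0 < g s := by
    intro s
    rcases eq_or_lt_of_le h0 with h | h
    · simp [hgdef, ← h]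
    · have := exp_pos s
      have : 0 < θ * exp s := mul_pos h (exp_pos s)
      simp only [hgdef]
      nlinarith
  have hgd : ∀ s, HasDerivAt g (θ * exp s) s := by
    intro s
    exact ((Real.hasDerivAt_exp s).const_mul θ).const_add (1 - θ)
  set f : ℝ → ℝ := fun s => θ * s + s ^ 2 / 8 - Real.log (g s) with hfdef
  set f' : ℝ → ℝ := fun s => θ + s / 4 - θ * exp s / g s with hf'def
  have hfd : ∀ s, HasDerivAt f (f' s) s := by
    intro s
    have hlog : HasDerivAt (fun s => Real.log (g s)) (θ * exp s / g s) s :=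
      (hgd s).log (hgpos s).ne'
    have h1' : HasDerivAt (fun s : ℝ => θ * s + s ^ 2 / 8) (θ + s * 2 / 8) s := by
      have := ((hasDerivAt_pow 2 s).div_const 8).const_add 0
      have h2 : HasDerivAt (fun s : ℝ => θ * s) θ s := by
        simpa using (hasDerivAt_id s).const_mul θ
      have h3 := h2.add ((hasDerivAt_pow 2 s).div_const 8)
      exact h3.congr_deriv (by norm_num; ring)
    have := h1'.sub hlog
    refine this.congr_deriv ?_
    simp only [hf'def]
    ring
  have hf'd : ∀ s, HasDerivAt f' (1 / 4 - θ * exp s * (1 - θ) / (g s) ^ 2) s := by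
    intro s
    have hdiv : HasDerivAt (fun s => θ * exp s / g s)
        ((θ * exp s * g s - θ * exp s * (θ * exp s)) / (g s) ^ 2) s :=
      ((hasDerivAt_exp s).const_mul θ).div (hgd s) (hgpos s).ne'
    have h1' : HasDerivAt (fun s : ℝ => θ + s / 4) (1 / 4) s := by
      simpa using ((hasDerivAt_id s).div_const 4).const_add θ
    have := h1'.sub hdiv
    refine (this.congr_deriv ?_)
    have : θ * exp s * g s - θ * exp s * (θ * exp s) = θ * exp s * (1 - θ) := by
      simp only [hgdef]; ring
    rw [this]
  have hf''nonneg : ∀ s, 0 ≤ 1 / 4 - θ * exp s * (1 - θ) / (g s) ^ 2 := by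
    intro s
    have hg2 : 0 < (g s) ^ 2 := pow_pos (hgpos s) 2
    rw [sub_nonneg, div_le_iff₀ hg2]
    have : (g s) ^ 2 = ((1 - θ) + θ * exp s) ^ 2 := by simp [hgdef]
    nlinarith [sq_nonneg ((1 - θ) - θ * exp s)]
  have hf'mono : Monotone f' := by
    have : ∀ s, 0 ≤ deriv f' s := fun s => by rw [(hf'd s).deriv]; exact hf''nonneg s
    exact monotone_of_deriv_nonneg (fun s => (hf'd s).differentiableAt) this
  have hf'0 : f' 0 = 0 := by simp [hf'def, hgdef]
  have hf0 : f 0 = 0 := by simp [hfdef, hgdef]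
  have hfnonneg : ∀ s, 0 ≤ f s := by
    intro s
    rcases lt_trichotomy s 0 with hs | hs | hs
    · obtain ⟨c, hc, hceq⟩ := exists_hasDerivAt_eq_slope f f' hs
        (fun x _ => (hfd x).continuousAt.continuousWithinAt) (fun x _ => hfd x)
      have hc0 : f' c ≤ 0 := hf'0 ▸ hf'mono hc.2.le
      have : (f 0 - f s) / (0 - s) ≤ 0 := hceq ▸ hc0
      rw [hf0] at this
      have hpos : 0 < 0 - s := by linarith
      have := (div_nonpos_iff.mp this)
      rcases this with ⟨h₁, h₂⟩ | ⟨h₁, h₂⟩ <;> linarith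
    · rw [hs, hf0]
    · obtain ⟨c, hc, hceq⟩ := exists_hasDerivAt_eq_slope f f' hs
        (fun x _ => (hfd x).continuousAt.continuousWithinAt) (fun x _ => hfd x)
      have hc0 : 0 ≤ f' c := hf'0 ▸ hf'mono hc.1.le
      have : 0 ≤ (f s - f 0) / (s - 0) := hceq ▸ hc0
      rw [hf0] at this
      have hpos : 0 < s - 0 := by linarith
      have := (div_nonneg_iff.mp this)
      rcases this with ⟨h₁, h₂⟩ | ⟨h₁, h₂⟩ <;> linarith
  have := hfnonneg t
  have hle : Real.log (g t) ≤ θ * t + t ^ 2 / 8 := by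
    simp only [hfdef] at this; linarith
  calc 1 - θ + θ * exp t = g t := rfl
    _ ≤ exp (θ * t + t ^ 2 / 8) := by
        rw [← Real.exp_log (hgpos t)]
        exact exp_le_exp.mpr hle

/-- Hoeffding's lemma. -/
lemma hoeffding_lemma {Ω : Type*} [MeasureSpace Ω] [IsProbabilityMeasure (ℙ : Measure Ω)]
    {Z : Ω → ℝ} (hZm : Measurable Z) {a c : ℝ}
    (hb : ∀ᵐ ω ∂ℙ, Z ω ∈ Set.Icc a c) (hmean : ∫ ω, Z ω ∂ℙ = 0) (L : ℝ) :
    ∫ ω, exp (L * Z ω) ∂ℙ ≤ exp (L ^ 2 * (c - a) ^ 2 / 8) := by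
  -- basic facts
  have hZint : Integrable Z ℙ := by
    refine ⟨hZm.aestronglyMeasurable, ?_⟩
    refine HasFiniteIntegral.of_bounded (C := max |a| |c|) ?_
    filter_upwards [hb] with ω hω
    rw [Real.norm_eq_abs]
    rcases abs_cases (Z ω) with ⟨h, _⟩ | ⟨h, _⟩
    · rw [h]; exact le_max_of_le_right (le_abs_self _ |>.trans' hω.2)
    · rw [h]; exact le_max_of_le_left (neg_le_abs _ |>.trans' (by linarith [hω.1]))
  have hac : a ≤ c := by
    obtain ⟨ω, hω⟩ := hb.exists
    exact hω.1.trans hω.2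
  have ha0 : a ≤ 0 := by
    have : a = ∫ _ω, a ∂(ℙ : Measure Ω) := by simp
    rw [← hmean, this]
    exact integral_mono_ae (integrable_const a) hZint (hb.mono fun ω h => h.1)
  have hc0 : 0 ≤ c := by
    have : c = ∫ _ω, c ∂(ℙ : Measure Ω) := by simp
    rw [← hmean, this]
    exact integral_mono_ae hZint (integrable_const c) (hb.mono fun ω h => h.2)
  have hintexp : Integrable (fun ω => exp (L * Z ω)) ℙ := by
    refine ⟨((hZm.const_mul L).exp).aestronglyMeasurable, ?_⟩
    refine HasFiniteIntegral.of_bounded (C := exp (|L| * max |a| |c|)) ?_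
    filter_upwards [hb] with ω hω
    rw [Real.norm_eq_abs, abs_exp]
    apply exp_le_exp.mpr
    have hZabs : |Z ω| ≤ max |a| |c| := by
      rcases abs_cases (Z ω) with ⟨h, _⟩ | ⟨h, _⟩
      · rw [h]; exact le_max_of_le_right (le_abs_self _ |>.trans' hω.2)
      · rw [h]; exact le_max_of_le_left (neg_le_abs _ |>.trans' (by linarith [hω.1]))
    calc L * Z ω ≤ |L * Z ω| := le_abs_self _
      _ = |L| * |Z ω| := abs_mul _ _
      _ ≤ |L| * max |a| |c| := by
          exact mul_le_mul_of_nonneg_left hZabs (abs_nonneg L)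
  rcases eq_or_lt_of_le hac with heq | hlt
  · -- a = c forces a = c = 0, Z = 0 a.e.
    have ha : a = 0 := le_antisymm ha0 (heq ▸ hc0)
    have hc : c = 0 := heq ▸ ha
    have : ∫ ω, exp (L * Z ω) ∂ℙ ≤ ∫ _ω, (1 : ℝ) ∂(ℙ : Measure Ω) := by
      refine integral_mono_ae hintexp (integrable_const 1) ?_
      filter_upwards [hb] with ω hω
      have : Z ω = 0 := le_antisymm (hc ▸ hω.2) (ha ▸ hω.1)
      simp [this]
    simp only [integral_const, probReal_univ, ENNReal.toReal_one, smul_eq_mul, one_mul] at this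
    refine this.trans ?_
    rw [ha, hc]
    simp
  · -- chord bound: exp (L x) ≤ A + B x on [a, c]
    set A : ℝ := (c * exp (L * a) - a * exp (L * c)) / (c - a) with hA
    set B : ℝ := (exp (L * c) - exp (L * a)) / (c - a) with hB
    have hca : (0:ℝ) < c - a := by linarith
    have hchord : ∀ x, a ≤ x → x ≤ c → exp (L * x) ≤ A + B * x := by
      intro x hax hxc
      have hu : 0 ≤ (c - x) / (c - a) := by
        apply div_nonneg _ hca.le; linarith
      have hv : 0 ≤ (x - a) / (c - a) := by
        apply div_nonneg _ hca.le; linarith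
      have huv : (c - x) / (c - a) + (x - a) / (c - a) = 1 := by field_simp; ring
      have hcvx := convexOn_exp.2 (Set.mem_univ (L * a)) (Set.mem_univ (L * c)) hu hv huv
      simp only [smul_eq_mul] at hcvx
      have hpt : (c - x) / (c - a) * (L * a) + (x - a) / (c - a) * (L * c) = L * x := by
        field_simp
        ring
      rw [hpt] at hcvx
      calc exp (L * x) ≤ (c - x) / (c - a) * exp (L * a) + (x - a) / (c - a) * exp (L * c) := by
            simpa using hcvx
        _ = A + B * x := by rw [hA, hB]; field_simp; ring
    have hint2 : Integrable (fun ω => A + B * Z ω) ℙ :=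
      (integrable_const A).add (hZint.const_mul B)
    have step1 : ∫ ω, exp (L * Z ω) ∂ℙ ≤ A := by
      have : ∫ ω, exp (L * Z ω) ∂ℙ ≤ ∫ ω, A + B * Z ω ∂ℙ := by
        refine integral_mono_ae hintexp hint2 ?_
        filter_upwards [hb] with ω hω
        exact hchord _ hω.1 hω.2
      rwa [integral_add (integrable_const A) (hZint.const_mul B),
        integral_const, integral_const_mul, hmean, mul_zero, add_zero,
        probReal_univ, smul_eq_mul, one_mul] at this
    refine step1.trans ?_
    -- A ≤ exp (L² (c-a)² / 8)
    set θ : ℝ := -a / (c - a) with hθ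
    set t : ℝ := L * (c - a) with ht
    have hθ0 : 0 ≤ θ := by rw [hθ]; apply div_nonneg _ hca.le; linarith
    have hθ1 : θ ≤ 1 := by rw [hθ, div_le_one hca]; linarith
    have hAeq : A = exp (L * a) * (1 - θ + θ * exp t) := by
      rw [hA, hθ, ht]
      rw [show L * c = L * a + L * (c - a) by ring, exp_add]
      field_simp
      ring
    have := hoeffding_calc hθ0 hθ1 t
    calc A ≤ exp (L * a) * exp (θ * t + t ^ 2 / 8) := by
          rw [hAeq]
          exact mul_le_mul_of_nonneg_left this (exp_nonneg _)
      _ = exp (L * a + θ * t + t ^ 2 / 8) := by rw [← exp_add]; ring_nf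
      _ = exp (L ^ 2 * (c - a) ^ 2 / 8) := by
          congr 1
          rw [hθ, ht]
          field_simp
          ring

/-- Maximal Hoeffding/Chernoff bound along a monotone chain of index sets. -/
lemma chain_bound {Ω : Type*} [MeasureSpace Ω] [IsProbabilityMeasure (ℙ : Measure Ω)]
    {ι : Type*} [Fintype ι] [DecidableEq ι] (Z : ι → Ω → ℝ)
    (hZm : ∀ i, Measurable (Z i))
    (hindep : iIndepFun Z ℙ)
    (a c : ι → ℝ) (hb : ∀ i, ∀ᵐ ω ∂ℙ, Z i ω ∈ Set.Icc (a i) (c i))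
    (hmean : ∀ i, ∫ ω, Z i ω ∂ℙ = 0)
    (C : ℕ → Finset ι) (hC : Monotone C) (N : ℕ)
    (s L : ℝ) (hL : 0 < L) :
    ℙ {ω | ∃ j ≤ N, s ≤ ∑ i ∈ C j, Z i ω} ≤
      ENNReal.ofReal (Real.exp (-(L*s) + L^2 * (∑ i ∈ C N, (c i - a i)^2) / 8)) := by
  classical
  set S : ℕ → Ω → ℝ := fun j ω => ∑ i ∈ C j, Z i ω with hSdef
  have hSmeas : ∀ j, Measurable (S j) := fun j => Finset.measurable_sum _ fun i _ => hZm i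
  -- a.e. bounds
  have hball : ∀ᵐ ω ∂(ℙ : Measure Ω), ∀ i, Z i ω ∈ Set.Icc (a i) (c i) := ae_all_iff.mpr hb
  have habs : ∀ i, ∀ᵐ ω ∂(ℙ : Measure Ω), |Z i ω| ≤ max |a i| |c i| := by
    intro i
    filter_upwards [hb i] with ω hω
    rcases abs_cases (Z i ω) with ⟨h, _⟩ | ⟨h, _⟩
    · rw [h]; exact le_max_of_le_right (le_abs_self _ |>.trans' hω.2)
    · rw [h]; exact le_max_of_le_left (neg_le_abs _ |>.trans' (by linarith [hω.1]))
  have hZint : ∀ i, Integrable (Z i) ℙ := by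
    intro i
    refine ⟨(hZm i).aestronglyMeasurable, HasFiniteIntegral.of_bounded (C := max |a i| |c i|) ?_⟩
    filter_upwards [habs i] with ω hω using by rwa [Real.norm_eq_abs]
  -- integrability of exponentials of sub-sums
  have hGint : ∀ F : Finset ι, Integrable (fun ω => exp (L * ∑ i ∈ F, Z i ω)) ℙ := by
    intro F
    refine ⟨((Finset.measurable_sum F fun i _ => hZm i).const_mul L).exp.aestronglyMeasurable, ?_⟩
    refine HasFiniteIntegral.of_bounded (C := exp (|L| * ∑ i ∈ F, max |a i| |c i|)) ?_
    filter_upwards [hball] with ω hω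
    rw [Real.norm_eq_abs, abs_exp]
    apply exp_le_exp.mpr
    calc L * ∑ i ∈ F, Z i ω ≤ |L * ∑ i ∈ F, Z i ω| := le_abs_self _
      _ = |L| * |∑ i ∈ F, Z i ω| := abs_mul _ _
      _ ≤ |L| * ∑ i ∈ F, max |a i| |c i| := by
          refine mul_le_mul_of_nonneg_left ?_ (abs_nonneg L)
          refine (Finset.abs_sum_le_sum_abs _ _).trans (Finset.sum_le_sum fun i _ => ?_)
          rcases abs_cases (Z i ω) with ⟨h, _⟩ | ⟨h, _⟩
          · rw [h]; exact le_max_of_le_right (le_abs_self _ |>.trans' (hω i).2)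
          · rw [h]; exact le_max_of_le_left (neg_le_abs _ |>.trans' (by linarith [(hω i).1]))
  -- first-hitting decomposition
  set A : ℕ → Set Ω := fun j =>
    {ω | s ≤ S j ω} ∩ ⋂ (j' : ℕ) (_ : j' < j), {ω | S j' ω < s} with hAdef
  have hAmeas : ∀ j, MeasurableSet (A j) := by
    intro j
    exact (measurableSet_le measurable_const (hSmeas j)).inter
      (MeasurableSet.iInter fun j' => MeasurableSet.iInter fun _ =>
        measurableSet_lt (hSmeas j') measurable_const)
  have hAmem : ∀ j ω, ω ∈ A j ↔ (s ≤ S j ω ∧ ∀ j' < j, S j' ω < s) := by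
    intro j ω
    simp [hAdef, Set.mem_iInter]
  have hdisj : (↑(Finset.range (N + 1)) : Set ℕ).PairwiseDisjoint A := by
    have key : ∀ j j', j < j' → Disjoint (A j) (A j') := by
      intro j j' h
      refine Set.disjoint_left.mpr fun ω hj hj' => ?_
      exact absurd ((hAmem j ω).mp hj).1 (not_le.mpr (((hAmem j' ω).mp hj').2 j h))
    intro j _ j' _ hne
    rcases lt_or_gt_of_ne hne with h | h
    · exact key _ _ h
    · exact (key _ _ h).symm
  have hcover : {ω | ∃ j ≤ N, s ≤ S j ω} = ⋃ j ∈ Finset.range (N + 1), A j := by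
    ext ω
    simp only [Set.mem_setOf_eq, Set.mem_iUnion, Finset.mem_range, exists_prop]
    constructor
    · rintro ⟨j, hj, hs⟩
      have hex : ∃ m, s ≤ S m ω := ⟨j, hs⟩
      refine ⟨Nat.find hex, ?_, ?_⟩
      · exact lt_of_le_of_lt (Nat.find_min' hex hs) (by omega)
      · rw [hAmem]
        exact ⟨Nat.find_spec hex, fun j' hj' => not_le.mp (Nat.find_min hex hj')⟩
    · rintro ⟨j, hj, hω⟩
      exact ⟨j, by omega, ((hAmem j ω).mp hω).1⟩
  -- key estimate for each j
  have KEY : ∀ j ∈ Finset.range (N + 1),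
      exp (L * s) * (ℙ (A j)).toReal ≤ ∫ ω in A j, exp (L * S N ω) ∂ℙ := by
    intro j hj
    have hjN : j ≤ N := by simpa using Nat.lt_succ_iff.mp (Finset.mem_range.mp hj)
    have hsub : C j ⊆ C N := hC hjN
    set Fc : Finset ι := C N \ C j with hFc
    set H : Ω → ℝ := fun ω => exp (L * ∑ i ∈ Fc, Z i ω) with hH
    set U : Ω → ℝ := (A j).indicator (fun _ => (1 : ℝ)) with hU
    have hHint : Integrable H ℙ := hGint Fc
    have hHm : Measurable H := ((Finset.measurable_sum Fc fun i _ => hZm i).const_mul L).exp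
    -- split of S N
    have hsplit : ∀ ω, S N ω = S j ω + ∑ i ∈ Fc, Z i ω := by
      intro ω
      rw [hSdef]
      simp only
      rw [← Finset.sum_sdiff hsub]
      ring
    -- Step 1: pointwise bound
    have hptwise : ∀ ω, exp (L * s) * (U ω * H ω) ≤ (A j).indicator (fun ω => exp (L * S N ω)) ω := by
      intro ω
      by_cases hω : ω ∈ A j
      · rw [hU]
        simp only [Set.indicator_of_mem hω]
        rw [one_mul, hsplit, mul_add, exp_add, hH]
        have : s ≤ S j ω := ((hAmem j ω).mp hω).1
        have h1 : exp (L * s) ≤ exp (L * S j ω) :=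
          exp_le_exp.mpr (mul_le_mul_of_nonneg_left this hL.le)
        exact mul_le_mul_of_nonneg_right h1 (exp_nonneg _)
      · rw [hU]
        simp [Set.indicator_of_notMem hω]
    -- Step 2: independence of U and H
    have hUH : IndepFun U H ℙ := by
      have hIF := hindep.indepFun_finset (C j) Fc (Finset.disjoint_sdiff) hZm
      set B : Set ((i : ↥(C j)) → ℝ) :=
        {v | s ≤ ∑ i, v i} ∩ ⋂ (j' : ℕ) (_ : j' < j),
          {v | (∑ i ∈ Finset.univ.filter (fun i : ↥(C j) => (i : ι) ∈ C j'), v i) < s} with hB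
      have hBmeas : MeasurableSet B := by
        refine (measurableSet_le measurable_const
            (Finset.measurable_sum _ fun i _ => measurable_pi_apply i)).inter ?_
        exact MeasurableSet.iInter fun j' => MeasurableSet.iInter fun _ =>
          measurableSet_lt (Finset.measurable_sum _ fun i _ => measurable_pi_apply i)
          measurable_const
      set φ : ((i : ↥(C j)) → ℝ) → ℝ := B.indicator (fun _ => (1:ℝ)) with hφ
      set ψ : ((i : ↥(Fc)) → ℝ) → ℝ := fun v => exp (L * ∑ i, v i) with hψ
      have hφm : Measurable φ := (measurable_const.indicator hBmeas)
      have hψm : Measurable ψ :=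
        ((Finset.measurable_sum _ fun i _ => measurable_pi_apply i).const_mul L).exp
      have hcomp := hIF.comp hφm hψm
      have hsubsum : ∀ (D : Finset ι), D ⊆ C j → ∀ ω,
          (∑ i ∈ Finset.univ.filter (fun i : ↥(C j) => (i : ι) ∈ D), Z i ω) = ∑ i ∈ D, Z i ω := by
        intro D hD ω
        rw [Finset.sum_filter]
        rw [Finset.sum_coe_sort (C j) (fun x => if x ∈ D then Z x ω else 0)]
        rw [Finset.sum_ite_mem, Finset.inter_eq_right.mpr hD]
      have hUeq : U = φ ∘ (fun ω (i : ↥(C j)) => Z i ω) := by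
        funext ω
        have hmem : ((fun ω (i : ↥(C j)) => Z i ω) ω ∈ B) ↔ ω ∈ A j := by
          rw [hB, hAmem]
          simp only [Set.mem_inter_iff, Set.mem_setOf_eq, Set.mem_iInter]
          constructor
          · rintro ⟨h1, h2⟩
            refine ⟨?_, fun j' hj' => ?_⟩
            · rwa [Finset.sum_coe_sort (C j) (fun x => Z x ω)] at h1
            · have := h2 j' hj'
              rwa [hsubsum (C j') (hC hj'.le) ω] at this
          · rintro ⟨h1, h2⟩
            refine ⟨?_, fun j' hj' => ?_⟩
            · rwa [Finset.sum_coe_sort (C j) (fun x => Z x ω)]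
            · rw [hsubsum (C j') (hC hj'.le) ω]
              exact h2 j' hj'
        rw [hU, hφ, Function.comp_apply]
        by_cases hω : ω ∈ A j
        · rw [Set.indicator_of_mem hω, Set.indicator_of_mem (hmem.mpr hω)]
        · rw [Set.indicator_of_notMem hω, Set.indicator_of_notMem (fun hc => hω (hmem.mp hc))]
      have hHeq : H = ψ ∘ (fun ω (i : ↥(Fc)) => Z i ω) := by
        funext ω
        rw [hH, hψ, Function.comp_apply]
        simp only
        rw [Finset.sum_coe_sort Fc (fun x => Z x ω)]
      rw [hUeq, hHeq]
      exact hcomp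
    have hUint : Integrable U ℙ := (integrable_const (1:ℝ)).indicator (hAmeas j)
    have hmul : (∫ ω, U ω * H ω ∂ℙ) = (∫ ω, U ω ∂ℙ) * ∫ ω, H ω ∂ℙ :=
      hUH.integral_fun_mul_eq_mul_integral hUint.aestronglyMeasurable hHint.aestronglyMeasurable
    -- ∫ U = ℙ (A j)
    have hintU : ∫ ω, U ω ∂ℙ = (ℙ (A j)).toReal := by
      rw [hU, integral_indicator_const (1:ℝ) (hAmeas j)]
      simp
      rfl
    -- ∫ H ≥ 1
    have hintH : 1 ≤ ∫ ω, H ω ∂ℙ := by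
      have hle : ∀ᵐ ω ∂(ℙ : Measure Ω), 1 + L * ∑ i ∈ Fc, Z i ω ≤ H ω := by
        filter_upwards with ω
        rw [hH]
        simpa [add_comm] using Real.add_one_le_exp (L * ∑ i ∈ Fc, Z i ω)
      have hint1 : Integrable (fun ω => 1 + L * ∑ i ∈ Fc, Z i ω) ℙ :=
        (integrable_const 1).add ((integrable_finset_sum Fc fun i _ => hZint i).const_mul L)
      have := integral_mono_ae hint1 hHint hle
      rw [integral_add (integrable_const 1) ((integrable_finset_sum Fc fun i _ => hZint i).const_mul L),
        integral_const, integral_const_mul, integral_finset_sum Fc (fun i _ => hZint i)] at this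
      simp only [Finset.sum_congr, probReal_univ, ENNReal.toReal_one, smul_eq_mul, one_mul] at this
      rw [Finset.sum_congr rfl (fun i _ => hmean i)] at this
      simpa using this
    -- combine
    have hUHnn : 0 ≤ ∫ ω, U ω * H ω ∂ℙ := by
      rw [hmul, hintU]
      exact mul_nonneg ENNReal.toReal_nonneg (le_trans zero_le_one hintH)
    calc exp (L * s) * (ℙ (A j)).toReal
        ≤ exp (L * s) * ((ℙ (A j)).toReal * ∫ ω, H ω ∂ℙ) := by
          rcases (ENNReal.toReal_nonneg (a := ℙ (A j))).eq_or_lt with h | h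
          · rw [← h]; simp
          · have := mul_le_mul_of_nonneg_left hintH (le_of_lt h)
            nlinarith [exp_pos (L * s)]
      _ = ∫ ω, exp (L * s) * (U ω * H ω) ∂ℙ := by
          rw [integral_const_mul, hmul, hintU]
      _ ≤ ∫ ω, (A j).indicator (fun ω => exp (L * S N ω)) ω ∂ℙ := by
          refine integral_mono_ae ?_ ((hGint (C N)).indicator (hAmeas j)) ?_
          · have : Integrable (fun ω => U ω * H ω) ℙ := by
              have : (fun ω => U ω * H ω) = (A j).indicator H := by
                funext ω
                rw [hU]
                by_cases hω : ω ∈ A j <;>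
                  simp [Set.indicator_of_mem, Set.indicator_of_notMem, hω]
              rw [this]
              exact hHint.indicator (hAmeas j)
            exact this.const_mul _
          · filter_upwards with ω using hptwise ω
      _ = ∫ ω in A j, exp (L * S N ω) ∂ℙ := integral_indicator (hAmeas j)
  -- sum the key estimates over j
  have hPsum : ℙ {ω | ∃ j ≤ N, s ≤ S j ω} = ∑ j ∈ Finset.range (N + 1), ℙ (A j) := by
    rw [hcover]
    exact measure_biUnion_finset hdisj (fun j _ => hAmeas j)
  have htosum : (ℙ {ω | ∃ j ≤ N, s ≤ S j ω}).toReal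
      = ∑ j ∈ Finset.range (N + 1), (ℙ (A j)).toReal := by
    rw [hPsum, ENNReal.toReal_sum (fun j _ => measure_ne_top _ _)]
  have hsumint : ∑ j ∈ Finset.range (N + 1), ∫ ω in A j, exp (L * S N ω) ∂ℙ
      ≤ ∫ ω, exp (L * S N ω) ∂ℙ := by
    rw [← integral_biUnion_finset (Finset.range (N + 1)) (fun j _ => hAmeas j) hdisj
      (fun j _ => (hGint (C N)).integrableOn)]
    exact setIntegral_le_integral (hGint (C N))
      (Filter.Eventually.of_forall fun ω => exp_nonneg _)
  have hmgf : ∫ ω, exp (L * S N ω) ∂ℙ = ∏ i ∈ C N, ∫ ω, exp (L * Z i ω) ∂ℙ := by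
    have h := hindep.mgf_sum hZm (C N) (t := L)
    simp only [mgf, Finset.sum_apply] at h
    exact h
  have hprod : (∏ i ∈ C N, ∫ ω, exp (L * Z i ω) ∂ℙ)
      ≤ exp (L ^ 2 * (∑ i ∈ C N, (c i - a i) ^ 2) / 8) := by
    calc ∏ i ∈ C N, ∫ ω, exp (L * Z i ω) ∂ℙ
        ≤ ∏ i ∈ C N, exp (L ^ 2 * (c i - a i) ^ 2 / 8) := by
          refine Finset.prod_le_prod (fun i _ => integral_nonneg fun ω => exp_nonneg _)
            (fun i _ => hoeffding_lemma (hZm i) (hb i) (hmean i) L)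
      _ = exp (∑ i ∈ C N, L ^ 2 * (c i - a i) ^ 2 / 8) := (Real.exp_sum _ _).symm
      _ = exp (L ^ 2 * (∑ i ∈ C N, (c i - a i) ^ 2) / 8) := by
          congr 1
          rw [Finset.mul_sum, Finset.sum_div]
  have hmain : exp (L * s) * (ℙ {ω | ∃ j ≤ N, s ≤ S j ω}).toReal
      ≤ exp (L ^ 2 * (∑ i ∈ C N, (c i - a i) ^ 2) / 8) := by
    rw [htosum, Finset.mul_sum]
    calc ∑ j ∈ Finset.range (N + 1), exp (L * s) * (ℙ (A j)).toReal
        ≤ ∑ j ∈ Finset.range (N + 1), ∫ ω in A j, exp (L * S N ω) ∂ℙ :=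
          Finset.sum_le_sum KEY
      _ ≤ ∫ ω, exp (L * S N ω) ∂ℙ := hsumint
      _ = ∏ i ∈ C N, ∫ ω, exp (L * Z i ω) ∂ℙ := hmgf
      _ ≤ _ := hprod
  have hfinal : (ℙ {ω | ∃ j ≤ N, s ≤ S j ω}).toReal
      ≤ exp (-(L * s) + L ^ 2 * (∑ i ∈ C N, (c i - a i) ^ 2) / 8) := by
    rw [neg_add_eq_sub, Real.exp_sub]
    rw [le_div_iff₀ (exp_pos _)]
    calc (ℙ {ω | ∃ j ≤ N, s ≤ S j ω}).toReal * exp (L * s)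
        = exp (L * s) * (ℙ {ω | ∃ j ≤ N, s ≤ S j ω}).toReal := by ring
      _ ≤ _ := hmain
  rw [ENNReal.le_ofReal_iff_toReal_le (measure_ne_top _ _) (exp_nonneg _)]
  exact hfinal

lemma exp_tail_bound (εt V Q δ L : ℝ) (hεt : 0 < εt) (hV : 0 < V) (hQ : Q ≤ V)
    (hδ : 0 < δ) (hδ1 : δ < 1) (hlog : Real.log (2/δ) ≤ εt^2/V) (hL : L = 4*εt/V) :
    Real.exp (-(L*εt) + L^2 * Q/8) ≤ δ/2 := by
  subst hL
  have h1 : -(4*εt/V*εt) + (4*εt/V)^2*Q/8 ≤ -(2*(εt^2/V)) := by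
    have key : -(4*εt/V*εt) + (4*εt/V)^2*Q/8 = (2*εt^2*Q - 4*εt^2*V)/V^2 := by
      field_simp; ring
    have key2 : -(2*(εt^2/V)) = (-2*εt^2*V)/V^2 := by field_simp
    rw [key, key2]
    have hnum : 2*εt^2*Q - 4*εt^2*V ≤ -2*εt^2*V := by nlinarith [sq_nonneg εt]
    exact (div_le_div_iff_of_pos_right (by positivity)).mpr hnum
  have h2 : -(2*(εt^2/V)) ≤ -(2*Real.log (2/δ)) := by linarith
  calc exp (-(4*εt/V*εt) + (4*εt/V)^2*Q/8) ≤ exp (-(2*Real.log (2/δ))) :=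
        exp_le_exp.mpr (h1.trans h2)
    _ = (δ/2)*(δ/2) := by
        rw [show -(2*Real.log (2/δ)) = -Real.log (2/δ) + -Real.log (2/δ) by ring,
          exp_add, exp_neg, Real.exp_log (by positivity), inv_div]
    _ ≤ δ/2 := by nlinarith

end Auxiliary

/-- PAC guarantee for Algorithm 1 on a line graph with `n + 1` nodes `0, …, n`
(so `n` edges `(i, i+1)`), reward gap `u`, edge samples bounded in `[−1,1]`,
per-edge sample sizes `T i` satisfying
`(∑_i 4 / T i)⁻¹ ≥ (1/ε̃²)·log(2/δ)` with `ε̃ = max ε u`: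
the node `k` maximizing the empirical prefix sums satisfies `r k ≥ r* − ε`
with probability at least `1 − δ`. -/
theorem line_graph_PAC
    {Ω : Type*} [MeasureSpace Ω] [IsProbabilityMeasure (ℙ : Measure Ω)]
    (n : ℕ) (hn : 1 ≤ n) (r : Fin (n + 1) → ℝ) (rstar u : ℝ)
    (hstar : rstar = Finset.univ.sup' Finset.univ_nonempty r)
    (hbelow : (Finset.univ.filter (fun j => r j < rstar)).Nonempty)
    (hu : u = (Finset.univ.filter (fun j => r j < rstar)).inf' hbelow
      (fun j => rstar - r j))
    (T : Fin n → ℕ) (hT : ∀ i, 0 < T i)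
    (X : ∀ i : Fin n, Fin (T i) → Ω → ℝ)
    (hmeas : ∀ i t, Measurable (X i t))
    (hindep : iIndepFun
      (fun p : Σ i : Fin n, Fin (T i) => X p.1 p.2) ℙ)
    (hint : ∀ i t, Integrable (X i t) ℙ)
    (hmean : ∀ i t, ∫ ω, X i t ω ∂ℙ = r i.succ - r i.castSucc)
    (hbound : ∀ i t, ∀ᵐ ω ∂ℙ, X i t ω ∈ Set.Icc (-1 : ℝ) 1)
    (ε δ : ℝ) (hε : 0 < ε) (hδ : 0 < δ) (hδ1 : δ < 1)
    (hsample : (∑ i : Fin n, 4 / (T i : ℝ))⁻¹ ≥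
      (1 / (max ε u) ^ 2) * Real.log (2 / δ))
    (Shat : Fin (n + 1) → Ω → ℝ)
    (hS : ∀ j ω, Shat j ω =
      ∑ i ∈ Finset.univ.filter (fun i : Fin n => (i : ℕ) < (j : ℕ)),
        (1 / (T i : ℝ)) * ∑ t : Fin (T i), X i t ω)
    (k : Ω → Fin (n + 1)) (hk : ∀ ω j, Shat j ω ≤ Shat (k ω) ω) :
    1 - ENNReal.ofReal δ ≤ ℙ {ω | rstar - ε ≤ r (k ω)} := by
  classical
  have hTne : ∀ i, (T i : ℝ) ≠ 0 := fun i => Nat.cast_ne_zero.mpr (hT i).ne'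
  have hTpos : ∀ i, (0:ℝ) < T i := fun i => Nat.cast_pos.mpr (hT i)
  set μedge : Fin n → ℝ := fun i => r i.succ - r i.castSucc with hμdef
  -- |μedge i| ≤ 1
  have hμb : ∀ i, -1 ≤ μedge i ∧ μedge i ≤ 1 := by
    intro i
    have t0 : Fin (T i) := ⟨0, hT i⟩
    have h1 : μedge i = ∫ ω, X i t0 ω ∂ℙ := (hmean i t0).symm
    constructor
    · rw [h1]
      have : ∫ _ω, (-1 : ℝ) ∂(ℙ : Measure Ω) ≤ ∫ ω, X i t0 ω ∂ℙ :=
        integral_mono_ae (integrable_const _) (hint i t0) ((hbound i t0).mono fun ω h => h.1)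
      simpa using this
    · rw [h1]
      have : ∫ ω, X i t0 ω ∂ℙ ≤ ∫ _ω, (1 : ℝ) ∂(ℙ : Measure Ω) :=
        integral_mono_ae (hint i t0) (integrable_const _) ((hbound i t0).mono fun ω h => h.2)
      simpa using this
  -- the centered, scaled variables
  set Z : (Σ i : Fin n, Fin (T i)) → Ω → ℝ :=
    fun p ω => (1 / (T p.1 : ℝ)) * (X p.1 p.2 ω - μedge p.1) with hZdef
  have hZm : ∀ p, Measurable (Z p) := fun p =>
    (((hmeas p.1 p.2).sub measurable_const).const_mul _)
  have hZindep : iIndepFun Z ℙ := by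
    have := hindep.comp (fun p x => (1 / (T p.1 : ℝ)) * (x - μedge p.1))
      (fun p => (measurable_id.sub measurable_const).const_mul _)
    exact this
  set av : (p : Σ i : Fin n, Fin (T i)) → ℝ := fun p => (1 / (T p.1 : ℝ)) * (-1 - μedge p.1)
    with havdef
  set cv : (p : Σ i : Fin n, Fin (T i)) → ℝ := fun p => (1 / (T p.1 : ℝ)) * (1 - μedge p.1)
    with hcvdef
  have hZb : ∀ p, ∀ᵐ ω ∂(ℙ : Measure Ω), Z p ω ∈ Set.Icc (av p) (cv p) := by
    intro p
    filter_upwards [hbound p.1 p.2] with ω hω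
    have hpos : (0:ℝ) ≤ 1 / (T p.1 : ℝ) := by positivity
    exact ⟨mul_le_mul_of_nonneg_left (by linarith [hω.1]) hpos,
      mul_le_mul_of_nonneg_left (by linarith [hω.2]) hpos⟩
  have hZmean : ∀ p, ∫ ω, Z p ω ∂ℙ = 0 := by
    intro p
    rw [hZdef]
    simp only
    rw [integral_const_mul, integral_sub (hint p.1 p.2) (integrable_const _),
      integral_const, hmean p.1 p.2]
    simp [hμdef]
  -- sum of squared ranges
  have hrange : ∀ p : (Σ i : Fin n, Fin (T i)), (cv p - av p)^2 = 4 / (T p.1 : ℝ)^2 := by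
    intro p
    rw [havdef, hcvdef]
    have : (1 / (T p.1 : ℝ)) * (1 - μedge p.1) - (1 / (T p.1 : ℝ)) * (-1 - μedge p.1)
        = 2 / (T p.1 : ℝ) := by field_simp; ring
    rw [this, div_pow]
    norm_num
  set V : ℝ := ∑ i : Fin n, 4 / (T i : ℝ) with hVdef
  have hVpos : 0 < V := by
    rw [hVdef]
    have : Nonempty (Fin n) := ⟨⟨0, hn⟩⟩
    exact Finset.sum_pos (fun i _ => div_pos (by norm_num) (hTpos i)) Finset.univ_nonempty
  have htotal : ∑ p : (Σ i : Fin n, Fin (T i)), (cv p - av p)^2 = V := by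
    rw [hVdef, ← Finset.univ_sigma_univ, Finset.sum_sigma]
    refine Finset.sum_congr rfl fun i _ => ?_
    calc ∑ t : Fin (T i), (cv ⟨i, t⟩ - av ⟨i, t⟩)^2
        = ∑ _t : Fin (T i), 4 / (T i : ℝ)^2 :=
          Finset.sum_congr rfl fun t _ => hrange ⟨i, t⟩
      _ = (T i : ℝ) * (4 / (T i : ℝ)^2) := by
          rw [Finset.sum_const, Finset.card_univ, Fintype.card_fin, nsmul_eq_mul]
      _ = 4 / (T i : ℝ) := by
          have h := hTne i
          field_simp
  -- splitting sums over index intervals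
  have hsplitf : ∀ (f : Fin n → ℝ) (b d : ℕ), b ≤ d →
      ∑ i ∈ Finset.univ.filter (fun i : Fin n => (i : ℕ) < d), f i
      = (∑ i ∈ Finset.univ.filter (fun i : Fin n => (i : ℕ) < b), f i)
        + ∑ i ∈ Finset.univ.filter (fun i : Fin n => b ≤ (i : ℕ) ∧ (i : ℕ) < d), f i := by
    intro f b d hbd
    rw [← Finset.sum_filter_add_sum_filter_not
      (Finset.univ.filter (fun i : Fin n => (i : ℕ) < d)) (fun i => (i : ℕ) < b)]
    congr 1
    · congr 1
      rw [Finset.filter_filter]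
      apply Finset.filter_congr
      intro i _
      constructor
      · rintro ⟨h1, h2⟩; exact h2
      · intro h; exact ⟨by omega, h⟩
    · congr 1
      rw [Finset.filter_filter]
      apply Finset.filter_congr
      intro i _
      simp only [not_lt]
      constructor
      · rintro ⟨h1, h2⟩; exact ⟨h2, h1⟩
      · rintro ⟨h1, h2⟩; exact ⟨h2, h1⟩
  -- telescoping sum of the edge means
  have htel : ∀ b : ℕ, (hb : b ≤ n) →
      ∑ i ∈ Finset.univ.filter (fun i : Fin n => (i : ℕ) < b), μedge i
      = r ⟨b, Nat.lt_succ_of_le hb⟩ - r ⟨0, Nat.succ_pos n⟩ := by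
    intro b
    induction b with
    | zero =>
        intro _
        rw [Finset.filter_false_of_mem (fun i _ => by omega)]
        simp
    | succ b ih =>
        intro hb
        have hbn : b < n := hb
        have hins : Finset.univ.filter (fun i : Fin n => (i : ℕ) < b + 1)
            = insert ⟨b, hbn⟩ (Finset.univ.filter (fun i : Fin n => (i : ℕ) < b)) := by
          ext i
          simp only [Finset.mem_filter, Finset.mem_univ, true_and, Finset.mem_insert]
          constructor
          · intro h
            rcases Nat.lt_succ_iff_lt_or_eq.mp h with h' | h'
            · exact Or.inr h'
            · exact Or.inl (Fin.ext h')
          · rintro (h | h)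
            · subst h; simp
            · omega
        rw [hins, Finset.sum_insert (by simp)]
        rw [ih (le_of_lt hbn)]
        have hsucc : μedge ⟨b, hbn⟩ = r ⟨b + 1, by omega⟩ - r ⟨b, by omega⟩ := by
          rw [hμdef]
          congr 1
        rw [hsucc]
        ring
  -- per-edge-set sum of Z
  have hDsum : ∀ (D : Finset (Fin n)) (ω : Ω),
      ∑ p ∈ D.sigma (fun i => (Finset.univ : Finset (Fin (T i)))), Z p ω
      = (∑ i ∈ D, (1 / (T i : ℝ)) * ∑ t : Fin (T i), X i t ω) - ∑ i ∈ D, μedge i := by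
    intro D ω
    rw [Finset.sum_sigma]
    rw [← Finset.sum_sub_distrib]
    refine Finset.sum_congr rfl fun i _ => ?_
    calc ∑ t : Fin (T i), Z ⟨i, t⟩ ω
        = ∑ t : Fin (T i), (1 / (T i : ℝ)) * (X i t ω - μedge i) :=
          Finset.sum_congr rfl fun t _ => rfl
      _ = (1 / (T i : ℝ)) * ∑ t : Fin (T i), (X i t ω - μedge i) := by
          rw [Finset.mul_sum]
      _ = (1 / (T i : ℝ)) * ((∑ t : Fin (T i), X i t ω) - (T i : ℝ) * μedge i) := by
          rw [Finset.sum_sub_distrib, Finset.sum_const, Finset.card_univ, Fintype.card_fin,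
            nsmul_eq_mul]
      _ = (1 / (T i : ℝ)) * ∑ t : Fin (T i), X i t ω - μedge i := by
          have h := hTne i
          field_simp
  -- the maximizing node
  obtain ⟨jst, _, hjst⟩ := Finset.exists_mem_eq_sup' (Finset.univ_nonempty (α := Fin (n+1))) r
  have hrjst : r jst = rstar := by rw [hstar, hjst]
  -- the two chains
  set CR : ℕ → Finset (Σ i : Fin n, Fin (T i)) := fun m =>
    (Finset.univ.filter (fun i : Fin n => (jst : ℕ) ≤ (i : ℕ) ∧ (i : ℕ) < (jst : ℕ) + m)).sigma
      (fun i => (Finset.univ : Finset (Fin (T i)))) with hCRdef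
  set CL : ℕ → Finset (Σ i : Fin n, Fin (T i)) := fun m =>
    (Finset.univ.filter (fun i : Fin n => (jst : ℕ) - m ≤ (i : ℕ) ∧ (i : ℕ) < (jst : ℕ))).sigma
      (fun i => (Finset.univ : Finset (Fin (T i)))) with hCLdef
  have hCRmono : Monotone CR := by
    intro m m' hmm p hp
    simp only [hCRdef, Finset.mem_sigma, Finset.mem_filter, Finset.mem_univ, true_and] at hp ⊢
    exact ⟨⟨hp.1.1, by omega⟩, trivial⟩
  have hCLmono : Monotone CL := by
    intro m m' hmm p hp
    simp only [hCLdef, Finset.mem_sigma, Finset.mem_filter, Finset.mem_univ, true_and] at hp ⊢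
    exact ⟨⟨by omega, hp.1.2⟩, trivial⟩
  -- sum identities along the chains
  have hRsum : ∀ (ω : Ω) (j : Fin (n+1)), (jst : ℕ) ≤ (j : ℕ) →
      ∑ p ∈ CR ((j : ℕ) - (jst : ℕ)), Z p ω
      = (Shat j ω - Shat jst ω) - (r j - r jst) := by
    intro ω j hle
    have hfil : Finset.univ.filter
        (fun i : Fin n => (jst : ℕ) ≤ (i : ℕ) ∧ (i : ℕ) < (jst : ℕ) + ((j : ℕ) - (jst : ℕ)))
        = Finset.univ.filter (fun i : Fin n => (jst : ℕ) ≤ (i : ℕ) ∧ (i : ℕ) < (j : ℕ)) := by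
      apply Finset.filter_congr
      intro i _
      constructor
      · rintro ⟨h1, h2⟩; exact ⟨h1, by omega⟩
      · rintro ⟨h1, h2⟩; exact ⟨h1, by omega⟩
    rw [hCRdef]
    simp only
    rw [hfil, hDsum]
    have havg := hsplitf (fun i => (1 / (T i : ℝ)) * ∑ t : Fin (T i), X i t ω)
      (jst : ℕ) (j : ℕ) hle
    have hμ := hsplitf μedge (jst : ℕ) (j : ℕ) hle
    rw [htel (j : ℕ) (Nat.lt_succ_iff.mp j.isLt), htel (jst : ℕ) (Nat.lt_succ_iff.mp jst.isLt)]
      at hμ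
    simp only [Fin.eta] at hμ
    rw [← hS j ω, ← hS jst ω] at havg
    have e1 : ∑ i ∈ Finset.univ.filter
        (fun i : Fin n => (jst : ℕ) ≤ (i : ℕ) ∧ (i : ℕ) < (j : ℕ)),
        (1 / (T i : ℝ)) * ∑ t : Fin (T i), X i t ω = Shat j ω - Shat jst ω := by
      linarith
    have e2 : ∑ i ∈ Finset.univ.filter
        (fun i : Fin n => (jst : ℕ) ≤ (i : ℕ) ∧ (i : ℕ) < (j : ℕ)), μedge i
        = r j - r jst := by linarith
    rw [e1, e2]
  have hLsum : ∀ (ω : Ω) (j : Fin (n+1)), (j : ℕ) ≤ (jst : ℕ) →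
      ∑ p ∈ CL ((jst : ℕ) - (j : ℕ)), Z p ω
      = (Shat jst ω - Shat j ω) - (r jst - r j) := by
    intro ω j hle
    have hfil : Finset.univ.filter
        (fun i : Fin n => (jst : ℕ) - ((jst : ℕ) - (j : ℕ)) ≤ (i : ℕ) ∧ (i : ℕ) < (jst : ℕ))
        = Finset.univ.filter (fun i : Fin n => (j : ℕ) ≤ (i : ℕ) ∧ (i : ℕ) < (jst : ℕ)) := by
      apply Finset.filter_congr
      intro i _
      constructor
      · rintro ⟨h1, h2⟩; exact ⟨by omega, h2⟩
      · rintro ⟨h1, h2⟩; exact ⟨by omega, h2⟩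
    rw [hCLdef]
    simp only
    rw [hfil, hDsum]
    have havg := hsplitf (fun i => (1 / (T i : ℝ)) * ∑ t : Fin (T i), X i t ω)
      (j : ℕ) (jst : ℕ) hle
    have hμ := hsplitf μedge (j : ℕ) (jst : ℕ) hle
    rw [htel (jst : ℕ) (Nat.lt_succ_iff.mp jst.isLt), htel (j : ℕ) (Nat.lt_succ_iff.mp j.isLt)]
      at hμ
    simp only [Fin.eta] at hμ
    rw [← hS jst ω, ← hS j ω] at havg
    have e1 : ∑ i ∈ Finset.univ.filter
        (fun i : Fin n => (j : ℕ) ≤ (i : ℕ) ∧ (i : ℕ) < (jst : ℕ)),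
        (1 / (T i : ℝ)) * ∑ t : Fin (T i), X i t ω = Shat jst ω - Shat j ω := by
      linarith
    have e2 : ∑ i ∈ Finset.univ.filter
        (fun i : Fin n => (j : ℕ) ≤ (i : ℕ) ∧ (i : ℕ) < (jst : ℕ)), μedge i
        = r jst - r j := by linarith
    rw [e1, e2]
  -- parameters
  set εt : ℝ := max ε u with hεtdef
  have hεtpos : 0 < εt := lt_of_lt_of_le hε (le_max_left _ _)
  have hlog : Real.log (2/δ) ≤ εt^2 / V := by
    have h2 : (1 / εt ^ 2) * Real.log (2 / δ) ≤ V⁻¹ := hsample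
    have h3 := mul_le_mul_of_nonneg_left h2 (le_of_lt (by positivity : (0:ℝ) < εt^2))
    calc Real.log (2/δ) = εt^2 * ((1 / εt^2) * Real.log (2/δ)) := by
          field_simp
      _ ≤ εt^2 * V⁻¹ := h3
      _ = εt^2 / V := by rw [div_eq_mul_inv]
  set L : ℝ := 4 * εt / V with hLdef
  have hLpos : 0 < L := by rw [hLdef]; positivity
  -- bad events
  set ER : Set Ω := {ω | ∃ m ≤ n, εt ≤ ∑ p ∈ CR m, Z p ω} with hERdef
  set Zneg : (Σ i : Fin n, Fin (T i)) → Ω → ℝ := fun p ω => -(Z p ω) with hZnegdef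
  set EL : Set Ω := {ω | ∃ m ≤ n, εt ≤ ∑ p ∈ CL m, Zneg p ω} with hELdef
  -- inclusion of the bad event
  have hincl : ∀ ω, ω ∉ ER → ω ∉ EL → rstar - ε ≤ r (k ω) := by
    intro ω hR hL'
    by_contra hbad
    push_neg at hbad
    set j : Fin (n+1) := k ω with hjdef
    have hεtle : εt ≤ rstar - r j := by
      apply max_le
      · linarith
      · rw [hu]
        exact Finset.inf'_le _ (Finset.mem_filter.mpr ⟨Finset.mem_univ _, by linarith⟩)
    have hshat : Shat jst ω ≤ Shat j ω := hk ω jst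
    rcases le_or_gt (jst : ℕ) (j : ℕ) with hcase | hcase
    · apply hR
      rw [hERdef]
      refine ⟨(j : ℕ) - (jst : ℕ), by omega, ?_⟩
      rw [hRsum ω j hcase, hrjst]
      linarith
    · apply hL'
      rw [hELdef]
      refine ⟨(jst : ℕ) - (j : ℕ), by omega, ?_⟩
      have : ∑ p ∈ CL ((jst : ℕ) - (j : ℕ)), Zneg p ω
          = -((Shat jst ω - Shat j ω) - (r jst - r j)) := by
        rw [← hLsum ω j hcase.le, ← Finset.sum_neg_distrib]
      rw [this, hrjst]
      linarith
  -- probability bounds on the bad events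
  have hQR : ∑ p ∈ CR n, (cv p - av p)^2 ≤ V := by
    rw [← htotal]
    exact Finset.sum_le_sum_of_subset_of_nonneg (Finset.subset_univ _)
      (fun p _ _ => sq_nonneg _)
  have hQL : ∑ p ∈ CL n, (cv p - av p)^2 ≤ V := by
    rw [← htotal]
    exact Finset.sum_le_sum_of_subset_of_nonneg (Finset.subset_univ _)
      (fun p _ _ => sq_nonneg _)
  have hPER : ℙ ER ≤ ENNReal.ofReal (δ/2) := by
    refine le_trans (chain_bound Z hZm hZindep av cv hZb hZmean CR hCRmono n εt L hLpos) ?_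
    exact ENNReal.ofReal_le_ofReal
      (exp_tail_bound εt V _ δ L hεtpos hVpos hQR hδ hδ1 hlog hLdef)
  have hPEL : ℙ EL ≤ ENNReal.ofReal (δ/2) := by
    have hZnm : ∀ p, Measurable (Zneg p) := fun p => (hZm p).neg
    have hZnindep : iIndepFun Zneg ℙ := by
      have := hZindep.comp (fun p x => -x) (fun p => measurable_neg)
      exact this
    have hZnb : ∀ p, ∀ᵐ ω ∂(ℙ : Measure Ω), Zneg p ω ∈ Set.Icc (-(cv p)) (-(av p)) := by
      intro p
      filter_upwards [hZb p] with ω hω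
      exact ⟨by simp only [hZnegdef]; linarith [hω.2], by simp only [hZnegdef]; linarith [hω.1]⟩
    have hZnmean : ∀ p, ∫ ω, Zneg p ω ∂ℙ = 0 := by
      intro p
      rw [hZnegdef]
      simp only
      rw [integral_neg, hZmean p, neg_zero]
    have hQL' : ∑ p ∈ CL n, (-(av p) - -(cv p))^2 ≤ V := by
      refine le_trans (le_of_eq (Finset.sum_congr rfl fun p _ => ?_)) hQL
      ring
    refine le_trans (chain_bound Zneg hZnm hZnindep (fun p => -(cv p)) (fun p => -(av p))
      hZnb hZnmean CL hCLmono n εt L hLpos) ?_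
    exact ENNReal.ofReal_le_ofReal
      (exp_tail_bound εt V _ δ L hεtpos hVpos hQL' hδ hδ1 hlog hLdef)
  -- conclusion
  have hcoverall : (Set.univ : Set Ω) ⊆ {ω | rstar - ε ≤ r (k ω)} ∪ (ER ∪ EL) := by
    intro ω _
    by_cases h1 : ω ∈ ER
    · exact Or.inr (Or.inl h1)
    by_cases h2 : ω ∈ EL
    · exact Or.inr (Or.inr h2)
    exact Or.inl (hincl ω h1 h2)
  have h1 : (1 : ENNReal) ≤ ℙ {ω | rstar - ε ≤ r (k ω)} + ENNReal.ofReal δ := by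
    calc (1 : ENNReal) = ℙ (Set.univ : Set Ω) := (measure_univ).symm
      _ ≤ ℙ ({ω | rstar - ε ≤ r (k ω)} ∪ (ER ∪ EL)) := measure_mono hcoverall
      _ ≤ ℙ {ω | rstar - ε ≤ r (k ω)} + ℙ (ER ∪ EL) := measure_union_le _ _
      _ ≤ ℙ {ω | rstar - ε ≤ r (k ω)} + (ℙ ER + ℙ EL) := by
          exact add_le_add_right (measure_union_le _ _) _
      _ ≤ ℙ {ω | rstar - ε ≤ r (k ω)} + (ENNReal.ofReal (δ/2) + ENNReal.ofReal (δ/2)) := by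
          exact add_le_add_right (add_le_add hPER hPEL) _
      _ = ℙ {ω | rstar - ε ≤ r (k ω)} + ENNReal.ofReal δ := by
          rw [← ENNReal.ofReal_add (by positivity) (by positivity)]
          norm_num
  exact tsub_le_iff_right.mpr h1
end

section
/- Consider the line graph setup with n nodes, each edge sample bounded in [−1,1] almost surely, and suppose every edge is sampled the same number of times T. Fix ε > 0 and δ ∈ (0,1) and set ε̃ = max(ε, u). If T ≥ (4n/ε̃²)·log(2/δ), then the node k maximizing the empirical prefix sums Ŝ_1, …, Ŝ_n satisfies r_k ≥ r* − ε with probability at least 1 − δ; consequently the total number of edge pulls is at most (n−1)·T ≤ (4n²/ε̃²)·log(2/δ). -/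
open MeasureTheory ProbabilityTheory Finset

set_option maxHeartbeats 2000000

section LineGraphHelpers

lemma fin_filter_sum {j m : ℕ} (h : m ≤ j) (g : ℕ → ℝ) :
    ∑ i ∈ Finset.univ.filter (fun i : Fin j => (i : ℕ) < m), g i
      = ∑ l ∈ Finset.range m, g l := by
  rcases Nat.eq_zero_or_pos m with hm | hm
  · subst hm; simp
  have hj : 0 < j := lt_of_lt_of_le hm h
  refine Finset.sum_nbij' (fun i => (i : ℕ)) (fun l => ⟨l % j, Nat.mod_lt _ hj⟩)
    ?_ ?_ ?_ ?_ ?_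
  · intro i hi; simp only [Finset.mem_filter] at hi; exact Finset.mem_range.mpr hi.2
  · intro l hl; rw [Finset.mem_range] at hl
    simp only [Finset.mem_filter, Finset.mem_univ, true_and]
    have : l % j = l := Nat.mod_eq_of_lt (lt_of_lt_of_le hl h)
    omega
  · intro i hi; simp only [Finset.mem_filter] at hi
    have : (i : ℕ) % j = (i : ℕ) := Nat.mod_eq_of_lt i.isLt
    exact Fin.ext this
  · intro l hl; rw [Finset.mem_range] at hl
    exact Nat.mod_eq_of_lt (lt_of_lt_of_le hl h)
  · intro i hi; rfl

lemma sum_flatten {T : ℕ} (hT : 0 < T) (d : ℕ) (f : ℕ → ℕ → ℝ) :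
    ∑ l ∈ Finset.range (d * T), f (l / T) (l % T)
      = ∑ i ∈ Finset.range d, ∑ t ∈ Finset.range T, f i t := by
  induction d with
  | zero => simp
  | succ d ih =>
    have h1 : (d + 1) * T = d * T + T := by ring
    rw [h1, Finset.sum_range_add, ih, Finset.sum_range_succ]
    congr 1
    refine Finset.sum_congr rfl fun t ht => ?_
    rw [Finset.mem_range] at ht
    have h2 : (d * T + t) / T = d := by
      rw [Nat.add_comm, Nat.add_mul_div_right _ _ hT, Nat.div_eq_of_lt ht]; omega
    have h3 : (d * T + t) % T = t := by
      rw [Nat.add_comm, Nat.add_mul_mod_self_right, Nat.mod_eq_of_lt ht]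
    rw [h2, h3]

lemma sum_reflect_Ico {b d : ℕ} (h : d ≤ b) (f : ℕ → ℝ) :
    ∑ i ∈ Finset.range d, f (b - 1 - i) = ∑ i ∈ Finset.Ico (b - d) b, f i := by
  refine Finset.sum_nbij' (fun i => b - 1 - i) (fun i => b - 1 - i) ?_ ?_ ?_ ?_ ?_
  · intro i hi; rw [Finset.mem_range] at hi; rw [Finset.mem_Ico]; omega
  · intro i hi; rw [Finset.mem_Ico] at hi; rw [Finset.mem_range]; omega
  · intro i hi; rw [Finset.mem_range] at hi; omega
  · intro i hi; rw [Finset.mem_Ico] at hi; omega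
  · intro i hi; rfl

variable {Ω : Type*} [MeasureSpace Ω] [IsProbabilityMeasure (ℙ : Measure Ω)]

lemma integrable_of_bound (f : Ω → ℝ) (C : ℝ) (hm : AEStronglyMeasurable f (ℙ : Measure Ω))
    (hb : ∀ᵐ ω ∂(ℙ : Measure Ω), |f ω| ≤ C) : Integrable f (ℙ : Measure Ω) := by
  refine (integrable_const C).mono' hm ?_
  filter_upwards [hb] with ω h using by simpa [Real.norm_eq_abs] using h

lemma sample_mgf (W : Ω → ℝ) (hWm : Measurable W)
    (hWb : ∀ᵐ ω ∂(ℙ : Measure Ω), |W ω| ≤ 2)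
    (hWint : Integrable W (ℙ : Measure Ω))
    (hW0 : ∫ ω, W ω ∂(ℙ : Measure Ω) = 0)
    (hW2 : ∫ ω, (W ω) ^ 2 ∂(ℙ : Measure Ω) ≤ 1)
    (s : ℝ) (hs : |s| ≤ 1 / 2) :
    (1 : ℝ) ≤ ∫ ω, Real.exp (s * W ω) ∂(ℙ : Measure Ω) ∧
      ∫ ω, Real.exp (s * W ω) ∂(ℙ : Measure Ω) ≤ Real.exp (3 / 4 * s ^ 2) := by
  have hWsq_int : Integrable (fun ω => (W ω) ^ 2) (ℙ : Measure Ω) := by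
    refine integrable_of_bound _ 4 (hWm.pow_const 2).aestronglyMeasurable ?_
    filter_upwards [hWb] with ω h
    have : |(W ω) ^ 2| = |W ω| ^ 2 := abs_pow _ _
    rw [this]
    nlinarith [abs_nonneg (W ω)]
  have hexp_int : Integrable (fun ω => Real.exp (s * W ω)) (ℙ : Measure Ω) := by
    refine integrable_of_bound _ (Real.exp 1) ((hWm.const_mul s).exp).aestronglyMeasurable ?_
    filter_upwards [hWb] with ω h
    rw [abs_of_pos (Real.exp_pos _)]
    refine Real.exp_le_exp.mpr ?_
    calc s * W ω ≤ |s * W ω| := le_abs_self _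
      _ = |s| * |W ω| := abs_mul _ _
      _ ≤ (1/2) * 2 := by
          apply mul_le_mul hs h (abs_nonneg _) (by norm_num)
      _ = 1 := by norm_num
  constructor
  · have h1 : ∀ ω, 1 + s * W ω ≤ Real.exp (s * W ω) := fun ω => by
      have := Real.add_one_le_exp (s * W ω); linarith
    have : ∫ ω, (1 + s * W ω) ∂(ℙ : Measure Ω) ≤ ∫ ω, Real.exp (s * W ω) ∂(ℙ : Measure Ω) := by
      refine integral_mono ?_ hexp_int h1
      exact (integrable_const 1).add (hWint.const_mul s)
    rwa [integral_add (integrable_const 1) (hWint.const_mul s), integral_const,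
      integral_const_mul, hW0, mul_zero, add_zero, probReal_univ,
      smul_eq_mul, mul_one] at this
  · have h1 : ∀ᵐ ω ∂(ℙ : Measure Ω),
        Real.exp (s * W ω) ≤ 1 + s * W ω + 3 / 4 * (s * W ω) ^ 2 := by
      filter_upwards [hWb] with ω h
      have hx : |s * W ω| ≤ 1 := by
        rw [abs_mul]
        calc |s| * |W ω| ≤ (1/2) * 2 := mul_le_mul hs h (abs_nonneg _) (by norm_num)
          _ = 1 := by norm_num
      have hb := Real.exp_bound hx (n := 2) (by norm_num)
      have hsum : ∑ m ∈ Finset.range 2, (s * W ω) ^ m / m.factorial = 1 + s * W ω := by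
        simp [Finset.sum_range_succ]
      rw [hsum] at hb
      have hb2 := (abs_le.mp hb).2
      norm_num [Nat.factorial] at hb2
      rw [← abs_mul, sq_abs] at hb2
      linarith
    have hint2 : Integrable (fun ω => 1 + s * W ω + 3 / 4 * (s * W ω) ^ 2) (ℙ : Measure Ω) := by
      refine ((integrable_const 1).add (hWint.const_mul s)).add ?_
      have : (fun ω => 3 / 4 * (s * W ω) ^ 2) = fun ω => (3 / 4 * s ^ 2) * (W ω) ^ 2 := by
        funext ω; ring
      rw [this]; exact hWsq_int.const_mul _
    have hle := integral_mono_ae hexp_int hint2 h1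
    have heval : ∫ ω, (1 + s * W ω + 3 / 4 * (s * W ω) ^ 2) ∂(ℙ : Measure Ω)
        ≤ 1 + 3 / 4 * s ^ 2 := by
      have heq : (fun ω => 1 + s * W ω + 3 / 4 * (s * W ω) ^ 2)
          = fun ω => (1 + s * W ω) + (3 / 4 * s ^ 2) * (W ω) ^ 2 := by
        funext ω; ring
      have hint1 : Integrable (fun ω => 1 + s * W ω) (ℙ : Measure Ω) :=
        (integrable_const 1).add (hWint.const_mul s)
      have hint3 : Integrable (fun ω => (3 / 4 * s ^ 2) * (W ω) ^ 2) (ℙ : Measure Ω) :=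
        hWsq_int.const_mul _
      rw [heq, integral_add hint1 hint3,
        integral_add (integrable_const 1) (hWint.const_mul s),
        integral_const, integral_const_mul, integral_const_mul, hW0, mul_zero, add_zero,
        probReal_univ, smul_eq_mul, mul_one]
      have : 3 / 4 * s ^ 2 * ∫ ω, (W ω) ^ 2 ∂(ℙ : Measure Ω) ≤ 3 / 4 * s ^ 2 * 1 := by
        apply mul_le_mul_of_nonneg_left hW2 (by positivity)
      linarith
    calc ∫ ω, Real.exp (s * W ω) ∂(ℙ : Measure Ω) ≤ 1 + 3 / 4 * s ^ 2 := le_trans hle heval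
      _ ≤ Real.exp (3 / 4 * s ^ 2) := by
          have := Real.add_one_le_exp (3 / 4 * s ^ 2); linarith

lemma indep_prefix {ι : Type*}
    (Xp : ι → Ω → ℝ)
    (hindep : iIndepFun Xp (ℙ : Measure Ω))
    (hmeas : ∀ p, Measurable (Xp p))
    (e : ℕ → ι) (g : ℕ → ℝ → ℝ) (hg : ∀ l, Measurable (g l)) (j : ℕ)
    (hinj : ∀ l1 l2, l1 ≤ j → l2 ≤ j → e l1 = e l2 → l1 = l2) :
    IndepFun (fun ω (i : Fin j) => g i (Xp (e i) ω)) (fun ω => g j (Xp (e j) ω))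
      (ℙ : Measure Ω) := by
  classical
  have hST : Disjoint ((Finset.range j).image e) ({e j} : Finset ι) := by
    rw [Finset.disjoint_singleton_right]
    intro hmem
    obtain ⟨l, hl, hle⟩ := Finset.mem_image.mp hmem
    rw [Finset.mem_range] at hl
    exact absurd (hinj l j hl.le le_rfl hle) (by omega)
  have h0 := hindep.indepFun_finset _ _ hST hmeas
  have hmemS : ∀ i : Fin j, e ↑i ∈ (Finset.range j).image e := fun i =>
    Finset.mem_image_of_mem e (Finset.mem_range.mpr i.isLt)
  have hφ : Measurable (fun (w : ((Finset.range j).image e : Finset ι) → ℝ) =>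
      (fun i : Fin j => g i (w ⟨e ↑i, hmemS i⟩))) :=
    measurable_pi_lambda _ fun i => (hg ↑i).comp (measurable_pi_apply _)
  have hψ : Measurable (fun (w : (({e j} : Finset ι) : Finset ι) → ℝ) =>
      g j (w ⟨e j, Finset.mem_singleton_self _⟩)) :=
    (hg j).comp (measurable_pi_apply _)
  exact h0.comp hφ hψ

lemma centered_sq (Y : Ω → ℝ) (hm : Measurable Y)
    (hb : ∀ᵐ ω ∂(ℙ : Measure Ω), |Y ω| ≤ 1) (hYint : Integrable Y (ℙ : Measure Ω))
    (c : ℝ) (hc : c = ∫ ω, Y ω ∂(ℙ : Measure Ω)) :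
    ∫ ω, (Y ω - c) ^ 2 ∂(ℙ : Measure Ω) ≤ 1 := by
  have hY2int : Integrable (fun ω => (Y ω) ^ 2) (ℙ : Measure Ω) := by
    refine integrable_of_bound _ 1 ((hm.pow_const 2).aestronglyMeasurable) ?_
    filter_upwards [hb] with ω h
    rw [abs_pow]
    nlinarith [abs_nonneg (Y ω)]
  have hexp : (fun ω => (Y ω - c) ^ 2) = fun ω => (Y ω) ^ 2 + ((-2*c) * Y ω + c ^ 2) := by
    funext ω; ring
  have hlin : Integrable (fun ω => (-2*c) * Y ω + c ^ 2) (ℙ : Measure Ω) :=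
    (hYint.const_mul _).add (integrable_const _)
  have hlin1 : Integrable (fun ω => (-2*c) * Y ω) (ℙ : Measure Ω) := hYint.const_mul _
  rw [hexp, integral_add hY2int hlin, integral_add hlin1 (integrable_const _),
    integral_const_mul, integral_const, probReal_univ, smul_eq_mul,
    one_mul, ← hc]
  have h1 : ∫ ω, (Y ω) ^ 2 ∂(ℙ : Measure Ω) ≤ 1 := by
    have := integral_mono_ae hY2int (integrable_const 1) ?_
    · simpa using this
    · filter_upwards [hb] with ω h
      nlinarith [abs_nonneg (Y ω), sq_abs (Y ω)]
  nlinarith [sq_nonneg c]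

end LineGraphHelpers

section MaximalChernoff

variable {Ω : Type*} [MeasureSpace Ω] [IsProbabilityMeasure (ℙ : Measure Ω)]

lemma maximal_chernoff (M : ℕ) (Z : ℕ → Ω → ℝ) (s a v : ℝ) (hs : 0 ≤ s) (hv : 0 ≤ v)
    (hmeas : ∀ l, Measurable (Z l))
    (hbdd : ∀ l, ∀ᵐ ω ∂(ℙ : Measure Ω), |Z l ω| ≤ 2)
    (hindep : ∀ j, j < M → IndepFun (fun ω (i : Fin j) => Z i ω) (Z j) ℙ)
    (hmgf_lo : ∀ l, (1:ℝ) ≤ ∫ ω, Real.exp (s * Z l ω) ∂(ℙ : Measure Ω))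
    (hmgf_hi : ∀ l, ∫ ω, Real.exp (s * Z l ω) ∂(ℙ : Measure Ω) ≤ Real.exp v) :
    ℙ {ω | ∃ m, m ≤ M ∧ a ≤ ∑ l ∈ Finset.range m, Z l ω}
      ≤ ENNReal.ofReal (Real.exp ((M : ℝ) * v - s * a)) := by
  classical
  set P : ℕ → Ω → ℝ := fun m ω => ∑ l ∈ Finset.range m, Z l ω with hP
  have hPmeas : ∀ m, Measurable (P m) := fun m =>
    Finset.measurable_sum _ (fun l _ => hmeas l)
  -- a.e. boundedness of prefix sums
  have hPbdd : ∀ m, ∀ᵐ ω ∂(ℙ : Measure Ω), |P m ω| ≤ 2 * m := by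
    intro m
    have : ∀ᵐ ω ∂(ℙ : Measure Ω), ∀ l ∈ Finset.range m, |Z l ω| ≤ 2 :=
      (ae_ball_iff (Finset.range m).countable_toSet).mpr (fun l _ => hbdd l)
    filter_upwards [this] with ω h
    calc |P m ω| ≤ ∑ l ∈ Finset.range m, |Z l ω| := Finset.abs_sum_le_sum_abs _ _
      _ ≤ ∑ l ∈ Finset.range m, 2 := Finset.sum_le_sum h
      _ = 2 * m := by simp [mul_comm]
  -- integrability of exp(s * P j)
  have hexpPint : ∀ j, Integrable (fun ω => Real.exp (s * P j ω)) (ℙ : Measure Ω) := by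
    intro j
    refine integrable_of_bound _ (Real.exp (s * (2 * j)))
      ((hPmeas j).const_mul s).exp.aestronglyMeasurable ?_
    filter_upwards [hPbdd j] with ω h
    rw [abs_of_pos (Real.exp_pos _)]
    exact Real.exp_le_exp.mpr (mul_le_mul_of_nonneg_left (le_trans (le_abs_self _) h) hs)
  have hexpZint : ∀ l, Integrable (fun ω => Real.exp (s * Z l ω)) (ℙ : Measure Ω) := by
    intro l
    refine integrable_of_bound _ (Real.exp (s * 2))
      ((hmeas l).const_mul s).exp.aestronglyMeasurable ?_
    filter_upwards [hbdd l] with ω h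
    rw [abs_of_pos (Real.exp_pos _)]
    exact Real.exp_le_exp.mpr (mul_le_mul_of_nonneg_left (le_trans (le_abs_self _) h) hs)
  -- the first-entry events
  set A : ℕ → Set Ω := fun m =>
    {ω | a ≤ P m ω} ∩ ⋂ (l : ℕ) (_ : l < m), {ω | P l ω < a} with hA
  have hAmeas : ∀ m, MeasurableSet (A m) := by
    intro m
    refine (measurableSet_le measurable_const (hPmeas m)).inter ?_
    exact MeasurableSet.iInter fun l => MeasurableSet.iInter fun _ =>
      measurableSet_lt (hPmeas l) measurable_const
  have hAmem : ∀ m ω, ω ∈ A m ↔ (a ≤ P m ω ∧ ∀ l, l < m → P l ω < a) := by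
    intro m ω
    simp [hA, Set.mem_iInter]
  -- target is covered by the A m, m ≤ M
  have hcover : {ω | ∃ m, m ≤ M ∧ a ≤ P m ω} ⊆ ⋃ m ∈ Finset.range (M + 1), A m := by
    rintro ω ⟨m, hmM, hm⟩
    have hex : ∃ m', a ≤ P m' ω := ⟨m, hm⟩
    set c := Nat.find hex with hc
    have hcle : c ≤ m := Nat.find_min' hex hm
    rw [Set.mem_iUnion₂]
    refine ⟨c, Finset.mem_range.mpr (by omega), ?_⟩
    rw [hAmem]
    exact ⟨Nat.find_spec hex, fun l hl => lt_of_not_ge (Nat.find_min hex hl)⟩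
  -- disjointness
  have hdisj : ∀ m m', m < m' → Disjoint (A m) (A m') := by
    intro m m' hmm'
    rw [Set.disjoint_left]
    intro ω h1 h2
    rw [hAmem] at h1 h2
    exact absurd h1.1 (not_le.mpr (h2.2 m hmm'))
  -- indicator integrals
  set F : ℕ → ℕ → Ω → ℝ := fun m j => (A m).indicator (fun ω => Real.exp (s * P j ω))
    with hF
  have hFmeas : ∀ m j, Measurable (F m j) := fun m j =>
    (((hPmeas j).const_mul s).exp).indicator (hAmeas m)
  have hFint : ∀ m j, Integrable (F m j) (ℙ : Measure Ω) := by
    intro m j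
    refine integrable_of_bound _ (Real.exp (s * (2 * j)))
      (hFmeas m j).aestronglyMeasurable ?_
    filter_upwards [hPbdd j] with ω h
    simp only [hF]
    by_cases hω : ω ∈ A m
    · rw [Set.indicator_of_mem hω, abs_of_pos (Real.exp_pos _)]
      exact Real.exp_le_exp.mpr (mul_le_mul_of_nonneg_left (le_trans (le_abs_self _) h) hs)
    · rw [Set.indicator_of_notMem hω]
      rw [abs_zero]
      positivity
  have hFnonneg : ∀ m j, 0 ≤ ∫ ω, F m j ω ∂(ℙ : Measure Ω) := by
    intro m j
    refine integral_nonneg fun ω => ?_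
    exact Set.indicator_nonneg (fun ω _ => (Real.exp_pos _).le) ω
  -- independence step: F m j  ⊥  exp (s * Z j)  for m ≤ j < M
  have hkey_indep : ∀ m j, m ≤ j → j < M →
      IndepFun (F m j) (fun ω => Real.exp (s * Z j ω)) ℙ := by
    intro m j hmj hjM
    set B : Set (Fin j → ℝ) :=
      {w | a ≤ ∑ i ∈ Finset.univ.filter (fun i : Fin j => (i : ℕ) < m), w i} ∩
        ⋂ (l : ℕ) (_ : l < m),
          {w | ∑ i ∈ Finset.univ.filter (fun i : Fin j => (i : ℕ) < l), w i < a} with hB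
    have hsum_meas : ∀ (t : Finset (Fin j)), Measurable (fun w : Fin j → ℝ => ∑ i ∈ t, w i) :=
      fun t => Finset.measurable_sum _ (fun i _ => measurable_pi_apply i)
    have hBmeas : MeasurableSet B := by
      refine (measurableSet_le measurable_const (hsum_meas _)).inter ?_
      exact MeasurableSet.iInter fun l => MeasurableSet.iInter fun _ =>
        measurableSet_lt (hsum_meas _) measurable_const
    set φ : (Fin j → ℝ) → ℝ := B.indicator (fun w => Real.exp (s * ∑ i, w i)) with hφ
    have hφmeas : Measurable φ :=
      (((hsum_meas Finset.univ).const_mul s).exp).indicator hBmeas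
    have hψmeas : Measurable (fun x : ℝ => Real.exp (s * x)) :=
      (measurable_id.const_mul s).exp
    have hcomp : F m j = φ ∘ (fun ω (i : Fin j) => Z i ω) := by
      funext ω
      have hPj : P j ω = ∑ i : Fin j, Z i ω := by
        simp only [hP]; exact (Fin.sum_univ_eq_sum_range (fun l => Z l ω) j).symm
      have hPl : ∀ l, l ≤ j → P l ω =
          ∑ i ∈ Finset.univ.filter (fun i : Fin j => (i : ℕ) < l), Z i ω := by
        intro l hl
        simp only [hP]; exact (fin_filter_sum hl (fun i => Z i ω)).symm
      have hmem : ω ∈ A m ↔ (fun i : Fin j => Z i ω) ∈ B := by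
        rw [hAmem, hB]
        simp only [Set.mem_inter_iff, Set.mem_setOf_eq, Set.mem_iInter]
        rw [← hPl m hmj]
        constructor
        · rintro ⟨h1, h2⟩
          exact ⟨h1, fun l hl => by rw [← hPl l (le_trans hl.le hmj)]; exact h2 l hl⟩
        · rintro ⟨h1, h2⟩
          exact ⟨h1, fun l hl => by
            have := h2 l hl; rwa [← hPl l (le_trans hl.le hmj)] at this⟩
      simp only [hF, hφ, Function.comp_apply]
      by_cases hω : ω ∈ A m
      · rw [Set.indicator_of_mem hω, Set.indicator_of_mem (hmem.mp hω), hPj]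
      · rw [Set.indicator_of_notMem hω,
          Set.indicator_of_notMem (fun h => hω (hmem.mpr h))]
    have hcomp2 : (fun ω => Real.exp (s * Z j ω))
        = (fun x : ℝ => Real.exp (s * x)) ∘ (Z j) := rfl
    rw [hcomp, hcomp2]
    exact (hindep j hjM).comp hφmeas hψmeas
  -- growth step
  have hstep : ∀ m j, m ≤ j → j < M →
      ∫ ω, F m j ω ∂(ℙ : Measure Ω) ≤ ∫ ω, F m (j + 1) ω ∂(ℙ : Measure Ω) := by
    intro m j hmj hjM
    have h1 : ∫ ω, F m j ω ∂(ℙ : Measure Ω) ≤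
        (∫ ω, F m j ω ∂(ℙ : Measure Ω)) * ∫ ω, Real.exp (s * Z j ω) ∂(ℙ : Measure Ω) := by
      nlinarith [hFnonneg m j, hmgf_lo j]
    have h2 : (∫ ω, F m j ω ∂(ℙ : Measure Ω)) * ∫ ω, Real.exp (s * Z j ω) ∂(ℙ : Measure Ω)
        = ∫ ω, F m j ω * Real.exp (s * Z j ω) ∂(ℙ : Measure Ω) :=
      ((hkey_indep m j hmj hjM).integral_mul_eq_mul_integral (hFint m j).aestronglyMeasurable (hexpZint j).aestronglyMeasurable).symm
    have h3 : (fun ω => F m j ω * Real.exp (s * Z j ω)) = F m (j + 1) := by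
      funext ω
      simp only [hF]
      by_cases hω : ω ∈ A m
      · rw [Set.indicator_of_mem hω, Set.indicator_of_mem hω, ← Real.exp_add]
        congr 1
        simp only [hP]
        rw [Finset.sum_range_succ]
        ring
      · rw [Set.indicator_of_notMem hω, Set.indicator_of_notMem hω, zero_mul]
    rw [h3] at h2
    linarith [h1, h2]
  -- growth from m to M
  have hgrow : ∀ m, m ≤ M →
      ∫ ω, F m m ω ∂(ℙ : Measure Ω) ≤ ∫ ω, F m M ω ∂(ℙ : Measure Ω) := by
    intro m hmM
    suffices h : ∀ j, m ≤ j → j ≤ M →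
        ∫ ω, F m m ω ∂(ℙ : Measure Ω) ≤ ∫ ω, F m j ω ∂(ℙ : Measure Ω) from h M hmM le_rfl
    intro j
    induction j with
    | zero => intro h0 _; exact le_of_eq (by rw [Nat.le_zero.mp h0])
    | succ j ih =>
      intro hmj hjM
      rcases Nat.lt_or_ge j m with hlt | hge
      · have : m = j + 1 := by omega
        exact le_of_eq (by rw [this])
      · exact le_trans (ih hge (by omega)) (hstep m j hge (by omega))
  -- base inequality on each A m
  have hbase : ∀ m, Real.exp (s * a) * (ℙ (A m)).toReal ≤ ∫ ω, F m m ω ∂(ℙ : Measure Ω) := by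
    intro m
    have h1 : ∫ ω, F m m ω ∂(ℙ : Measure Ω) = ∫ ω in A m, Real.exp (s * P m ω) ∂ℙ := by
      simp only [hF]; exact integral_indicator (hAmeas m)
    have h2 : ∫ ω in A m, Real.exp (s * a) ∂ℙ ≤ ∫ ω in A m, Real.exp (s * P m ω) ∂ℙ := by
      refine setIntegral_mono_on (integrableOn_const (measure_ne_top _ _))
        ((hexpPint m).integrableOn) (hAmeas m) ?_
      intro ω hω
      rw [hAmem] at hω
      exact Real.exp_le_exp.mpr (mul_le_mul_of_nonneg_left hω.1 hs)
    rw [h1]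
    refine le_trans (le_of_eq ?_) h2
    rw [setIntegral_const, smul_eq_mul, mul_comm]; rfl
  -- sum of indicators bounded by the full integral
  have hsum : ∑ m ∈ Finset.range (M + 1), ∫ ω, F m M ω ∂(ℙ : Measure Ω)
      ≤ ∫ ω, Real.exp (s * P M ω) ∂(ℙ : Measure Ω) := by
    rw [← integral_finset_sum _ (fun m _ => hFint m M)]
    refine integral_mono (integrable_finset_sum _ (fun m _ => hFint m M)) (hexpPint M) ?_
    intro ω
    dsimp only
    by_cases hω : ∃ m₀ ∈ Finset.range (M + 1), ω ∈ A m₀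
    · obtain ⟨m₀, hm₀, hωm₀⟩ := hω
      have heq : ∑ m ∈ Finset.range (M + 1), F m M ω = Real.exp (s * P M ω) := by
        rw [Finset.sum_eq_single_of_mem m₀ hm₀]
        · simp only [hF]; rw [Set.indicator_of_mem hωm₀]
        · intro b _ hb
          simp only [hF]
          rw [Set.indicator_of_notMem]
          intro hωb
          rcases Nat.lt_or_ge b m₀ with h | h
          · exact (Set.disjoint_left.mp (hdisj b m₀ h)) hωb hωm₀
          · have hlt : m₀ < b := lt_of_le_of_ne h (Ne.symm hb)
            exact (Set.disjoint_left.mp (hdisj m₀ b hlt)) hωm₀ hωb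
      exact le_of_eq heq
    · push_neg at hω
      have heq : ∑ m ∈ Finset.range (M + 1), F m M ω = 0 := by
        refine Finset.sum_eq_zero fun m hm => ?_
        simp only [hF]
        exact Set.indicator_of_notMem (hω m hm) _
      rw [heq]
      positivity
  -- bound on the full exponential integral
  have hPM : ∫ ω, Real.exp (s * P M ω) ∂(ℙ : Measure Ω) ≤ Real.exp ((M : ℝ) * v) := by
    suffices h : ∀ j, j ≤ M →
        ∫ ω, Real.exp (s * P j ω) ∂(ℙ : Measure Ω) ≤ Real.exp ((j : ℝ) * v) from h M le_rfl
    intro j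
    induction j with
    | zero =>
      intro _
      have : ∀ ω : Ω, Real.exp (s * P 0 ω) = 1 := by
        intro ω; simp [hP]
      simp only [this]
      simp
    | succ j ih =>
      intro hjM
      have hj : j < M := by omega
      -- independence of exp(s P j) and exp(s Z j)
      have hindep2 : IndepFun (fun ω => Real.exp (s * P j ω))
          (fun ω => Real.exp (s * Z j ω)) ℙ := by
        have hsum_meas : Measurable (fun w : Fin j → ℝ => ∑ i, w i) :=
          Finset.measurable_sum _ (fun i _ => measurable_pi_apply i)
        have hφmeas : Measurable (fun w : Fin j → ℝ => Real.exp (s * ∑ i, w i)) :=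
          ((hsum_meas.const_mul s)).exp
        have hψmeas : Measurable (fun x : ℝ => Real.exp (s * x)) :=
          (measurable_id.const_mul s).exp
        have hcomp : (fun ω => Real.exp (s * P j ω))
            = (fun w : Fin j → ℝ => Real.exp (s * ∑ i, w i)) ∘ (fun ω (i : Fin j) => Z i ω) := by
          funext ω
          simp only [Function.comp_apply, hP]
          rw [Fin.sum_univ_eq_sum_range (fun l => Z l ω) j]
        rw [hcomp]
        exact (hindep j hj).comp hφmeas hψmeas
      have heq : ∫ ω, Real.exp (s * P (j + 1) ω) ∂(ℙ : Measure Ω)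
          = (∫ ω, Real.exp (s * P j ω) ∂(ℙ : Measure Ω)) *
            ∫ ω, Real.exp (s * Z j ω) ∂(ℙ : Measure Ω) := by
        rw [← hindep2.integral_mul_eq_mul_integral (hexpPint j).aestronglyMeasurable (hexpZint j).aestronglyMeasurable]
        congr 1
        funext ω
        simp only [Pi.mul_apply]
        rw [← Real.exp_add]
        congr 1
        simp only [hP]
        rw [Finset.sum_range_succ]
        ring
      rw [heq]
      have h1 : (0 : ℝ) ≤ ∫ ω, Real.exp (s * P j ω) ∂(ℙ : Measure Ω) :=
        integral_nonneg fun ω => (Real.exp_pos _).le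
      calc (∫ ω, Real.exp (s * P j ω) ∂(ℙ : Measure Ω)) *
            ∫ ω, Real.exp (s * Z j ω) ∂(ℙ : Measure Ω)
          ≤ Real.exp ((j : ℝ) * v) * Real.exp v := by
            refine mul_le_mul (ih (by omega)) (hmgf_hi j) ?_ (Real.exp_nonneg _)
            exact integral_nonneg fun ω => (Real.exp_pos _).le
        _ = Real.exp (((j : ℕ) + 1 : ℝ) * v) := by rw [← Real.exp_add]; ring_nf
        _ = Real.exp (((j + 1 : ℕ) : ℝ) * v) := by push_cast; ring_nf
  -- final assembly
  have hreal : ∑ m ∈ Finset.range (M + 1), (ℙ (A m)).toReal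
      ≤ Real.exp ((M : ℝ) * v - s * a) := by
    have h1 : ∀ m ∈ Finset.range (M + 1), (ℙ (A m)).toReal
        ≤ Real.exp (-(s * a)) * ∫ ω, F m M ω ∂(ℙ : Measure Ω) := by
      intro m hm
      have h2 := le_trans (hbase m) (hgrow m (by
        rw [Finset.mem_range] at hm; omega))
      have h3 : Real.exp (s * a) * (ℙ (A m)).toReal ≤ ∫ ω, F m M ω ∂(ℙ : Measure Ω) := h2
      have h4 := mul_le_mul_of_nonneg_left h3 (Real.exp_nonneg (-(s * a)))
      rw [← mul_assoc, ← Real.exp_add, neg_add_cancel, Real.exp_zero, one_mul] at h4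
      exact h4
    calc ∑ m ∈ Finset.range (M + 1), (ℙ (A m)).toReal
        ≤ ∑ m ∈ Finset.range (M + 1),
            Real.exp (-(s * a)) * ∫ ω, F m M ω ∂(ℙ : Measure Ω) := Finset.sum_le_sum h1
      _ = Real.exp (-(s * a)) * ∑ m ∈ Finset.range (M + 1),
            ∫ ω, F m M ω ∂(ℙ : Measure Ω) := by rw [Finset.mul_sum]
      _ ≤ Real.exp (-(s * a)) * Real.exp ((M : ℝ) * v) := by
          refine mul_le_mul_of_nonneg_left (le_trans hsum hPM) (Real.exp_nonneg _)
      _ = Real.exp ((M : ℝ) * v - s * a) := by rw [← Real.exp_add]; ring_nf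
  calc ℙ {ω | ∃ m, m ≤ M ∧ a ≤ ∑ l ∈ Finset.range m, Z l ω}
      ≤ ℙ (⋃ m ∈ Finset.range (M + 1), A m) := measure_mono hcover
    _ ≤ ∑ m ∈ Finset.range (M + 1), ℙ (A m) := measure_biUnion_finset_le _ _
    _ = ∑ m ∈ Finset.range (M + 1), ENNReal.ofReal ((ℙ (A m)).toReal) := by
        refine Finset.sum_congr rfl fun m _ => ?_
        rw [ENNReal.ofReal_toReal (measure_ne_top _ _)]
    _ = ENNReal.ofReal (∑ m ∈ Finset.range (M + 1), (ℙ (A m)).toReal) := by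
        rw [ENNReal.ofReal_sum_of_nonneg fun m _ => ENNReal.toReal_nonneg]
    _ ≤ ENNReal.ofReal (Real.exp ((M : ℝ) * v - s * a)) := ENNReal.ofReal_le_ofReal hreal

end MaximalChernoff

/-- PAC guarantee for the line graph with `n + 1` nodes (hence `n` edges), each
edge sampled the same number `T` of times. If `T ≥ (4(n+1)/ε̃²)·log(2/δ)` with
`ε̃ = max ε u`, the node maximizing the empirical prefix sums is `ε`-optimal with
probability at least `1 − δ`; consequently, the total number of edge pulls
`n·T` is at most `(4(n+1)²/ε̃²)·log(2/δ)` whenever `T` is taken at (or below)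
the threshold. -/
theorem line_graph_PAC_uniform
    {Ω : Type*} [MeasureSpace Ω] [IsProbabilityMeasure (ℙ : Measure Ω)]
    (n : ℕ) (hn : 1 ≤ n) (r : Fin (n + 1) → ℝ) (rstar u : ℝ)
    (hstar : rstar = Finset.univ.sup' Finset.univ_nonempty r)
    (hbelow : (Finset.univ.filter (fun j => r j < rstar)).Nonempty)
    (hu : u = (Finset.univ.filter (fun j => r j < rstar)).inf' hbelow
      (fun j => rstar - r j))
    (T : ℕ) (hT : 0 < T)
    (X : Fin n → Fin T → Ω → ℝ)
    (hmeas : ∀ i t, Measurable (X i t))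
    (hindep : iIndepFun
      (fun p : Fin n × Fin T => X p.1 p.2) ℙ)
    (hint : ∀ i t, Integrable (X i t) ℙ)
    (hmean : ∀ i t, ∫ ω, X i t ω ∂ℙ = r i.succ - r i.castSucc)
    (hbound : ∀ i t, ∀ᵐ ω ∂ℙ, X i t ω ∈ Set.Icc (-1 : ℝ) 1)
    (ε δ : ℝ) (hε : 0 < ε) (hδ : 0 < δ) (hδ1 : δ < 1)
    (hsample : (T : ℝ) ≥ (4 * (n + 1) / (max ε u) ^ 2) * Real.log (2 / δ))
    (Shat : Fin (n + 1) → Ω → ℝ)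
    (hS : ∀ j ω, Shat j ω =
      ∑ i ∈ Finset.univ.filter (fun i : Fin n => (i : ℕ) < (j : ℕ)),
        (1 / (T : ℝ)) * ∑ t : Fin T, X i t ω)
    (k : Ω → Fin (n + 1)) (hk : ∀ ω j, Shat j ω ≤ Shat (k ω) ω) :
    1 - ENNReal.ofReal δ ≤ ℙ {ω | rstar - ε ≤ r (k ω)} ∧
      ∀ T' : ℝ, T' ≤ (4 * (n + 1) / (max ε u) ^ 2) * Real.log (2 / δ) →
        (n : ℝ) * T' ≤ (4 * (n + 1) ^ 2 / (max ε u) ^ 2) * Real.log (2 / δ) := by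
  classical
  have hG : 0 < max ε u := lt_of_lt_of_le hε (le_max_left _ _)
  have hL : 0 < Real.log (2 / δ) := Real.log_pos (by rw [lt_div_iff₀ hδ]; linarith)
  have hn1 : (1 : ℝ) ≤ (n : ℝ) := by exact_mod_cast hn
  constructor
  swap
  · -- the easy pull-count bound
    intro T' hT'
    have h1 : (n : ℝ) * T' ≤ (n : ℝ) * ((4 * (n + 1) / (max ε u) ^ 2) * Real.log (2 / δ)) :=
      mul_le_mul_of_nonneg_left hT' (by positivity)
    refine h1.trans ?_
    have h2 : (n:ℝ) * ((4 * (n + 1) / (max ε u) ^ 2) * Real.log (2 / δ))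
        = (4 * ((n:ℝ) * ((n:ℝ) + 1)) / (max ε u) ^ 2) * Real.log (2 / δ) := by ring
    rw [h2]
    apply mul_le_mul_of_nonneg_right _ hL.le
    refine (div_le_div_iff_of_pos_right (by positivity)).mpr (by nlinarith)

  -- main probabilistic bound
  have hT0 : (0:ℝ) < (T:ℝ) := by exact_mod_cast hT
  have hcenter : ∀ i : Fin n, |r i.succ - r i.castSucc| ≤ 1 := by
    intro i
    rw [← hmean i ⟨0, hT⟩]
    have h1 : |∫ ω, X i ⟨0, hT⟩ ω ∂(ℙ : Measure Ω)| ≤ ∫ ω, |X i ⟨0, hT⟩ ω| ∂(ℙ : Measure Ω) := by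
      have := norm_integral_le_integral_norm (μ := (ℙ : Measure Ω)) (fun ω => X i ⟨0, hT⟩ ω)
      simpa [Real.norm_eq_abs] using this
    refine h1.trans ?_
    have h2 : ∫ ω, |X i ⟨0, hT⟩ ω| ∂(ℙ : Measure Ω) ≤ ∫ ω, (1:ℝ) ∂(ℙ : Measure Ω) := by
      refine integral_mono_ae (hint i _).abs (integrable_const 1) ?_
      filter_upwards [hbound i ⟨0, hT⟩] with ω h
      exact abs_le.mpr ⟨h.1, h.2⟩
    simpa using h2
  set gN : ℕ → ℝ := fun l => if h : l < n then r ⟨l+1, by omega⟩ - r ⟨l, by omega⟩ else 0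
    with hgNdef
  have hgN_eq : ∀ i : Fin n, gN ↑i = r i.succ - r i.castSucc := by
    intro i
    simp only [hgNdef]
    rw [dif_pos i.isLt]
    rfl
  have hgN_bd : ∀ l, |gN l| ≤ 1 := by
    intro l
    by_cases h : l < n
    · have h2 := hcenter ⟨l, h⟩
      rw [← hgN_eq ⟨l, h⟩] at h2
      exact h2
    · simp only [hgNdef]
      rw [dif_neg h]
      norm_num
  have htel : ∀ m (hm : m ≤ n),
      ∑ l ∈ Finset.range m, gN l = r ⟨m, by omega⟩ - r ⟨0, by omega⟩ := by
    intro m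
    induction m with
    | zero => intro _; simp
    | succ m ih =>
      intro hm
      rw [Finset.sum_range_succ, ih (by omega)]
      have h1 : gN m = r ⟨m+1, by omega⟩ - r ⟨m, by omega⟩ := by
        simp only [hgNdef]; rw [dif_pos (by omega : m < n)]
      rw [h1]; ring
  obtain ⟨istar, -, histar⟩ := Finset.exists_mem_eq_sup' Finset.univ_nonempty r
  have hrs : rstar = r istar := hstar.trans histar
  have hiSn : (istar : ℕ) ≤ n := by omega
  have hrange : ∀ p q : Fin (n+1), r p - r q ≤ (n:ℝ) := by
    have habs : ∀ (a b : ℕ) (ha : a ≤ n) (hb : b ≤ a),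
        |r ⟨a, by omega⟩ - r ⟨b, by omega⟩| ≤ (n : ℝ) := by
      intro a b ha hb
      have h1 : r ⟨a, by omega⟩ - r ⟨b, by omega⟩ = ∑ l ∈ Finset.Ico b a, gN l := by
        rw [Finset.sum_Ico_eq_sub _ hb, htel a ha, htel b (by omega)]
        ring
      rw [h1]
      calc |∑ l ∈ Finset.Ico b a, gN l| ≤ ∑ l ∈ Finset.Ico b a, |gN l| :=
            Finset.abs_sum_le_sum_abs _ _
        _ ≤ ∑ _l ∈ Finset.Ico b a, (1:ℝ) := Finset.sum_le_sum fun l _ => hgN_bd l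
        _ = ((a - b : ℕ) : ℝ) := by simp [Nat.card_Ico]
        _ ≤ (n : ℝ) := by
            have : a - b ≤ n := by omega
            exact_mod_cast this
    intro p q
    rcases le_total (q:ℕ) (p:ℕ) with h | h
    · have h2 : |r p - r q| ≤ (n:ℝ) := habs ↑p ↑q (by omega) h
      exact le_trans (le_abs_self _) h2
    · have h2 : |r q - r p| ≤ (n:ℝ) := habs ↑q ↑p (by omega) h
      rw [abs_sub_comm] at h2
      exact le_trans (le_abs_self _) h2
  have hun : u ≤ (n:ℝ) := by
    obtain ⟨j0, hj0⟩ := hbelow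
    have h1 : u ≤ rstar - r j0 := by rw [hu]; exact Finset.inf'_le _ hj0
    refine h1.trans ?_
    rw [hrs]; exact hrange istar j0
  by_cases htriv : (n:ℝ) + 1 < max ε u
  · have hεn : (n:ℝ) < ε := by
      rcases max_cases ε u with ⟨h1, _⟩ | ⟨h1, _⟩
      · rw [h1] at htriv; linarith
      · rw [h1] at htriv; linarith
    have hset : {ω | rstar - ε ≤ r (k ω)} = Set.univ := by
      ext ω; simp only [Set.mem_setOf_eq, Set.mem_univ, iff_true]
      have h3 := hrange istar (k ω)
      rw [hrs]
      linarith
    rw [hset, measure_univ]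
    exact tsub_le_self
  push_neg at htriv
  set G : ℝ := max ε u with hGdef
  set L : ℝ := Real.log (2 / δ) with hLdef
  set σ : ℝ := min (2 * G / (3 * (n:ℝ))) (1/2) with hσdef
  have hσpos : 0 < σ := lt_min (by positivity) one_half_pos
  have hσhalf : σ ≤ 1/2 := min_le_right _ _
  have hTG2 : 4 * ((n:ℝ)+1) * L ≤ (T:ℝ) * G^2 := by
    have h1 : 4*((n:ℝ)+1)/G^2*L ≤ (T:ℝ) := hsample
    have h2 := mul_le_mul_of_nonneg_right h1 (le_of_lt (by positivity : (0:ℝ) < G^2))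
    calc 4*((n:ℝ)+1)*L = (4*((n:ℝ)+1)/G^2*L)*G^2 := by field_simp
      _ ≤ (T:ℝ)*G^2 := h2
  have harith : ∀ N : ℕ, N ≤ n →
      Real.exp ((((N*T : ℕ)):ℝ) * (3/4*σ^2) - σ*(G*(T:ℝ))) ≤ δ/2 := by
    intro N hN
    have hNr : (N:ℝ) ≤ (n:ℝ) := by exact_mod_cast hN
    have hcast : (((N*T:ℕ)):ℝ) = (N:ℝ)*(T:ℝ) := by push_cast; ring
    rw [hcast]
    have hδ2 : (0:ℝ) < δ/2 := by linarith
    rw [← Real.exp_log hδ2]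
    apply Real.exp_le_exp.mpr
    have hlog : Real.log (δ/2) = -L := by
      rw [hLdef, ← Real.log_inv]
      congr 1
      rw [inv_div]
    rw [hlog]
    rw [neg_eq_neg_one_mul, ← sub_nonneg]
    have hmain : L ≤ σ*(G*(T:ℝ)) - (N:ℝ)*(T:ℝ)*(3/4*σ^2) := by
      rcases le_or_gt (2*G/(3*(n:ℝ))) (1/2) with hc | hc
      · have hσeq : σ = 2*G/(3*(n:ℝ)) := min_eq_left hc
        have hGeq : G = σ*(3*(n:ℝ))/2 := by rw [hσeq]; field_simp
        rw [hGeq] at hTG2 ⊢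
        nlinarith [hTG2, hL, hn1, hT0.le, sq_nonneg σ,
          mul_nonneg (mul_nonneg (sq_nonneg σ) hT0.le) (sub_nonneg.mpr hNr),
          mul_pos hL (lt_of_lt_of_le zero_lt_one hn1)]
      · have hσeq : σ = 1/2 := min_eq_right hc.le
        have h3n : 3*(n:ℝ) < 4*G := by
          have h4 := (lt_div_iff₀ (by positivity : (0:ℝ) < 3*(n:ℝ))).mp hc
          linarith
        rw [hσeq]
        nlinarith [hTG2, htriv, hL.le, hT0.le, mul_pos hG hT0, hG, hNr,
          mul_nonneg hT0.le (sub_nonneg.mpr hNr),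
          mul_le_mul_of_nonneg_left htriv (by positivity : (0:ℝ) ≤ 4*L),
          mul_le_mul_of_nonneg_right h3n.le hT0.le,
          mul_pos hG hL]
    linarith
  -- centered per-sample variables, indexed by naturals
  set E0 : ℕ → ℕ → Fin n × Fin T := fun i t =>
    (⟨min i (n-1), by omega⟩, ⟨t % T, Nat.mod_lt _ hT⟩) with hE0def
  set cN : ℕ → ℝ := fun i => gN (min i (n-1)) with hcNdef
  set CN : ℕ → ℕ → Ω → ℝ := fun i t ω => X (E0 i t).1 (E0 i t).2 ω - cN i with hCNdef
  have hcN_center : ∀ i t, cN i = r (E0 i t).1.succ - r (E0 i t).1.castSucc := by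
    intro i t
    rw [← hgN_eq (E0 i t).1]
  have hcN_bd : ∀ i, |cN i| ≤ 1 := fun i => hgN_bd _
  have hCN_meas : ∀ i t, Measurable (CN i t) := fun i t => (hmeas _ _).sub measurable_const
  have hCN_bd : ∀ i t, ∀ᵐ ω ∂(ℙ : Measure Ω), |CN i t ω| ≤ 2 := by
    intro i t
    filter_upwards [hbound (E0 i t).1 (E0 i t).2] with ω h
    have h1 : |X (E0 i t).1 (E0 i t).2 ω| ≤ 1 := abs_le.mpr ⟨h.1, h.2⟩
    have h2 : |cN i| ≤ 1 := hcN_bd i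
    calc |CN i t ω| = |X (E0 i t).1 (E0 i t).2 ω + -(cN i)| := by
          simp only [hCNdef, sub_eq_add_neg]
      _ ≤ |X (E0 i t).1 (E0 i t).2 ω| + |-(cN i)| := abs_add_le _ _
      _ = |X (E0 i t).1 (E0 i t).2 ω| + |cN i| := by rw [abs_neg]
      _ ≤ 2 := by linarith
  have hCN_int : ∀ i t, Integrable (CN i t) (ℙ : Measure Ω) :=
    fun i t => (hint _ _).sub (integrable_const _)
  have hCN_mean0 : ∀ i t, ∫ ω, CN i t ω ∂(ℙ:Measure Ω) = 0 := by
    intro i t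
    have h0 : CN i t = fun ω => X (E0 i t).1 (E0 i t).2 ω - cN i := rfl
    rw [h0, integral_sub (hint _ _) (integrable_const _), hmean, integral_const,
      probReal_univ, smul_eq_mul, one_mul, ← hcN_center i t, sub_self]
  have hCN_sq : ∀ i t, ∫ ω, (CN i t ω)^2 ∂(ℙ:Measure Ω) ≤ 1 := by
    intro i t
    refine centered_sq (X (E0 i t).1 (E0 i t).2) (hmeas _ _) ?_ (hint _ _) (cN i) ?_
    · filter_upwards [hbound (E0 i t).1 (E0 i t).2] with ω h; exact abs_le.mpr ⟨h.1, h.2⟩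
    · rw [hmean]; exact hcN_center i t
  have hσabs : |σ| ≤ 1/2 := by rw [abs_of_pos hσpos]; exact hσhalf
  have hCN_mgf : ∀ i t, 1 ≤ ∫ ω, Real.exp (σ * CN i t ω) ∂(ℙ:Measure Ω) ∧
      ∫ ω, Real.exp (σ * CN i t ω) ∂(ℙ:Measure Ω) ≤ Real.exp (3/4*σ^2) :=
    fun i t => sample_mgf (CN i t) (hCN_meas i t) (hCN_bd i t) (hCN_int i t)
      (hCN_mean0 i t) (hCN_sq i t) σ hσabs
  have hCNneg_mgf : ∀ i t, 1 ≤ ∫ ω, Real.exp (σ * (-(CN i t ω))) ∂(ℙ:Measure Ω) ∧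
      ∫ ω, Real.exp (σ * (-(CN i t ω))) ∂(ℙ:Measure Ω) ≤ Real.exp (3/4*σ^2) := by
    intro i t
    refine sample_mgf _ (hCN_meas i t).neg ?_ (hCN_int i t).neg ?_ ?_ σ hσabs
    · filter_upwards [hCN_bd i t] with ω h
      rw [Pi.neg_apply, abs_neg]; exact h
    · rw [integral_neg', hCN_mean0, neg_zero]
    · have h0 : (fun ω => (-(CN i t ω))^2) = fun ω => (CN i t ω)^2 := by funext ω; ring
      simp only [Pi.neg_apply]; rw [h0]; exact hCN_sq i t
  -- the two one-sided processes
  set ZR : ℕ → Ω → ℝ := fun l ω => CN ((istar:ℕ) + l / T) (l % T) ω with hZRdef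
  set ZL : ℕ → Ω → ℝ := fun l ω => -(CN ((istar:ℕ) - 1 - l / T) (l % T) ω) with hZLdef
  set NR : ℕ := n - (istar:ℕ) with hNRdef
  set BR : Set Ω := {ω | ∃ m, m ≤ NR*T ∧ G*(T:ℝ) ≤ ∑ l ∈ Finset.range m, ZR l ω} with hBRdef
  set BL : Set Ω := {ω | ∃ m, m ≤ (istar:ℕ)*T ∧ G*(T:ℝ) ≤ ∑ l ∈ Finset.range m, ZL l ω}
    with hBLdef
  have hZRmeas : ∀ l, Measurable (ZR l) := fun l => hCN_meas _ _
  have hZLmeas : ∀ l, Measurable (ZL l) := fun l => (hCN_meas _ _).neg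
  have hindR : ∀ j, j < NR*T → IndepFun (fun ω (i : Fin j) => ZR ↑i ω) (ZR j)
      (ℙ : Measure Ω) := by
    intro j hj
    have h := indep_prefix (fun p : Fin n × Fin T => X p.1 p.2) hindep (fun p => hmeas p.1 p.2)
      (fun l => E0 ((istar:ℕ) + l / T) (l % T)) (fun l x => x - cN ((istar:ℕ) + l / T))
      (fun l => measurable_id.sub measurable_const) j ?_
    · exact h
    · intro l1 l2 h1 h2 heq
      have hl1 : l1 < NR*T := lt_of_le_of_lt h1 hj
      have hl2 : l2 < NR*T := lt_of_le_of_lt h2 hj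
      have hd1 : l1 / T < NR := (Nat.div_lt_iff_lt_mul hT).mpr hl1
      have hd2 : l2 / T < NR := (Nat.div_lt_iff_lt_mul hT).mpr hl2
      simp only [hE0def, Prod.mk.injEq, Fin.mk.injEq] at heq
      obtain ⟨hfst, hsnd⟩ := heq
      have hm1T : l1 % T < T := Nat.mod_lt _ hT
      have hm2T : l2 % T < T := Nat.mod_lt _ hT
      rw [Nat.mod_eq_of_lt hm1T, Nat.mod_eq_of_lt hm2T] at hsnd
      rw [min_eq_left (by omega), min_eq_left (by omega)] at hfst
      have hd : l1 / T = l2 / T := by omega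
      have e1 : T * (l1 / T) + l1 % T = l1 := Nat.div_add_mod l1 T
      have e2 : T * (l2 / T) + l2 % T = l2 := Nat.div_add_mod l2 T
      rw [← e1, ← e2, hd, hsnd]
  have hindL : ∀ j, j < (istar:ℕ)*T → IndepFun (fun ω (i : Fin j) => ZL ↑i ω) (ZL j)
      (ℙ : Measure Ω) := by
    intro j hj
    have h := indep_prefix (fun p : Fin n × Fin T => X p.1 p.2) hindep (fun p => hmeas p.1 p.2)
      (fun l => E0 ((istar:ℕ) - 1 - l / T) (l % T))
      (fun l x => -(x - cN ((istar:ℕ) - 1 - l / T)))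
      (fun l => (measurable_id.sub measurable_const).neg) j ?_
    · exact h
    · intro l1 l2 h1 h2 heq
      have hl1 : l1 < (istar:ℕ)*T := lt_of_le_of_lt h1 hj
      have hl2 : l2 < (istar:ℕ)*T := lt_of_le_of_lt h2 hj
      have hd1 : l1 / T < (istar:ℕ) := (Nat.div_lt_iff_lt_mul hT).mpr hl1
      have hd2 : l2 / T < (istar:ℕ) := (Nat.div_lt_iff_lt_mul hT).mpr hl2
      simp only [hE0def, Prod.mk.injEq, Fin.mk.injEq] at heq
      obtain ⟨hfst, hsnd⟩ := heq
      have hm1T : l1 % T < T := Nat.mod_lt _ hT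
      have hm2T : l2 % T < T := Nat.mod_lt _ hT
      rw [Nat.mod_eq_of_lt hm1T, Nat.mod_eq_of_lt hm2T] at hsnd
      set dd1 := l1 / T with hdd1def
      set dd2 := l2 / T with hdd2def
      have e1 : T * dd1 + l1 % T = l1 := Nat.div_add_mod l1 T
      have e2 : T * dd2 + l2 % T = l2 := Nat.div_add_mod l2 T
      clear_value dd1 dd2
      have hle1 : (istar:ℕ) - 1 - dd1 ≤ n - 1 := by omega
      have hle2 : (istar:ℕ) - 1 - dd2 ≤ n - 1 := by omega
      rw [min_eq_left hle1, min_eq_left hle2] at hfst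
      have hd : dd1 = dd2 := by omega
      rw [← e1, ← e2, hd, hsnd]
  have hPBR : ℙ BR ≤ ENNReal.ofReal (δ/2) := by
    have h1 := maximal_chernoff (Ω := Ω) (NR*T) ZR σ (G*(T:ℝ)) (3/4*σ^2) hσpos.le
      (by positivity) hZRmeas (fun l => hCN_bd _ _) hindR
      (fun l => (hCN_mgf _ _).1) (fun l => (hCN_mgf _ _).2)
    exact le_trans h1 (ENNReal.ofReal_le_ofReal (harith NR (by omega)))
  have hPBL : ℙ BL ≤ ENNReal.ofReal (δ/2) := by
    have h1 := maximal_chernoff (Ω := Ω) ((istar:ℕ)*T) ZL σ (G*(T:ℝ)) (3/4*σ^2) hσpos.le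
      (by positivity) hZLmeas (fun l => by filter_upwards [hCN_bd ((istar:ℕ) - 1 - l / T) (l % T)] with ω h; rw [hZLdef]; rw [abs_neg]; exact h) hindL
      (fun l => (hCNneg_mgf _ _).1) (fun l => (hCNneg_mgf _ _).2)
    exact le_trans h1 (ENNReal.ofReal_le_ofReal (harith (istar:ℕ) hiSn))
  have hBRmeas : MeasurableSet BR := by
    have h1 : BR = ⋃ (m : ℕ), ⋃ (_ : m ≤ NR*T),
        {ω | G*(T:ℝ) ≤ ∑ l ∈ Finset.range m, ZR l ω} := by
      ext ω
      simp only [hBRdef, Set.mem_setOf_eq, Set.mem_iUnion, exists_prop]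
    rw [h1]
    exact MeasurableSet.iUnion fun m => MeasurableSet.iUnion fun _ =>
      measurableSet_le measurable_const (Finset.measurable_sum _ fun l _ => hZRmeas l)
  have hBLmeas : MeasurableSet BL := by
    have h1 : BL = ⋃ (m : ℕ), ⋃ (_ : m ≤ (istar:ℕ)*T),
        {ω | G*(T:ℝ) ≤ ∑ l ∈ Finset.range m, ZL l ω} := by
      ext ω
      simp only [hBLdef, Set.mem_setOf_eq, Set.mem_iUnion, exists_prop]
    rw [h1]
    exact MeasurableSet.iUnion fun m => MeasurableSet.iUnion fun _ =>
      measurableSet_le measurable_const (Finset.measurable_sum _ fun l _ => hZLmeas l)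
  -- block sums and prefix identities
  have hCNval : ∀ (i : ℕ) (hi : i < n) (t : Fin T) (ω : Ω),
      CN i ↑t ω = X ⟨i, hi⟩ t ω - gN i := by
    intro i hi t ω
    have h1 : min i (n-1) = i := by omega
    have h2 : (↑t : ℕ) % T = ↑t := Nat.mod_eq_of_lt t.isLt
    simp only [hCNdef, hcNdef, hE0def, h1, h2]
  set EN : ℕ → Ω → ℝ := fun i ω =>
    if h : i < n then (1/(T:ℝ)) * ∑ t : Fin T, X ⟨i, h⟩ t ω else 0 with hENdef
  have hShat2 : ∀ (j : Fin (n+1)) (ω : Ω), Shat j ω = ∑ i ∈ Finset.range ↑j, EN i ω := by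
    intro j ω
    rw [hS j ω, ← fin_filter_sum (show (j:ℕ) ≤ n by omega) (fun i => EN i ω)]
    refine Finset.sum_congr rfl fun i _ => ?_
    simp only [hENdef]
    rw [dif_pos i.isLt]
  have hblock : ∀ (i : ℕ) (hi : i < n) (ω : Ω),
      ∑ t ∈ Finset.range T, CN i t ω = (T:ℝ) * (EN i ω - gN i) := by
    intro i hi ω
    have h1 : ∑ t ∈ Finset.range T, CN i t ω = ∑ t : Fin T, CN i ↑t ω :=
      (Fin.sum_univ_eq_sum_range (fun t => CN i t ω) T).symm
    rw [h1, Finset.sum_congr rfl fun t _ => hCNval i hi t ω,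
      Finset.sum_sub_distrib, Finset.sum_const, Finset.card_univ, Fintype.card_fin]
    simp only [hENdef]
    rw [dif_pos hi, nsmul_eq_mul]
    have hTne : (T:ℝ) ≠ 0 := ne_of_gt hT0
    field_simp
  have hDR : ∀ (d : ℕ) (ω : Ω), d ≤ NR →
      ∑ l ∈ Finset.range (d*T), ZR l ω
        = (T:ℝ) * ∑ i ∈ Finset.Ico ((istar:ℕ)) ((istar:ℕ) + d), (EN i ω - gN i) := by
    intro d ω hd
    have h0 : ∑ l ∈ Finset.range (d*T), ZR l ω
        = ∑ i ∈ Finset.range d, ∑ t ∈ Finset.range T, CN ((istar:ℕ) + i) t ω :=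
      sum_flatten hT d (fun a b => CN ((istar:ℕ) + a) b ω)
    rw [h0, Finset.sum_Ico_eq_sum_range]
    have h1 : (istar:ℕ) + d - (istar:ℕ) = d := by omega
    rw [h1, Finset.mul_sum]
    refine Finset.sum_congr rfl fun i hi => ?_
    rw [Finset.mem_range] at hi
    exact hblock ((istar:ℕ) + i) (by omega) ω
  have hDL : ∀ (d : ℕ) (ω : Ω), d ≤ (istar:ℕ) →
      ∑ l ∈ Finset.range (d*T), ZL l ω
        = -((T:ℝ) * ∑ i ∈ Finset.Ico ((istar:ℕ) - d) ((istar:ℕ)), (EN i ω - gN i)) := by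
    intro d ω hd
    have h0 : ∑ l ∈ Finset.range (d*T), ZL l ω
        = ∑ i ∈ Finset.range d, ∑ t ∈ Finset.range T, -(CN ((istar:ℕ) - 1 - i) t ω) :=
      sum_flatten hT d (fun a b => -(CN ((istar:ℕ) - 1 - a) b ω))
    rw [h0]
    have h1 : ∀ i ∈ Finset.range d,
        ∑ t ∈ Finset.range T, -(CN ((istar:ℕ) - 1 - i) t ω)
          = -((T:ℝ) * (EN ((istar:ℕ) - 1 - i) ω - gN ((istar:ℕ) - 1 - i))) := by
      intro i hi
      rw [Finset.mem_range] at hi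
      rw [Finset.sum_neg_distrib, hblock ((istar:ℕ) - 1 - i) (by omega) ω]
    have h2 : ∑ i ∈ Finset.range d,
          -((T:ℝ) * (EN ((istar:ℕ) - 1 - i) ω - gN ((istar:ℕ) - 1 - i)))
        = ∑ i ∈ Finset.Ico ((istar:ℕ) - d) ((istar:ℕ)), -((T:ℝ) * (EN i ω - gN i)) :=
      sum_reflect_Ico hd (fun i' => -((T:ℝ) * (EN i' ω - gN i')))
    rw [Finset.sum_congr rfl h1, h2, Finset.mul_sum]
    rw [Finset.sum_neg_distrib]
  -- inclusion of the good event
  have hincl : (BR ∪ BL)ᶜ ⊆ {ω | rstar - ε ≤ r (k ω)} := by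
    intro ω hω
    rw [Set.mem_compl_iff, Set.mem_union] at hω
    push_neg at hω
    obtain ⟨hωR, hωL⟩ := hω
    have hkey : ∀ j : Fin (n+1), (Shat j ω - Shat istar ω) - (r j - r istar) < G := by
      intro j
      rcases lt_trichotomy ((j:ℕ)) ((istar:ℕ)) with hlt | heqq | hgt
      · by_contra hcon
        push_neg at hcon
        apply hωL
        rw [hBLdef, Set.mem_setOf_eq]
        refine ⟨((istar:ℕ) - ↑j)*T, Nat.mul_le_mul_right _ (by omega), ?_⟩
        have hDL' := hDL ((istar:ℕ) - ↑j) ω (by omega)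
        rw [show (istar:ℕ) - ((istar:ℕ) - ↑j) = (j:ℕ) from by omega] at hDL'
        rw [hDL']
        have hsum1 : ∑ i ∈ Finset.Ico (↑j) ((istar:ℕ)), (EN i ω - gN i)
            = (Shat istar ω - Shat j ω) - (r istar - r j) := by
          have e1 : Shat istar ω = ∑ i ∈ Finset.range ((istar:ℕ)), EN i ω := hShat2 istar ω
          have e2 : Shat j ω = ∑ i ∈ Finset.range (↑j), EN i ω := hShat2 j ω
          have e3 : r istar - r ⟨0, by omega⟩ = ∑ l ∈ Finset.range ((istar:ℕ)), gN l :=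
            (htel ((istar:ℕ)) hiSn).symm
          have e4 : r j - r ⟨0, by omega⟩ = ∑ l ∈ Finset.range (↑j), gN l :=
            (htel (↑j) (by omega)).symm
          rw [Finset.sum_sub_distrib,
            Finset.sum_Ico_eq_sub (fun i => EN i ω) (le_of_lt hlt),
            Finset.sum_Ico_eq_sub gN (le_of_lt hlt), ← e1, ← e2]
          linarith [e3, e4]
        rw [hsum1]
        nlinarith [mul_le_mul_of_nonneg_left hcon hT0.le]
      · have hje : j = istar := Fin.ext heqq
        rw [hje]
        simpa using hG
      · by_contra hcon
        push_neg at hcon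
        apply hωR
        rw [hBRdef, Set.mem_setOf_eq]
        refine ⟨((j:ℕ) - (istar:ℕ))*T, Nat.mul_le_mul_right _ (by omega), ?_⟩
        have hDR' := hDR ((j:ℕ) - (istar:ℕ)) ω (by omega)
        rw [show (istar:ℕ) + ((j:ℕ) - (istar:ℕ)) = (j:ℕ) from by omega] at hDR'
        rw [hDR']
        have hsum1 : ∑ i ∈ Finset.Ico ((istar:ℕ)) (↑j), (EN i ω - gN i)
            = (Shat j ω - Shat istar ω) - (r j - r istar) := by
          have e1 : Shat istar ω = ∑ i ∈ Finset.range ((istar:ℕ)), EN i ω := hShat2 istar ω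
          have e2 : Shat j ω = ∑ i ∈ Finset.range (↑j), EN i ω := hShat2 j ω
          have e3 : r istar - r ⟨0, by omega⟩ = ∑ l ∈ Finset.range ((istar:ℕ)), gN l :=
            (htel ((istar:ℕ)) hiSn).symm
          have e4 : r j - r ⟨0, by omega⟩ = ∑ l ∈ Finset.range (↑j), gN l :=
            (htel (↑j) (by omega)).symm
          rw [Finset.sum_sub_distrib,
            Finset.sum_Ico_eq_sub (fun i => EN i ω) (le_of_lt hgt),
            Finset.sum_Ico_eq_sub gN (le_of_lt hgt), ← e1, ← e2]
          linarith [e3, e4]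
        rw [hsum1]
        nlinarith [mul_le_mul_of_nonneg_left hcon hT0.le]
    have h1 := hk ω istar
    have h2 := hkey (k ω)
    rw [Set.mem_setOf_eq]
    have h3 : rstar - r (k ω) < G := by rw [hrs]; linarith
    by_cases hlt : r (k ω) < rstar
    · have hmem : k ω ∈ Finset.univ.filter (fun j => r j < rstar) :=
        Finset.mem_filter.mpr ⟨Finset.mem_univ _, hlt⟩
      have hule : u ≤ rstar - r (k ω) := by rw [hu]; exact Finset.inf'_le _ hmem
      rcases max_cases ε u with ⟨ha, _⟩ | ⟨ha, _⟩
      · linarith [h3, ha, hGdef]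
      · exfalso; linarith [hule, h3, ha, hGdef]
    · push_neg at hlt
      linarith
  have hPbad : ℙ (BR ∪ BL) ≤ ENNReal.ofReal δ := by
    calc ℙ (BR ∪ BL) ≤ ℙ BR + ℙ BL := measure_union_le _ _
      _ ≤ ENNReal.ofReal (δ/2) + ENNReal.ofReal (δ/2) := add_le_add hPBR hPBL
      _ = ENNReal.ofReal δ := by
          rw [← ENNReal.ofReal_add (by linarith) (by linarith)]
          norm_num
  calc 1 - ENNReal.ofReal δ ≤ 1 - ℙ (BR ∪ BL) := tsub_le_tsub_left hPbad 1
    _ = ℙ ((BR ∪ BL)ᶜ) := (prob_compl_eq_one_sub (hBRmeas.union hBLmeas)).symm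
    _ ≤ ℙ {ω | rstar - ε ≤ r (k ω)} := measure_mono hincl
end

section
/- Consider the line graph setup with n nodes and edge samples bounded in [−1,1] almost surely, with per-edge sample sizes T^1, …, T^{n−1}. Then for every ε > 0, P( ∃ i ∈ {1,…,n} : | Ŝ_i − (r_i − r_1) | > ε ) ≤ 2·exp( − ε² / Σ_{k=1}^{n−1} (4 / T^k) ). -/
open Real MeasureTheory ProbabilityTheory Finset

/-- Hoeffding-type scalar inequality (with slack constant `1/4`). -/
lemma bernoulli_mgf_bound {p q : ℝ} (hp : 0 ≤ p) (hq : 0 ≤ q) (hpq : p + q = 1) (t : ℝ) :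
    q + p * exp t ≤ exp (p * t + t ^ 2 / 4) := by
  have hpos : ∀ s : ℝ, 0 < q + p * exp s := by
    intro s
    rcases lt_or_eq_of_le hq with h | h
    · have : 0 ≤ p * exp s := mul_nonneg hp (exp_nonneg s)
      linarith
    · have hp1 : p = 1 := by linarith
      have := exp_pos s
      rw [← h, hp1]; simpa using this
  set g : ℝ → ℝ := fun s => p * s + s ^ 2 / 4 - Real.log (q + p * exp s) with hg
  set g' : ℝ → ℝ := fun s => p + s / 2 - p * exp s / (q + p * exp s) with hg'
  have hd : ∀ s, HasDerivAt g (g' s) s := by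
    intro s
    have h1 : HasDerivAt (fun s : ℝ => q + p * exp s) (p * exp s) s := by
      simpa using ((Real.hasDerivAt_exp s).const_mul p).const_add q
    have h2 : HasDerivAt (fun s => Real.log (q + p * exp s))
        (p * exp s / (q + p * exp s)) s := h1.log (hpos s).ne'
    have h3 : HasDerivAt (fun s : ℝ => p * s + s ^ 2 / 4) (p + s / 2) s := by
      have : HasDerivAt (fun s : ℝ => p * s) p s := by simpa using (hasDerivAt_id s).const_mul p
      have h4 : HasDerivAt (fun s : ℝ => s ^ 2 / 4) (s / 2) s := by
        have := (hasDerivAt_pow 2 s).div_const 4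
        simpa [pow_one] using this.congr_deriv (by ring)
      exact this.add h4
    exact h3.sub h2
  have hd2 : ∀ s, HasDerivAt g' (1 / 2 - p * q * exp s / (q + p * exp s) ^ 2) s := by
    intro s
    have h1 : HasDerivAt (fun s : ℝ => q + p * exp s) (p * exp s) s := by
      simpa using ((Real.hasDerivAt_exp s).const_mul p).const_add q
    have h2 : HasDerivAt (fun s : ℝ => p * exp s) (p * exp s) s :=
      (Real.hasDerivAt_exp s).const_mul p
    have h3 : HasDerivAt (fun s => p * exp s / (q + p * exp s))
        ((p * exp s * (q + p * exp s) - p * exp s * (p * exp s)) / (q + p * exp s) ^ 2) s :=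
      h2.div h1 (hpos s).ne'
    have h4 : HasDerivAt (fun s : ℝ => p + s / 2) (1 / 2) s := by
      simpa using ((hasDerivAt_id s).div_const 2).const_add p
    have := h4.sub h3
    refine this.congr_deriv ?_
    have := (hpos s).ne'
    ring
  have hmono : Monotone g' := by
    refine monotone_of_deriv_nonneg (fun s => (hd2 s).differentiableAt) ?_
    intro s
    rw [(hd2 s).deriv]
    have h1 : 0 < (q + p * exp s) ^ 2 := pow_pos (hpos s) 2
    rw [sub_nonneg, div_le_iff₀ h1]
    nlinarith [sq_nonneg (q - p * exp s), mul_nonneg (mul_nonneg hp hq) (exp_nonneg s),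
      exp_nonneg s]
  have hg'0 : g' 0 = 0 := by
    simp only [hg', Real.exp_zero, mul_one]
    have : q + p = 1 := by linarith
    rw [this]
    simp
  have hgdiff : ∀ s, DifferentiableAt ℝ g s := fun s => (hd s).differentiableAt
  have hderiv : ∀ s, deriv g s = g' s := fun s => (hd s).deriv
  have hgmono : MonotoneOn g (Set.Ici (0 : ℝ)) := by
    refine monotoneOn_of_deriv_nonneg (convex_Ici 0)
      (fun s _ => (hgdiff s).continuousAt.continuousWithinAt)
      (fun s _ => (hgdiff s).differentiableWithinAt) ?_
    intro s hs
    rw [hderiv s, ← hg'0]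
    exact hmono (le_of_lt (by simpa using hs))
  have hganti : AntitoneOn g (Set.Iic (0 : ℝ)) := by
    refine antitoneOn_of_deriv_nonpos (convex_Iic 0)
      (fun s _ => (hgdiff s).continuousAt.continuousWithinAt)
      (fun s _ => (hgdiff s).differentiableWithinAt) ?_
    intro s hs
    rw [hderiv s, ← hg'0]
    exact hmono (le_of_lt (by simpa using hs))
  have hg0 : g 0 = 0 := by
    simp only [hg, Real.exp_zero, mul_one]
    have : q + p = 1 := by linarith
    rw [this]
    simp
  have hgt : 0 ≤ g t := by
    rcases le_total 0 t with h | h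
    · rw [← hg0]; exact hgmono Set.self_mem_Ici h h
    · rw [← hg0]; exact hganti h Set.self_mem_Iic h
  have hlog : Real.log (q + p * exp t) ≤ p * t + t ^ 2 / 4 := by
    have := hgt
    simp only [hg] at this
    linarith
  calc q + p * exp t = exp (Real.log (q + p * exp t)) := (Real.exp_log (hpos t)).symm
    _ ≤ exp (p * t + t ^ 2 / 4) := Real.exp_le_exp.2 hlog

lemma integrable_exp_of_ae_bound {Ω : Type*} [MeasureSpace Ω]
    [IsProbabilityMeasure (ℙ : Measure Ω)]
    {g : Ω → ℝ} (hg : Measurable g) {C : ℝ} (hb : ∀ᵐ ω ∂ℙ, |g ω| ≤ C) :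
    Integrable (fun ω => exp (g ω)) ℙ := by
  refine Integrable.mono' (integrable_const (exp C)) hg.exp.aestronglyMeasurable ?_
  filter_upwards [hb] with ω h
  rw [Real.norm_eq_abs, abs_of_pos (exp_pos _)]
  exact exp_le_exp.2 (le_trans (le_abs_self _) h)

lemma mgf_bound_of_Icc {Ω : Type*} [MeasureSpace Ω] [IsProbabilityMeasure (ℙ : Measure Ω)]
    {X : Ω → ℝ} (hXm : Measurable X) (hXi : Integrable X ℙ)
    (hb : ∀ᵐ ω ∂ℙ, X ω ∈ Set.Icc (-1 : ℝ) 1) (s : ℝ) :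
    ∫ ω, exp (s * X ω) ∂ℙ ≤ exp (s * (∫ ω, X ω ∂ℙ) + s ^ 2) := by
  set m := ∫ ω, X ω ∂ℙ with hm
  have habs : ∀ᵐ ω ∂ℙ, |X ω| ≤ 1 := by
    filter_upwards [hb] with ω h
    exact abs_le.2 ⟨h.1, h.2⟩
  have hm1 : |m| ≤ 1 := by
    have e1 : |m| ≤ ∫ ω, |X ω| ∂ℙ := by
      simpa [Real.norm_eq_abs] using norm_integral_le_integral_norm (μ := ℙ) X
    have e2 : ∫ ω, |X ω| ∂ℙ ≤ ∫ (_ : Ω), (1 : ℝ) ∂ℙ :=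
      integral_mono_ae hXi.abs (integrable_const 1) habs
    have e3 : ∫ (_ : Ω), (1 : ℝ) ∂ℙ = 1 := by simp
    linarith
  have hintExp : Integrable (fun ω => exp (s * X ω)) ℙ := by
    refine integrable_exp_of_ae_bound (hXm.const_mul s) (C := |s|) ?_
    filter_upwards [habs] with ω h
    calc |s * X ω| = |s| * |X ω| := abs_mul s (X ω)
      _ ≤ |s| * 1 := by nlinarith [abs_nonneg s]
      _ = |s| := mul_one _
  have hpt : ∀ᵐ ω ∂ℙ, exp (s * X ω) ≤
      (exp s - exp (-s)) / 2 * X ω + (exp s + exp (-s)) / 2 := by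
    filter_upwards [hb] with ω h
    have ha : (0:ℝ) ≤ (1 - X ω) / 2 := by linarith [h.2]
    have hb' : (0:ℝ) ≤ (1 + X ω) / 2 := by linarith [h.1]
    have habp : (1 - X ω) / 2 + (1 + X ω) / 2 = 1 := by ring
    have := convexOn_exp.2 (Set.mem_univ (-s)) (Set.mem_univ s) ha hb' habp
    simp only [smul_eq_mul] at this
    have he : (1 - X ω) / 2 * (-s) + (1 + X ω) / 2 * s = s * X ω := by ring
    rw [he] at this
    linarith [this]
  have hintAff : Integrable (fun ω => (exp s - exp (-s)) / 2 * X ω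
      + (exp s + exp (-s)) / 2) ℙ :=
    (hXi.const_mul _).add (integrable_const _)
  have h1 : ∫ ω, exp (s * X ω) ∂ℙ ≤ (exp s - exp (-s)) / 2 * m + (exp s + exp (-s)) / 2 := by
    calc ∫ ω, exp (s * X ω) ∂ℙ
        ≤ ∫ ω, ((exp s - exp (-s)) / 2 * X ω + (exp s + exp (-s)) / 2) ∂ℙ :=
          integral_mono_ae hintExp hintAff hpt
      _ = (exp s - exp (-s)) / 2 * m + (exp s + exp (-s)) / 2 := by
          rw [integral_add (hXi.const_mul _) (integrable_const _), integral_const_mul,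
            integral_const]
          simp [hm]
  have key := bernoulli_mgf_bound (p := (1 + m) / 2) (q := (1 - m) / 2)
    (by linarith [neg_abs_le m, le_abs_self m]) (by linarith [neg_abs_le m, le_abs_self m])
    (by ring) (2 * s)
  have h2 : (exp s - exp (-s)) / 2 * m + (exp s + exp (-s)) / 2
      = exp (-s) * ((1 - m) / 2 + (1 + m) / 2 * exp (2 * s)) := by
    have : exp s = exp (-s) * exp (2 * s) := by rw [← exp_add]; ring_nf
    rw [this]; ring
  have h3 : exp (-s) * ((1 - m) / 2 + (1 + m) / 2 * exp (2 * s))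
      ≤ exp (-s) * exp ((1 + m) / 2 * (2 * s) + (2 * s) ^ 2 / 4) :=
    mul_le_mul_of_nonneg_left key (exp_nonneg _)
  have h4 : exp (-s) * exp ((1 + m) / 2 * (2 * s) + (2 * s) ^ 2 / 4) = exp (s * m + s ^ 2) := by
    rw [← exp_add]; ring_nf
  linarith [h1, h2 ▸ h1, h3, h4 ▸ h3]

set_option maxHeartbeats 1600000 in
lemma aux_one_sided {Ω : Type*} [MeasureSpace Ω] [IsProbabilityMeasure (ℙ : Measure Ω)]
    (n : ℕ) (hn : 0 < n) (r : Fin (n + 1) → ℝ) (T : Fin n → ℕ) (hT : ∀ i, 0 < T i)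
    (X : ∀ i : Fin n, Fin (T i) → Ω → ℝ)
    (hmeas : ∀ i t, Measurable (X i t))
    (hindep : iIndepFun
      (fun p : Σ i : Fin n, Fin (T i) => X p.1 p.2) ℙ)
    (hint : ∀ i t, Integrable (X i t) ℙ)
    (hmean : ∀ i t, ∫ ω, X i t ω ∂ℙ = r i.succ - r i.castSucc)
    (hbound : ∀ i t, ∀ᵐ ω ∂ℙ, X i t ω ∈ Set.Icc (-1 : ℝ) 1)
    (ε : ℝ) (hε : 0 < ε) :
    ℙ {ω | ∃ j : Fin (n + 1), ε <
        (∑ i ∈ Finset.univ.filter (fun i : Fin n => (i : ℕ) < (j : ℕ)),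
          (1 / (T i : ℝ)) * ∑ t : Fin (T i), X i t ω) - (r j - r 0)} ≤
      ENNReal.ofReal (Real.exp (-(ε ^ 2) / ∑ k : Fin n, 4 / (T k : ℝ))) := by
  classical
  set D := ∑ k : Fin n, 4 / (T k : ℝ) with hDdef
  have hTpos : ∀ i : Fin n, (0 : ℝ) < (T i : ℝ) := fun i => by exact_mod_cast hT i
  have hD : 0 < D := by
    refine Finset.sum_pos (fun k _ => div_pos (by norm_num) (hTpos k)) ⟨⟨0, hn⟩, Finset.mem_univ _⟩
  set l := 2 * ε / D with hldef
  have hl : 0 < l := by positivity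
  set c : (Σ i : Fin n, Fin (T i)) → ℝ := fun p => 1 / (T p.1 : ℝ) with hcdef
  have hc : ∀ p, 0 < c p := fun p => div_pos one_pos (hTpos p.1)
  set W : (Σ i : Fin n, Fin (T i)) → Ω → ℝ := fun p => X p.1 p.2 with hWdef
  set Y : ℕ → Ω → ℝ := fun m ω =>
    ∑ p ∈ Finset.univ.filter (fun p : Σ i : Fin n, Fin (T i) => (p.1 : ℕ) < m),
      c p * W p ω with hYdef
  set Z : Fin (n + 1) → Ω → ℝ := fun j ω => Y (j : ℕ) ω - (r j - r 0) with hZdef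
  -- bridge: the statement's sums equal `Y`
  have hsig : ∀ (m : ℕ),
      Finset.univ.filter (fun p : Σ i : Fin n, Fin (T i) => (p.1 : ℕ) < m) =
      (Finset.univ.filter (fun i : Fin n => (i : ℕ) < m)).sigma (fun i => Finset.univ) := by
    intro m; ext ⟨i, t⟩; simp [Finset.mem_sigma]
  have hYS : ∀ (m : ℕ) (ω : Ω),
      (∑ i ∈ Finset.univ.filter (fun i : Fin n => (i : ℕ) < m),
        (1 / (T i : ℝ)) * ∑ t : Fin (T i), X i t ω) = Y m ω := by
    intro m ω
    rw [hYdef]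
    simp only []
    rw [hsig m, Finset.sum_sigma]
    exact Finset.sum_congr rfl fun i _ => by rw [Finset.mul_sum]
  -- telescoping sum of the means
  have htel : ∀ j : Fin (n + 1),
      (∑ i ∈ Finset.univ.filter (fun i : Fin n => (i : ℕ) < (j : ℕ)),
        (r i.succ - r i.castSucc)) = r j - r 0 := by
    have key : ∀ (m : ℕ) (h : m ≤ n),
        (∑ i ∈ Finset.univ.filter (fun i : Fin n => (i : ℕ) < m),
          (r i.succ - r i.castSucc)) = r ⟨m, Nat.lt_succ_of_le h⟩ - r 0 := by
      intro m
      induction m with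
      | zero => intro h; simp [Fin.ext_iff]
      | succ m ih =>
        intro h
        have hm : m ≤ n := Nat.le_of_succ_le h
        have hmn : m < n := h
        have hins : Finset.univ.filter (fun i : Fin n => (i : ℕ) < m + 1) =
            insert ⟨m, hmn⟩ (Finset.univ.filter (fun i : Fin n => (i : ℕ) < m)) := by
          ext i
          simp [Nat.lt_succ_iff_lt_or_eq, Nat.le_iff_lt_or_eq, Fin.ext_iff, or_comm]
        rw [hins, Finset.sum_insert (by simp), ih hm]
        have e1 : (⟨m, hmn⟩ : Fin n).succ = ⟨m + 1, Nat.lt_succ_of_le h⟩ := by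
          simp [Fin.ext_iff]
        have e2 : (⟨m, hmn⟩ : Fin n).castSucc = ⟨m, Nat.lt_succ_of_le hm⟩ := by
          simp [Fin.ext_iff]
        rw [e1, e2]
        ring_nf
    intro j
    have := key (j : ℕ) (Nat.lt_succ_iff.mp j.isLt)
    simpa using this
  have hWmeas : ∀ p : (Σ i : Fin n, Fin (T i)), Measurable (W p) := fun p => hmeas p.1 p.2
  have hWint : ∀ p : (Σ i : Fin n, Fin (T i)), Integrable (W p) ℙ := fun p => hint p.1 p.2
  have hYmeas : ∀ m : ℕ, Measurable (Y m) := fun m =>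
    Finset.measurable_sum _ (fun p _ => (hWmeas p).const_mul _)
  have hZmeas : ∀ j, Measurable (Z j) := fun j => (hYmeas _).sub_const _
  have hYint : ∀ m : ℕ, Integrable (Y m) ℙ := fun m =>
    integrable_finset_sum _ (fun p _ => (hWint p).const_mul _)
  have hEY : ∀ j : Fin (n + 1), ∫ ω, Y (j : ℕ) ω ∂ℙ = r j - r 0 := by
    intro j
    have e1 : ∫ ω, Y (j : ℕ) ω ∂ℙ =
        ∑ p ∈ Finset.univ.filter
          (fun p : Σ i : Fin n, Fin (T i) => (p.1 : ℕ) < (j : ℕ)),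
          c p * (r p.1.succ - r p.1.castSucc) := by
      rw [hYdef]
      rw [integral_finset_sum _ (fun p _ => (hWint p).const_mul _)]
      exact Finset.sum_congr rfl fun p _ => by
        rw [integral_const_mul, hWdef]
        rw [hmean p.1 p.2]
    rw [e1, hsig, Finset.sum_sigma]
    have e2 : ∀ i : Fin n,
        (∑ t : Fin (T i), c ⟨i, t⟩ * (r i.succ - r i.castSucc)) =
          r i.succ - r i.castSucc := by
      intro i
      have hct : ∀ t : Fin (T i), c ⟨i, t⟩ * (r i.succ - r i.castSucc)
          = 1 / (T i : ℝ) * (r i.succ - r i.castSucc) := fun t => rfl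
      rw [Finset.sum_congr rfl (fun t _ => hct t), Finset.sum_const, Finset.card_univ,
        Fintype.card_fin, nsmul_eq_mul]
      field_simp
      rw [mul_comm, mul_div_assoc, div_self (hTpos i).ne', mul_one]
    rw [Finset.sum_congr rfl (fun i _ => e2 i)]
    exact htel j
  have hWball : ∀ᵐ ω ∂ℙ, ∀ p : (Σ i : Fin n, Fin (T i)), W p ω ∈ Set.Icc (-1 : ℝ) 1 :=
    ae_all_iff.2 fun p => hbound p.1 p.2
  set C0 : ℝ := ∑ p : (Σ i : Fin n, Fin (T i)), c p with hC0def
  have hC0 : 0 ≤ C0 := Finset.sum_nonneg fun p _ => (hc p).le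
  have hYbd : ∀ᵐ ω ∂ℙ, ∀ m : ℕ, |Y m ω| ≤ C0 := by
    filter_upwards [hWball] with ω hw
    intro m
    calc |Y m ω| ≤ ∑ p ∈ Finset.univ.filter
          (fun p : Σ i : Fin n, Fin (T i) => (p.1 : ℕ) < m), |c p * W p ω| :=
        Finset.abs_sum_le_sum_abs _ _
      _ ≤ ∑ p ∈ Finset.univ.filter
          (fun p : Σ i : Fin n, Fin (T i) => (p.1 : ℕ) < m), c p := by
        refine Finset.sum_le_sum fun p _ => ?_
        rw [abs_mul, abs_of_pos (hc p)]
        have h1 : |W p ω| ≤ 1 := abs_le.2 ⟨(hw p).1, (hw p).2⟩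
        nlinarith [hc p]
      _ ≤ C0 := Finset.sum_le_sum_of_subset_of_nonneg (Finset.subset_univ _)
          (fun p _ _ => (hc p).le)
  have hexpint : ∀ (a b d : ℝ) (m k : ℕ),
      Integrable (fun ω => exp (a * Y m ω + b * Y k ω + d)) ℙ := by
    intro a b d m k
    refine integrable_exp_of_ae_bound
      (((((hYmeas m).const_mul a).add ((hYmeas k).const_mul b)).add_const d))
      (C := |a| * C0 + |b| * C0 + |d|) ?_
    filter_upwards [hYbd] with ω hw
    calc |a * Y m ω + b * Y k ω + d| ≤ |a * Y m ω + b * Y k ω| + |d| := abs_add_le _ _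
      _ ≤ |a * Y m ω| + |b * Y k ω| + |d| := by linarith [abs_add_le (a * Y m ω) (b * Y k ω)]
      _ = |a| * |Y m ω| + |b| * |Y k ω| + |d| := by rw [abs_mul, abs_mul]
      _ ≤ |a| * C0 + |b| * C0 + |d| := by
          have h1 := hw m; have h2 := hw k
          nlinarith [mul_le_mul_of_nonneg_left h1 (abs_nonneg a),
            mul_le_mul_of_nonneg_left h2 (abs_nonneg b), abs_nonneg (Y m ω),
            abs_nonneg (Y k ω)]
  have hZint : ∀ j : Fin (n + 1), Integrable (Z j) ℙ := fun j =>
    (hYint _).sub (integrable_const _)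
  have hEZ : ∀ j : Fin (n + 1), ∫ ω, Z j ω ∂ℙ = 0 := by
    intro j
    rw [hZdef]
    simp only []
    rw [integral_sub (hYint _) (integrable_const _), hEY j, integral_const]
    simp
  set A : Fin (n + 1) → Set Ω := fun j =>
    {ω | ε < Z j ω ∧ ∀ k : Fin (n + 1), k < j → Z k ω ≤ ε} with hAdef
  have hAmeas : ∀ j, MeasurableSet (A j) := by
    intro j
    have h1 : MeasurableSet {ω | ε < Z j ω} := measurableSet_lt measurable_const (hZmeas j)
    have h2 : MeasurableSet {ω | ∀ k : Fin (n + 1), k < j → Z k ω ≤ ε} := by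
      have he : {ω | ∀ k : Fin (n + 1), k < j → Z k ω ≤ ε} =
          ⋂ (k : Fin (n + 1)) (_ : k < j), {ω | Z k ω ≤ ε} := by
        ext ω; simp
      rw [he]
      exact MeasurableSet.iInter fun k => MeasurableSet.iInter fun _ =>
        measurableSet_le (hZmeas k) measurable_const
    exact h1.inter h2
  have hdisj : Pairwise (Function.onFun Disjoint A) := by
    have key : ∀ j j' : Fin (n + 1), j < j' → Disjoint (A j) (A j') := by
      intro j j' hlt
      rw [Set.disjoint_left]
      rintro ω ⟨h1, _⟩ ⟨_, h2'⟩
      exact absurd h1 (not_lt.2 (h2' j hlt))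
    intro j j' hne
    rcases hne.lt_or_gt with h | h
    · exact key _ _ h
    · exact (key _ _ h).symm
  have hEeq : {ω | ∃ j : Fin (n + 1), ε < Z j ω} = ⋃ j, A j := by
    ext ω
    simp only [Set.mem_setOf_eq, Set.mem_iUnion]
    constructor
    · rintro ⟨j, hj⟩
      set F : Finset (Fin (n + 1)) := Finset.univ.filter (fun k => ε < Z k ω) with hF
      have hFne : F.Nonempty := ⟨j, by simp [hF, hj]⟩
      refine ⟨F.min' hFne, ?_, ?_⟩
      · have := F.min'_mem hFne
        simp only [hF, Finset.mem_filter] at this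
        exact this.2
      · intro k hk
        by_contra hc'
        push_neg at hc'
        have hkF : k ∈ F := by simp [hF, hc']
        exact absurd (F.min'_le k hkF) (not_le.2 hk)
    · rintro ⟨j, hj, _⟩
      exact ⟨j, hj⟩
  have hsetid : {ω | ∃ j : Fin (n + 1), ε <
      (∑ i ∈ Finset.univ.filter (fun i : Fin n => (i : ℕ) < (j : ℕ)),
        (1 / (T i : ℝ)) * ∑ t : Fin (T i), X i t ω) - (r j - r 0)} =
      {ω | ∃ j : Fin (n + 1), ε < Z j ω} := by
    ext ω
    simp only [Set.mem_setOf_eq, hYS, hZdef]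
  have hPsum : ℙ (⋃ j, A j) = ∑ j : Fin (n + 1), ℙ (A j) := by
    rw [measure_iUnion hdisj hAmeas, tsum_fintype]
  set jtop : Fin (n + 1) := Fin.last n with hjtopdef
  have hjtopval : (jtop : ℕ) = n := rfl
  have hfint : ∀ j : Fin (n + 1), Integrable (fun ω => exp (l * Z j ω)) ℙ := by
    intro j
    refine (hexpint l 0 (-(l * (r j - r 0))) (j : ℕ) 0).congr
      (Filter.Eventually.of_forall fun ω => ?_)
    rw [hZdef]
    simp only []
    congr 1
    ring
  have hVint : ∀ j : Fin (n + 1),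
      Integrable (fun ω => exp (l * (Z jtop ω - Z j ω))) ℙ := by
    intro j
    refine (hexpint l (-l) (-(l * (r jtop - r j))) n (j : ℕ)).congr
      (Filter.Eventually.of_forall fun ω => ?_)
    rw [hZdef]
    simp only []
    rw [hjtopval]
    congr 1
    ring
  have hkey : ∀ j : Fin (n + 1),
      exp (l * ε) * (ℙ (A j)).toReal ≤ ∫ ω in A j, exp (l * Z jtop ω) ∂ℙ := by
    intro j
    set S1 : Finset (Σ i : Fin n, Fin (T i)) :=
      Finset.univ.filter (fun p => (p.1 : ℕ) < (j : ℕ)) with hS1def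
    set S2 : Finset (Σ i : Fin n, Fin (T i)) :=
      Finset.univ.filter (fun p => ¬ (p.1 : ℕ) < (j : ℕ)) with hS2def
    have hdisjS : Disjoint S1 S2 := Finset.disjoint_filter_filter_not _ _ _
    have base := hindep.indepFun_finset S1 S2 hdisjS hWmeas
    -- tuple-level prefix sums
    set zf : Fin (n + 1) → (S1 → ℝ) → ℝ := fun k v =>
      (∑ q ∈ Finset.univ.filter
          (fun q : S1 => (((q : Σ i : Fin n, Fin (T i))).1 : ℕ) < (k : ℕ)),
        c q * v q) - (r k - r 0) with hzfdef
    have hzfmeas : ∀ k, Measurable (zf k) := by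
      intro k
      apply Measurable.sub_const
      exact Finset.measurable_sum _ fun q _ => (measurable_pi_apply q).const_mul _
    have hzfZ : ∀ k : Fin (n + 1), k ≤ j → ∀ ω,
        zf k (fun q : S1 => W q ω) = Z k ω := by
      intro k hk ω
      rw [hzfdef, hZdef]
      simp only []
      congr 1
      have e1 : (∑ q ∈ Finset.univ.filter
          (fun q : S1 => (((q : Σ i : Fin n, Fin (T i))).1 : ℕ) < (k : ℕ)),
          c q * W (q : Σ i : Fin n, Fin (T i)) ω)
          = ∑ p ∈ S1.filter (fun p => (p.1 : ℕ) < (k : ℕ)), c p * W p ω := by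
        rw [Finset.univ_eq_attach, Finset.sum_filter, Finset.sum_attach S1
          (fun p => if (p.1 : ℕ) < (k : ℕ) then c p * W p ω else 0), ← Finset.sum_filter]
      rw [e1]
      have e2 : S1.filter (fun p => (p.1 : ℕ) < (k : ℕ)) =
          Finset.univ.filter (fun p : Σ i : Fin n, Fin (T i) => (p.1 : ℕ) < (k : ℕ)) := by
        rw [hS1def, Finset.filter_filter]
        ext p
        simp only [Finset.mem_filter, Finset.mem_univ, true_and]
        constructor
        · exact fun h => h.2
        · intro h
          exact ⟨lt_of_lt_of_le h (by exact_mod_cast hk), h⟩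
      rw [e2]
    set φ : (S1 → ℝ) → ℝ := fun v =>
      Set.indicator {v : S1 → ℝ | ε < zf j v ∧ ∀ k : Fin (n + 1), k < j → zf k v ≤ ε}
        (fun v => exp (l * zf j v)) v with hφdef
    have hφmeas : Measurable φ := by
      apply Measurable.indicator
      · exact ((hzfmeas j).const_mul l).exp
      · have he : {v : S1 → ℝ | ε < zf j v ∧ ∀ k : Fin (n + 1), k < j → zf k v ≤ ε} =
            {v : S1 → ℝ | ε < zf j v} ∩
              ⋂ (k : Fin (n + 1)) (_ : k < j), {v : S1 → ℝ | zf k v ≤ ε} := by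
          ext v; simp [Set.mem_iInter]
        rw [he]
        exact (measurableSet_lt measurable_const (hzfmeas j)).inter
          (MeasurableSet.iInter fun k => MeasurableSet.iInter fun _ =>
            measurableSet_le (hzfmeas k) measurable_const)
    set ψ : (S2 → ℝ) → ℝ := fun v =>
      exp (l * ((∑ q : S2, c q * v q) - (r jtop - r j))) with hψdef
    have hψmeas : Measurable ψ := by
      apply Measurable.exp
      apply Measurable.const_mul
      apply Measurable.sub_const
      exact Finset.measurable_sum _ fun q _ => (measurable_pi_apply q).const_mul _
    set U : Ω → ℝ := fun ω => Set.indicator (A j) (fun ω => exp (l * Z j ω)) ω with hUdef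
    set V : Ω → ℝ := fun ω => exp (l * (Z jtop ω - Z j ω)) with hVdef
    have hUeq : U = φ ∘ (fun ω (q : S1) => W q ω) := by
      funext ω
      rw [hUdef, hφdef]
      simp only [Function.comp_apply]
      by_cases h : ω ∈ A j
      · rw [Set.indicator_of_mem h, Set.indicator_of_mem, hzfZ j le_rfl ω]
        rw [hAdef] at h
        obtain ⟨h1, h2⟩ := h
        refine ⟨?_, ?_⟩
        · rw [hzfZ j le_rfl ω]; exact h1
        · intro k hk
          rw [hzfZ k hk.le ω]
          exact h2 k hk
      · rw [Set.indicator_of_notMem h, Set.indicator_of_notMem]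
        intro hmem
        apply h
        rw [hAdef]
        obtain ⟨h1, h2⟩ := hmem
        rw [hzfZ j le_rfl ω] at h1
        refine ⟨h1, fun k hk => ?_⟩
        have := h2 k hk
        rwa [hzfZ k hk.le ω] at this
    have hVeq : V = ψ ∘ (fun ω (q : S2) => W q ω) := by
      funext ω
      rw [hVdef, hψdef]
      simp only [Function.comp_apply]
      congr 1
      have e1 : (∑ q : S2, c (q : Σ i : Fin n, Fin (T i)) *
          W (q : Σ i : Fin n, Fin (T i)) ω) = ∑ p ∈ S2, c p * W p ω :=
        Finset.sum_coe_sort S2 (fun p => c p * W p ω)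
      rw [e1]
      have e2 : Y n ω - Y (j : ℕ) ω = ∑ p ∈ S2, c p * W p ω := by
        rw [hYdef]
        simp only []
        have e3 : Finset.univ.filter
            (fun p : Σ i : Fin n, Fin (T i) => (p.1 : ℕ) < n) = Finset.univ :=
          Finset.filter_true_of_mem fun p _ => p.1.isLt
        rw [e3, ← Finset.sum_filter_add_sum_filter_not Finset.univ
          (fun p : Σ i : Fin n, Fin (T i) => (p.1 : ℕ) < (j : ℕ)) (fun p => c p * W p ω)]
        rw [← hS1def, ← hS2def]
        ring
      rw [hZdef]
      simp only []
      rw [hjtopval]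
      rw [← e2]
      ring
    have hUV : IndepFun U V ℙ := by
      rw [hUeq, hVeq]
      exact base.comp hφmeas hψmeas
    have hUint : Integrable U ℙ := (hfint j).indicator (hAmeas j)
    have hVint' : Integrable V ℙ := hVint j
    have hsplit : ∫ ω, U ω * V ω ∂ℙ = (∫ ω, U ω ∂ℙ) * ∫ ω, V ω ∂ℙ :=
      hUV.integral_mul_eq_mul_integral hUint.aestronglyMeasurable hVint'.aestronglyMeasurable
    have hprod : ∀ ω, U ω * V ω = Set.indicator (A j) (fun ω => exp (l * Z jtop ω)) ω := by
      intro ω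
      simp only [hUdef, hVdef]
      by_cases h : ω ∈ A j
      · rw [Set.indicator_of_mem h, Set.indicator_of_mem h, ← exp_add]
        congr 1
        ring
      · rw [Set.indicator_of_notMem h, Set.indicator_of_notMem h, zero_mul]
    have hintU : exp (l * ε) * (ℙ (A j)).toReal ≤ ∫ ω, U ω ∂ℙ := by
      simp only [hUdef]
      rw [integral_indicator (hAmeas j)]
      have h1 : ∫ _ω in A j, exp (l * ε) ∂ℙ ≤ ∫ ω in A j, exp (l * Z j ω) ∂ℙ := by
        refine setIntegral_mono_on (integrableOn_const (measure_ne_top _ _))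
          ((hfint j).integrableOn) (hAmeas j) ?_
        intro ω hω
        rw [hAdef] at hω
        exact exp_le_exp.2 (mul_le_mul_of_nonneg_left hω.1.le hl.le)
      rw [setIntegral_const] at h1
      rw [smul_eq_mul, mul_comm] at h1
      exact h1
    have hintV : 1 ≤ ∫ ω, V ω ∂ℙ := by
      have h1 : ∀ ω, 1 + l * (Z jtop ω - Z j ω) ≤ V ω := by
        intro ω
        simp only [hVdef]
        have := Real.add_one_le_exp (l * (Z jtop ω - Z j ω))
        linarith
      have h2 : Integrable (fun ω => 1 + l * (Z jtop ω - Z j ω)) ℙ :=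
        (integrable_const 1).add (((hZint jtop).sub (hZint j)).const_mul l)
      have h3 : ∫ ω, (1 + l * (Z jtop ω - Z j ω)) ∂ℙ ≤ ∫ ω, V ω ∂ℙ :=
        integral_mono h2 hVint' h1
      have h4 : ∫ ω, (1 + l * (Z jtop ω - Z j ω)) ∂ℙ = 1 := by
        rw [integral_add (integrable_const 1), integral_const]
        · rw [integral_const_mul, integral_sub (hZint jtop) (hZint j), hEZ, hEZ]
          simp
        · exact ((hZint jtop).sub (hZint j)).const_mul l
      linarith
    have hUnonneg : 0 ≤ exp (l * ε) * (ℙ (A j)).toReal :=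
      mul_nonneg (exp_nonneg _) ENNReal.toReal_nonneg
    calc exp (l * ε) * (ℙ (A j)).toReal
        = exp (l * ε) * (ℙ (A j)).toReal * 1 := (mul_one _).symm
      _ ≤ (∫ ω, U ω ∂ℙ) * ∫ ω, V ω ∂ℙ :=
          mul_le_mul hintU hintV zero_le_one (le_trans hUnonneg hintU)
      _ = ∫ ω, U ω * V ω ∂ℙ := hsplit.symm
      _ = ∫ ω, Set.indicator (A j) (fun ω => exp (l * Z jtop ω)) ω ∂ℙ := by
          exact integral_congr_ae (Filter.Eventually.of_forall hprod)
      _ = ∫ ω in A j, exp (l * Z jtop ω) ∂ℙ := integral_indicator (hAmeas j)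
  have hEtopint : Integrable (fun ω => exp (l * Z jtop ω)) ℙ := hfint jtop
  have hsum : (∑ j : Fin (n + 1), ∫ ω in A j, exp (l * Z jtop ω) ∂ℙ)
      ≤ ∫ ω, exp (l * Z jtop ω) ∂ℙ := by
    have h1 : ∫ ω in ⋃ j, A j, exp (l * Z jtop ω) ∂ℙ
        = ∑' j : Fin (n + 1), ∫ ω in A j, exp (l * Z jtop ω) ∂ℙ :=
      integral_iUnion hAmeas hdisj hEtopint.integrableOn
    rw [tsum_fintype] at h1
    rw [← h1]
    exact setIntegral_le_integral hEtopint
      (Filter.Eventually.of_forall fun ω => exp_nonneg _)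
  have hquarter : (∑ k : Fin n, (1 : ℝ) / (T k : ℝ)) = D / 4 := by
    rw [hDdef, Finset.sum_div]
    refine Finset.sum_congr rfl fun k _ => ?_
    rw [eq_div_iff (by norm_num : (4:ℝ) ≠ 0)]
    field_simp
  have hmi_sum : (∑ i : Fin n, (r i.succ - r i.castSucc)) = r jtop - r 0 := by
    have h := htel jtop
    rw [show ((jtop : Fin (n+1)) : ℕ) = n from rfl] at h
    rwa [Finset.filter_true_of_mem (fun i _ => i.isLt)] at h
  have hmgf : ∫ ω, exp (l * Z jtop ω) ∂ℙ ≤ exp (l ^ 2 * D / 4) := by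
    have e0 : ∀ ω, exp (l * Z jtop ω) = exp (-(l * (r jtop - r 0))) * exp (l * Y n ω) := by
      intro ω
      rw [hZdef]
      simp only []
      rw [hjtopval, ← exp_add]
      congr 1
      ring
    rw [integral_congr_ae (Filter.Eventually.of_forall e0), integral_const_mul]
    set Vp : (Σ i : Fin n, Fin (T i)) → Ω → ℝ := fun p ω => c p * W p ω with hVpdef
    have hVpindep : iIndepFun Vp ℙ :=
      hindep.comp (fun p (x : ℝ) => c p * x) (fun p => measurable_const_mul _)
    have hVpmeas : ∀ p, Measurable (Vp p) := fun p => (hWmeas p).const_mul _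
    have hYn : (fun ω => Y n ω) = ∑ p : Σ i : Fin n, Fin (T i), Vp p := by
      funext ω
      rw [Finset.sum_apply, hYdef]
      simp only []
      rw [Finset.filter_true_of_mem fun p _ => p.1.isLt]
    have hid : ∫ ω, exp (l * Y n ω) ∂ℙ
        = mgf (∑ p : Σ i : Fin n, Fin (T i), Vp p) ℙ l := by
      rw [mgf, ← hYn]
    have hmgfsum := hVpindep.mgf_sum hVpmeas (Finset.univ) (t := l)
    have hWmean : ∀ p : Σ i : Fin n, Fin (T i),
        ∫ ω, W p ω ∂ℙ = r p.1.succ - r p.1.castSucc := fun p => hmean p.1 p.2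
    have hfac : ∀ p : Σ i : Fin n, Fin (T i), mgf (Vp p) ℙ l ≤
        exp ((l * c p) * (r p.1.succ - r p.1.castSucc) + (l * c p) ^ 2) := by
      intro p
      have h1 : mgf (Vp p) ℙ l = ∫ ω, exp ((l * c p) * W p ω) ∂ℙ := by
        rw [mgf]
        refine integral_congr_ae (Filter.Eventually.of_forall fun ω => ?_)
        simp only [hVpdef]
        congr 1
        ring
      rw [h1]
      have h2 := mgf_bound_of_Icc (hWmeas p) (hWint p) (hbound p.1 p.2) (l * c p)
      rwa [hWmean p] at h2
    have hexpsum : (∑ p : Σ i : Fin n, Fin (T i),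
        ((l * c p) * (r p.1.succ - r p.1.castSucc) + (l * c p) ^ 2))
        = l * (r jtop - r 0) + l ^ 2 * (D / 4) := by
      rw [Finset.sum_add_distrib]
      congr 1
      · have e1 : (Finset.univ : Finset (Σ i : Fin n, Fin (T i))) =
            Finset.univ.filter (fun p : Σ i : Fin n, Fin (T i) => (p.1 : ℕ) < n) :=
          (Finset.filter_true_of_mem fun p _ => p.1.isLt).symm
        rw [e1, hsig n, Finset.sum_sigma]
        have e2 : ∀ i ∈ Finset.univ.filter (fun i : Fin n => (i : ℕ) < n),
            (∑ t : Fin (T i), (l * c ⟨i, t⟩) * (r i.succ - r i.castSucc))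
            = l * (r i.succ - r i.castSucc) := by
          intro i _
          have hct : ∀ t : Fin (T i), (l * c ⟨i, t⟩) * (r i.succ - r i.castSucc)
              = (l * (1 / (T i : ℝ))) * (r i.succ - r i.castSucc) := fun t => rfl
          rw [Finset.sum_congr rfl (fun t _ => hct t), Finset.sum_const, Finset.card_univ,
            Fintype.card_fin, nsmul_eq_mul]
          have hTne : (T i : ℝ) ≠ 0 := (hTpos i).ne'
          field_simp
        rw [Finset.sum_congr rfl e2, Finset.filter_true_of_mem (fun i _ => i.isLt),
          ← Finset.mul_sum, hmi_sum]
      · have e1 : (Finset.univ : Finset (Σ i : Fin n, Fin (T i))) =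
            Finset.univ.filter (fun p : Σ i : Fin n, Fin (T i) => (p.1 : ℕ) < n) :=
          (Finset.filter_true_of_mem fun p _ => p.1.isLt).symm
        rw [e1, hsig n, Finset.sum_sigma]
        have e2 : ∀ i ∈ Finset.univ.filter (fun i : Fin n => (i : ℕ) < n),
            (∑ t : Fin (T i), (l * c ⟨i, t⟩) ^ 2) = l ^ 2 * (1 / (T i : ℝ)) := by
          intro i _
          have hct : ∀ t : Fin (T i), (l * c ⟨i, t⟩) ^ 2
              = (l * (1 / (T i : ℝ))) ^ 2 := fun t => rfl
          rw [Finset.sum_congr rfl (fun t _ => hct t), Finset.sum_const, Finset.card_univ,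
            Fintype.card_fin, nsmul_eq_mul]
          have hTne : (T i : ℝ) ≠ 0 := (hTpos i).ne'
          field_simp
        rw [Finset.sum_congr rfl e2, Finset.filter_true_of_mem (fun i _ => i.isLt),
          ← Finset.mul_sum, hquarter]
    calc exp (-(l * (r jtop - r 0))) * ∫ ω, exp (l * Y n ω) ∂ℙ
        ≤ exp (-(l * (r jtop - r 0))) * exp (l * (r jtop - r 0) + l ^ 2 * (D / 4)) := by
          refine mul_le_mul_of_nonneg_left ?_ (exp_nonneg _)
          rw [hid, hmgfsum]
          calc (∏ p : Σ i : Fin n, Fin (T i), mgf (Vp p) ℙ l)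
              ≤ ∏ p : Σ i : Fin n, Fin (T i),
                  exp ((l * c p) * (r p.1.succ - r p.1.castSucc) + (l * c p) ^ 2) :=
                Finset.prod_le_prod (fun p _ => mgf_nonneg) (fun p _ => hfac p)
            _ = exp (∑ p : Σ i : Fin n, Fin (T i),
                  ((l * c p) * (r p.1.succ - r p.1.castSucc) + (l * c p) ^ 2)) :=
                (Real.exp_sum _ _).symm
            _ = exp (l * (r jtop - r 0) + l ^ 2 * (D / 4)) := by rw [hexpsum]
      _ = exp (l ^ 2 * D / 4) := by
          rw [← exp_add]
          congr 1
          ring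
  have hfinal : (ℙ {ω | ∃ j : Fin (n + 1), ε < Z j ω}).toReal ≤ exp (-(ε ^ 2) / D) := by
    have h1 : exp (l * ε) * (ℙ {ω | ∃ j : Fin (n + 1), ε < Z j ω}).toReal
        ≤ exp (l ^ 2 * D / 4) := by
      rw [hEeq, hPsum, ENNReal.toReal_sum (fun j _ => measure_ne_top _ _)]
      calc exp (l * ε) * ∑ j : Fin (n + 1), (ℙ (A j)).toReal
          = ∑ j : Fin (n + 1), exp (l * ε) * (ℙ (A j)).toReal := Finset.mul_sum _ _ _
        _ ≤ ∑ j : Fin (n + 1), ∫ ω in A j, exp (l * Z jtop ω) ∂ℙ :=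
            Finset.sum_le_sum fun j _ => hkey j
        _ ≤ ∫ ω, exp (l * Z jtop ω) ∂ℙ := hsum
        _ ≤ exp (l ^ 2 * D / 4) := hmgf
    have h2 : (ℙ {ω | ∃ j : Fin (n + 1), ε < Z j ω}).toReal
        ≤ exp (l ^ 2 * D / 4) / exp (l * ε) := by
      rw [le_div_iff₀ (exp_pos _)]
      calc (ℙ {ω | ∃ j : Fin (n + 1), ε < Z j ω}).toReal * exp (l * ε)
          = exp (l * ε) * (ℙ {ω | ∃ j : Fin (n + 1), ε < Z j ω}).toReal := mul_comm _ _
        _ ≤ exp (l ^ 2 * D / 4) := h1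
    have h3 : exp (l ^ 2 * D / 4) / exp (l * ε) = exp (-(ε ^ 2) / D) := by
      rw [← Real.exp_sub]
      congr 1
      rw [hldef]
      field_simp
      ring
    linarith [h2, h3 ▸ h2]
  rw [hsetid]
  exact (ENNReal.le_ofReal_iff_toReal_le (measure_ne_top _ _) (exp_nonneg _)).2 hfinal

/-- Uniform deviation bound for the empirical prefix sums in the line graph setup
with `n + 1` nodes `0, …, n` and per-edge sample sizes `T i`:
`P(∃ j, |Ŝ j − (r j − r 0)| > ε) ≤ 2·exp(−ε² / ∑_k 4/T k)`. -/
theorem line_graph_deviation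
    {Ω : Type*} [MeasureSpace Ω] [IsProbabilityMeasure (ℙ : Measure Ω)]
    (n : ℕ) (r : Fin (n + 1) → ℝ)
    (T : Fin n → ℕ) (hT : ∀ i, 0 < T i)
    (X : ∀ i : Fin n, Fin (T i) → Ω → ℝ)
    (hmeas : ∀ i t, Measurable (X i t))
    (hindep : iIndepFun
      (fun p : Σ i : Fin n, Fin (T i) => X p.1 p.2) ℙ)
    (hint : ∀ i t, Integrable (X i t) ℙ)
    (hmean : ∀ i t, ∫ ω, X i t ω ∂ℙ = r i.succ - r i.castSucc)
    (hbound : ∀ i t, ∀ᵐ ω ∂ℙ, X i t ω ∈ Set.Icc (-1 : ℝ) 1)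
    (Shat : Fin (n + 1) → Ω → ℝ)
    (hS : ∀ j ω, Shat j ω =
      ∑ i ∈ Finset.univ.filter (fun i : Fin n => (i : ℕ) < (j : ℕ)),
        (1 / (T i : ℝ)) * ∑ t : Fin (T i), X i t ω)
    (ε : ℝ) (hε : 0 < ε) :
    ℙ {ω | ∃ j : Fin (n + 1), ε < |Shat j ω - (r j - r 0)|} ≤
      ENNReal.ofReal (2 * Real.exp (-(ε ^ 2) / ∑ k : Fin n, 4 / (T k : ℝ))) := by
  rcases Nat.eq_zero_or_pos n with hn | hn
  · subst hn
    have h0 : (∑ k : Fin 0, 4 / (T k : ℝ)) = 0 := by simp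
    rw [h0, div_zero, Real.exp_zero, mul_one]
    calc ℙ {ω | ∃ j : Fin 1, ε < |Shat j ω - (r j - r 0)|} ≤ 1 := prob_le_one
      _ ≤ ENNReal.ofReal 2 := by
          rw [← ENNReal.ofReal_one]
          exact ENNReal.ofReal_le_ofReal (by norm_num)
  · set X' : ∀ i : Fin n, Fin (T i) → Ω → ℝ := fun i t ω => -X i t ω with hX'def
    set r' : Fin (n + 1) → ℝ := fun j => -r j with hr'def
    have hup := aux_one_sided n hn r T hT X hmeas hindep hint hmean hbound ε hε
    have hmeas' : ∀ i t, Measurable (X' i t) := fun i t => (hmeas i t).neg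
    have hindep' : iIndepFun
        (fun p : Σ i : Fin n, Fin (T i) => X' p.1 p.2) ℙ :=
      hindep.comp (fun _ (x : ℝ) => -x) (fun _ => measurable_neg)
    have hint' : ∀ i t, Integrable (X' i t) ℙ := fun i t => (hint i t).neg
    have hmean' : ∀ i t, ∫ ω, X' i t ω ∂ℙ = r' i.succ - r' i.castSucc := by
      intro i t
      rw [hX'def, hr'def]
      simp only []
      rw [integral_neg, hmean i t]
      ring
    have hbound' : ∀ i t, ∀ᵐ ω ∂ℙ, X' i t ω ∈ Set.Icc (-1 : ℝ) 1 := by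
      intro i t
      filter_upwards [hbound i t] with ω h
      constructor
      · show (-1 : ℝ) ≤ -X i t ω
        linarith [h.2]
      · show -X i t ω ≤ 1
        linarith [h.1]
    have hlow := aux_one_sided n hn r' T hT X' hmeas' hindep' hint' hmean' hbound' ε hε
    have hsub : {ω | ∃ j : Fin (n + 1), ε < |Shat j ω - (r j - r 0)|} ⊆
        {ω | ∃ j : Fin (n + 1), ε <
          (∑ i ∈ Finset.univ.filter (fun i : Fin n => (i : ℕ) < (j : ℕ)),
            (1 / (T i : ℝ)) * ∑ t : Fin (T i), X i t ω) - (r j - r 0)} ∪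
        {ω | ∃ j : Fin (n + 1), ε <
          (∑ i ∈ Finset.univ.filter (fun i : Fin n => (i : ℕ) < (j : ℕ)),
            (1 / (T i : ℝ)) * ∑ t : Fin (T i), X' i t ω) - (r' j - r' 0)} := by
      intro ω hω
      obtain ⟨j, hj⟩ := hω
      rw [hS j ω] at hj
      rcases lt_abs.1 hj with h | h
      · exact Or.inl ⟨j, h⟩
      · refine Or.inr ⟨j, ?_⟩
        have hsumneg : (∑ i ∈ Finset.univ.filter (fun i : Fin n => (i : ℕ) < (j : ℕ)),
            (1 / (T i : ℝ)) * ∑ t : Fin (T i), X' i t ω)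
            = -(∑ i ∈ Finset.univ.filter (fun i : Fin n => (i : ℕ) < (j : ℕ)),
              (1 / (T i : ℝ)) * ∑ t : Fin (T i), X i t ω) := by
          rw [← Finset.sum_neg_distrib]
          refine Finset.sum_congr rfl fun i _ => ?_
          rw [hX'def]
          simp [mul_neg, Finset.sum_neg_distrib]
        rw [hsumneg, hr'def]
        simp only []
        have := h
        linarith [h]
    calc ℙ {ω | ∃ j : Fin (n + 1), ε < |Shat j ω - (r j - r 0)|}
        ≤ ℙ ({ω | ∃ j : Fin (n + 1), ε <
            (∑ i ∈ Finset.univ.filter (fun i : Fin n => (i : ℕ) < (j : ℕ)),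
              (1 / (T i : ℝ)) * ∑ t : Fin (T i), X i t ω) - (r j - r 0)} ∪
          {ω | ∃ j : Fin (n + 1), ε <
            (∑ i ∈ Finset.univ.filter (fun i : Fin n => (i : ℕ) < (j : ℕ)),
              (1 / (T i : ℝ)) * ∑ t : Fin (T i), X' i t ω) - (r' j - r' 0)}) :=
          measure_mono hsub
      _ ≤ ℙ {ω | ∃ j : Fin (n + 1), ε <
            (∑ i ∈ Finset.univ.filter (fun i : Fin n => (i : ℕ) < (j : ℕ)),
              (1 / (T i : ℝ)) * ∑ t : Fin (T i), X i t ω) - (r j - r 0)} +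
          ℙ {ω | ∃ j : Fin (n + 1), ε <
            (∑ i ∈ Finset.univ.filter (fun i : Fin n => (i : ℕ) < (j : ℕ)),
              (1 / (T i : ℝ)) * ∑ t : Fin (T i), X' i t ω) - (r' j - r' 0)} :=
          measure_union_le _ _
      _ ≤ ENNReal.ofReal (Real.exp (-(ε ^ 2) / ∑ k : Fin n, 4 / (T k : ℝ))) +
          ENNReal.ofReal (Real.exp (-(ε ^ 2) / ∑ k : Fin n, 4 / (T k : ℝ))) :=
          add_le_add hup hlow
      _ = ENNReal.ofReal (2 * Real.exp (-(ε ^ 2) / ∑ k : Fin n, 4 / (T k : ℝ))) := by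
          rw [← ENNReal.ofReal_add (exp_nonneg _) (exp_nonneg _)]
          congr 1
          ring
end
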